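/- arXiv:1602.04383 — 5 statements merged into one kernel-verified Lean document; each statement's English description precedes it below -/
import Mathlib

section
/- Let L_0 be a lattice in V with ε L_0 ⊆ L_0^# ⊆ L_0, and write L_{−1} = L_0^#. Then every 𝔬-submodule L of V with L_{−1} ⊆ L ⊆ L_0 and dim_k L_0/L = 1 is a lattice and satisfies ε L ⊆ L^# ⊆ L; in particular, L^# ⊆ L. -/
open scoped Classical

noncomputable section

namespace AffLat

variable (k : Type*) [Field k]

/-- The uniformizer `ε ∈ F = k((ε))`. -/
def eps : LaurentSeries k := algebraMap (PowerSeries k) (LaurentSeries k) PowerSeries.X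

/-- The subring `𝔬 = k[[ε]]` of `F = k((ε))`. -/
def oring : Subring (LaurentSeries k) :=
  (algebraMap (PowerSeries k) (LaurentSeries k)).range

variable {k}
variable {V : Type*} [AddCommGroup V] [Module (LaurentSeries k) V]
  [Module (PowerSeries k) V] [IsScalarTower (PowerSeries k) (LaurentSeries k) V]

/-- A lattice in `V`: a finitely generated `𝔬`-submodule `L` with `F·L = V`. -/
def IsLat (L : Submodule (PowerSeries k) V) : Prop :=
  L.FG ∧ Submodule.span (LaurentSeries k) (L : Set V) = ⊤

/-- The dual `L^# = {v ∈ V | ∀ x ∈ L, (v, x) ∈ 𝔬}` of an `𝔬`-submodule `L` with respect to a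
bilinear form `Φ`. -/
def sharp (Φ : V →ₗ[LaurentSeries k] V →ₗ[LaurentSeries k] LaurentSeries k)
    (L : Submodule (PowerSeries k) V) : Submodule (PowerSeries k) V where
  carrier := {v | ∀ x ∈ L, Φ v x ∈ oring k}
  zero_mem' := fun x _ => by rw [map_zero, LinearMap.zero_apply]; exact zero_mem _
  add_mem' := fun {a b} ha hb x hx => by
    rw [map_add, LinearMap.add_apply]; exact add_mem (ha x hx) (hb x hx)
  smul_mem' := fun c v hv x hx => by
    rw [← algebraMap_smul (LaurentSeries k) c v, map_smul, LinearMap.smul_apply, smul_eq_mul]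
    exact mul_mem ⟨c, rfl⟩ (hv x hx)

/-- The `𝔬`-submodule `a • L` for a scalar `a ∈ F`. -/
def esmul (a : LaurentSeries k) (L : Submodule (PowerSeries k) V) :
    Submodule (PowerSeries k) V where
  carrier := (fun v => a • v) '' (L : Set V)
  zero_mem' := ⟨0, L.zero_mem, smul_zero a⟩
  add_mem' := by
    rintro x y ⟨x', hx', rfl⟩ ⟨y', hy', rfl⟩
    exact ⟨x' + y', L.add_mem hx' hy', smul_add a x' y'⟩
  smul_mem' := by
    rintro c x ⟨x', hx', rfl⟩
    refine ⟨c • x', L.smul_mem c hx', ?_⟩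
    show a • (c • x') = c • (a • x')
    rw [← algebraMap_smul (LaurentSeries k) c x', ← algebraMap_smul (LaurentSeries k) c (a • x'),
      smul_smul, smul_smul, mul_comm]

/-- The quotient `p / s` of an `𝔬`-submodule `p` by the `𝔬`-submodule `s ∩ p`. -/
abbrev relQ (p s : Submodule (PowerSeries k) V) : Type _ :=
  ↥p ⧸ (s.comap p.subtype)

/-- The dimension over `k` of an `𝔬`-module (with the `k`-action coming from
`k → 𝔬 = k[[ε]]`). -/
def kdim (k : Type*) [Field k] (Q : Type*) [AddCommGroup Q] [Module (PowerSeries k) Q] : ℕ :=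
  @Module.finrank k Q _ _ (Module.compHom Q (PowerSeries.C (R := k)))

/-- Finite-dimensionality over `k` of an `𝔬`-module (with the `k`-action coming from
`k → 𝔬 = k[[ε]]`). -/
def kfinite (k : Type*) [Field k] (Q : Type*) [AddCommGroup Q] [Module (PowerSeries k) Q] :
    Prop :=
  @FiniteDimensional k Q _ _ (Module.compHom Q (PowerSeries.C (R := k)))

end AffLat

open AffLat

section AuxLemmas

variable {k : Type*} [Field k]
  {V : Type*} [AddCommGroup V] [Module (LaurentSeries k) V]
  [Module (PowerSeries k) V] [IsScalarTower (PowerSeries k) (LaurentSeries k) V]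

theorem AffLat.mem_sharp {Φ : V →ₗ[LaurentSeries k] V →ₗ[LaurentSeries k] LaurentSeries k}
    {L : Submodule (PowerSeries k) V} {v : V} :
    v ∈ sharp Φ L ↔ ∀ x ∈ L, Φ v x ∈ oring k := Iff.rfl

theorem AffLat.sharp_anti (Φ : V →ₗ[LaurentSeries k] V →ₗ[LaurentSeries k] LaurentSeries k)
    {L L' : Submodule (PowerSeries k) V} (h : L ≤ L') : sharp Φ L' ≤ sharp Φ L :=
  fun _ hv x hx => hv x (h hx)

theorem AffLat.sharp_eq_dualSubmodule
    (Φ : V →ₗ[LaurentSeries k] V →ₗ[LaurentSeries k] LaurentSeries k)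
    (L : Submodule (PowerSeries k) V) :
    sharp Φ L = LinearMap.BilinForm.dualSubmodule Φ L := by
  ext v
  simp only [mem_sharp, LinearMap.BilinForm.mem_dualSubmodule, Submodule.mem_one,
    oring, RingHom.mem_range]

theorem AffLat.noZeroSMulDivisors' : NoZeroSMulDivisors (PowerSeries k) V := by
  constructor
  intro c v h
  by_cases hc : c = 0
  · exact Or.inl hc
  refine Or.inr ?_
  have ha : algebraMap (PowerSeries k) (LaurentSeries k) c ≠ 0 := by
    rw [ne_eq, map_eq_zero_iff _
      (IsFractionRing.injective (PowerSeries k) (LaurentSeries k))]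
    exact hc
  rw [← algebraMap_smul (LaurentSeries k) c v] at h
  calc v = (algebraMap (PowerSeries k) (LaurentSeries k) c)⁻¹ •
        (algebraMap (PowerSeries k) (LaurentSeries k) c • v) := by
          rw [smul_smul, inv_mul_cancel₀ ha, one_smul]
    _ = 0 := by rw [h, smul_zero]

theorem AffLat.eps_ne_zero : eps k ≠ 0 := by
  rw [eps, ne_eq, map_eq_zero_iff _
    (IsFractionRing.injective (PowerSeries k) (LaurentSeries k))]
  exact PowerSeries.X_ne_zero

/-- The double dual of a lattice is itself (for an alternating nondegenerate form). -/
theorem AffLat.sharp_sharp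
    (Φ : V →ₗ[LaurentSeries k] V →ₗ[LaurentSeries k] LaurentSeries k)
    (halt : ∀ v : V, Φ v v = 0)
    (hnondeg : ∀ v : V, (∀ w : V, Φ v w = 0) → v = 0)
    (L₀ : Submodule (PowerSeries k) V) (hfg : L₀.FG)
    (hspan : Submodule.span (LaurentSeries k) (L₀ : Set V) = ⊤) :
    sharp Φ (sharp Φ L₀) = L₀ := by
  haveI : NoZeroSMulDivisors (PowerSeries k) V := noZeroSMulDivisors'
  haveI : Module.Finite (PowerSeries k) L₀ := Module.Finite.iff_fg.mpr hfg
  let b := Module.Free.chooseBasis (PowerSeries k) L₀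
  set ι := Module.Free.ChooseBasisIndex (PowerSeries k) L₀ with hι
  let e : ι → V := fun i => (b i : V)
  have he : Submodule.span (PowerSeries k) (Set.range e) = L₀ := by
    have h1 : Set.range e = L₀.subtype '' Set.range b := by
      ext x; simp [e]
    rw [h1, ← Submodule.map_span, b.span_eq, Submodule.map_top, Submodule.range_subtype]
  have hind : LinearIndependent (LaurentSeries k) e := by
    rw [← LinearIndependent.iff_fractionRing (PowerSeries k) (LaurentSeries k)]
    exact b.linearIndependent.map' L₀.subtype L₀.ker_subtype
  have hsp : ⊤ ≤ Submodule.span (LaurentSeries k) (Set.range e) := by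
    rw [← hspan]
    refine Submodule.span_le.mpr fun x hx => ?_
    have hx' : x ∈ Submodule.span (PowerSeries k) (Set.range e) := he ▸ hx
    exact Submodule.span_le_restrictScalars (PowerSeries k) (LaurentSeries k) (Set.range e) hx'
  let be : Module.Basis ι (LaurentSeries k) V := Module.Basis.mk hind hsp
  have hrange : Set.range (be : ι → V) = Set.range e := by rw [Module.Basis.coe_mk]
  have hnd : LinearMap.BilinForm.Nondegenerate Φ := ⟨hnondeg, fun y hy => hnondeg y fun x => by
    have h0 := halt (x + y)
    simp only [map_add, LinearMap.add_apply, halt x, halt y, zero_add, add_zero] at h0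
    rw [hy x, add_zero] at h0
    exact h0⟩
  have hskew : ∀ v y : V, Φ y v = - Φ v y := by
    intro v y
    have h0 := halt (v + y)
    simp only [map_add, LinearMap.add_apply, halt v, halt y, zero_add, add_zero] at h0
    linear_combination h0
  have hflip : ∀ N : Submodule (PowerSeries k) V,
      LinearMap.BilinForm.dualSubmodule (LinearMap.BilinForm.flipHom Φ) N =
        LinearMap.BilinForm.dualSubmodule Φ N := by
    intro N
    ext v
    simp only [LinearMap.BilinForm.mem_dualSubmodule, LinearMap.BilinForm.flip_apply]
    constructor
    · intro h y hy
      have h1 := h y hy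
      rw [hskew v y] at h1
      exact (Submodule.neg_mem_iff _).mp h1
    · intro h y hy
      rw [hskew v y]
      exact Submodule.neg_mem _ (h y hy)
  have hmain := LinearMap.BilinForm.dualSubmodule_dualSubmodule_flip_of_basis
    (R := PowerSeries k) Φ hnd be
  rw [hrange, he, hflip] at hmain
  rw [sharp_eq_dualSubmodule, sharp_eq_dualSubmodule]
  exact hmain

end AuxLemmas


/-- Let `L₀` be a lattice with `ε L₀ ⊆ L₀^# ⊆ L₀` and `L₋₁ = L₀^#`.  Then
every `𝔬`-submodule `L` with `L₋₁ ⊆ L ⊆ L₀` and `dim_k L₀/L = 1` is a lattice and satisfies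
`ε L ⊆ L^# ⊆ L`; in particular `L^# ⊆ L`. -/
theorem statement4 {k : Type*} [Field k] [Fintype k] (hodd : Odd (Fintype.card k))
    {V : Type*} [AddCommGroup V] [Module (LaurentSeries k) V]
    [Module (PowerSeries k) V] [IsScalarTower (PowerSeries k) (LaurentSeries k) V]
    [FiniteDimensional (LaurentSeries k) V]
    (Φ : V →ₗ[LaurentSeries k] V →ₗ[LaurentSeries k] LaurentSeries k)
    (halt : ∀ v : V, Φ v v = 0)
    (hnondeg : ∀ v : V, (∀ w : V, Φ v w = 0) → v = 0)
    (L₀ : Submodule (PowerSeries k) V) (hL₀ : IsLat L₀)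
    (heps : ∀ v ∈ L₀, eps k • v ∈ sharp Φ L₀)
    (hsub : sharp Φ L₀ ≤ L₀) :
    ∀ L : Submodule (PowerSeries k) V,
      sharp Φ L₀ ≤ L → L ≤ L₀ → kdim k (relQ L₀ L) = 1 →
      IsLat L ∧ (∀ v ∈ L, eps k • v ∈ sharp Φ L) ∧ sharp Φ L ≤ L := by
  intro L hL₁ hL₂ hdim
  obtain ⟨hfg₀, hspan₀⟩ := hL₀
  have hdd : sharp Φ (sharp Φ L₀) = L₀ := sharp_sharp Φ halt hnondeg L₀ hfg₀ hspan₀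
  have hSL₀ : sharp Φ L₀ ≤ sharp Φ L := sharp_anti Φ hL₂
  have hSL_le : sharp Φ L ≤ L₀ := by rw [← hdd]; exact sharp_anti Φ hL₁
  have key : sharp Φ L ≤ L := by
    intro v hv
    by_cases hvL : v ∈ L
    · exact hvL
    have hvL₀ : v ∈ L₀ := hSL_le hv
    -- it suffices to show `v ∈ sharp Φ L₀ ≤ L`, a contradiction
    refine absurd (hL₁ ?_) hvL
    letI : Module k (relQ L₀ L) := Module.compHom _ (PowerSeries.C (R := k))
    have hdim' : Module.finrank k (relQ L₀ L) = 1 := hdim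
    have hq : (Submodule.Quotient.mk (⟨v, hvL₀⟩ : ↥L₀) : relQ L₀ L) ≠ 0 := by
      intro h
      rw [Submodule.Quotient.mk_eq_zero] at h
      exact hvL h
    have hgen := (finrank_eq_one_iff_of_nonzero' _ hq).mp hdim'
    rw [mem_sharp]
    intro x hx
    obtain ⟨c, hc⟩ := hgen (Submodule.Quotient.mk (⟨x, hx⟩ : ↥L₀))
    have hc2 : (Submodule.Quotient.mk ((PowerSeries.C c) • (⟨v, hvL₀⟩ : ↥L₀)) :
        relQ L₀ L) = Submodule.Quotient.mk (⟨x, hx⟩ : ↥L₀) := by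
      rw [Submodule.Quotient.mk_smul]; exact hc
    have hsub' := (Submodule.Quotient.eq _).mp hc2
    have hl : x - (PowerSeries.C c) • v ∈ L := by
      have hneg := Submodule.neg_mem _ hsub'
      rw [Submodule.mem_comap] at hneg
      simpa using hneg
    have h0 : Φ v ((PowerSeries.C c) • v) = 0 := by
      rw [← algebraMap_smul (LaurentSeries k) (PowerSeries.C c) v, map_smul, halt, smul_zero]
    have hmem := hv _ hl
    rwa [map_sub, h0, sub_zero] at hmem
  refine ⟨⟨?_, ?_⟩, fun v hv => hSL₀ (heps v (hL₂ hv)), key⟩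
  · -- L is finitely generated
    haveI : IsNoetherian (PowerSeries k) ↥L₀ := isNoetherian_of_fg_of_noetherian _ hfg₀
    have hfgc : (L.comap L₀.subtype).FG := IsNoetherian.noetherian _
    have hmap := hfgc.map L₀.subtype
    rwa [Submodule.map_comap_subtype, inf_eq_right.mpr hL₂] at hmap
  · -- L spans V over F
    rw [eq_top_iff, ← hspan₀]
    refine Submodule.span_le.mpr fun x hx => ?_
    have h1 : eps k • x ∈ L := hL₁ (heps x hx)
    have h2 : x = (eps k)⁻¹ • (eps k • x) := by
      rw [smul_smul, inv_mul_cancel₀ eps_ne_zero, one_smul]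
    rw [h2]
    exact Submodule.smul_mem _ _ (Submodule.subset_span h1)
end
end

section
/- Let V″ be an isotropic F-subspace of V (i.e., (V″, V″) = 0), say of dimension s, and let L = (L_i)_{i∈ℤ} ∈ X^c_{n,d}. Then there exist F-subspaces T and W of V such that: (1) V = V″ ⊕ T ⊕ W and (V″)^⊥ = V″ ⊕ T, where (V″)^⊥ = {v ∈ V : (v, x) = 0 for all x ∈ V″}; (2) W is isotropic and (T, W) = 0; (3) there exist F-bases (z_1, …, z_s) of V″ and (w_1, …, w_s) of W such that (z_i, w_j) = δ_{ij} for all i, j; (4) L_i = (L_i ∩ V″) ⊕ (L_i ∩ T) ⊕ (L_i ∩ W) for every i ∈ ℤ. -/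
open scoped Classical

noncomputable section

namespace AffLat

variable {k : Type*} [Field k]
variable {V : Type*} [AddCommGroup V] [Module (LaurentSeries k) V]
  [Module (PowerSeries k) V] [IsScalarTower (PowerSeries k) (LaurentSeries k) V]

/-- The orthogonal complement `{v | ∀ x ∈ N, Φ v x = 0}` of an `F`-subspace. -/
def perpF (Φ : V →ₗ[LaurentSeries k] V →ₗ[LaurentSeries k] LaurentSeries k)
    (N : Submodule (LaurentSeries k) V) : Submodule (LaurentSeries k) V where
  carrier := {v | ∀ x ∈ N, Φ v x = 0}
  zero_mem' := fun x _ => by rw [map_zero, LinearMap.zero_apply]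
  add_mem' := fun {a b} ha hb x hx => by
    rw [map_add, LinearMap.add_apply, ha x hx, hb x hx, add_zero]
  smul_mem' := fun c v hv x hx => by
    rw [map_smul, LinearMap.smul_apply, hv x hx, smul_zero]

/-- The set `X^c_{n,d}`: `n`-periodic self-dual chains of lattices, i.e. `L i ⊆ L (i+1)`,
`L i = ε L (i+n)` and `(L i)^# = L (-i-1)` for all `i ∈ ℤ`. -/
def IsXc (Φ : V →ₗ[LaurentSeries k] V →ₗ[LaurentSeries k] LaurentSeries k)
    (n : ℕ) (L : ℤ → Submodule (PowerSeries k) V) : Prop :=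
  (∀ i : ℤ, IsLat (L i)) ∧
  (∀ i : ℤ, L i ≤ L (i + 1)) ∧
  (∀ i : ℤ, ∀ v : V, v ∈ L i ↔ ∃ w ∈ L (i + n), v = eps k • w) ∧
  (∀ i : ℤ, sharp Φ (L i) = L (-i - 1))

end AffLat

namespace AffLat

set_option maxHeartbeats 4000000
set_option synthInstance.maxHeartbeats 400000

variable {k : Type*} [Field k]
variable {V : Type*} [AddCommGroup V] [Module (LaurentSeries k) V]
  [Module (PowerSeries k) V] [IsScalarTower (PowerSeries k) (LaurentSeries k) V]

lemma amap_injective : Function.Injective (algebraMap (PowerSeries k) (LaurentSeries k)) := by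
  rw [LaurentSeries.coe_algebraMap]; exact HahnSeries.ofPowerSeries_injective

lemma eps_ne_zero_s9 : eps k ≠ 0 := by
  intro h
  have : (PowerSeries.X : PowerSeries k) = 0 := amap_injective (by simpa [eps] using h)
  exact PowerSeries.X_ne_zero this

lemma mem_oring (c : LaurentSeries k) :
    c ∈ oring k ↔ ∃ P : PowerSeries k, c = algebraMap (PowerSeries k) (LaurentSeries k) P := by
  constructor
  · rintro ⟨P, rfl⟩; exact ⟨P, rfl⟩
  · rintro ⟨P, rfl⟩; exact ⟨P, rfl⟩

lemma one_ne_eps_mul (P : PowerSeries k) :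
    (1 : LaurentSeries k) ≠ eps k * algebraMap (PowerSeries k) (LaurentSeries k) P := by
  intro h
  have h2 : algebraMap (PowerSeries k) (LaurentSeries k) 1
      = algebraMap (PowerSeries k) (LaurentSeries k) (PowerSeries.X * P) := by
    rw [map_one, map_mul]; exact h
  have h3 : (1 : PowerSeries k) = PowerSeries.X * P := amap_injective h2
  have := congrArg (PowerSeries.constantCoeff (R := k)) h3
  simp at this

/-- Dichotomy: every Laurent series is either `ε·(power series)` or has inverse a power series. -/
lemma dichot (c : LaurentSeries k) :
    (∃ P : PowerSeries k, c = eps k * algebraMap (PowerSeries k) (LaurentSeries k) P) ∨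
    (c ≠ 0 ∧ ∃ P : PowerSeries k, c⁻¹ = algebraMap (PowerSeries k) (LaurentSeries k) P) := by
  by_cases hc : c = 0
  · left; exact ⟨0, by simp [hc]⟩
  have hkey := LaurentSeries.single_order_mul_powerSeriesPart c
  by_cases ho : 1 ≤ c.order
  · left
    refine ⟨PowerSeries.X ^ (c.order - 1).toNat * c.powerSeriesPart, ?_⟩
    rw [map_mul]
    rw [LaurentSeries.coe_algebraMap, HahnSeries.ofPowerSeries_X_pow]
    rw [Int.toNat_of_nonneg (by omega), eps, LaurentSeries.coe_algebraMap,
      HahnSeries.ofPowerSeries_X]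
    rw [← mul_assoc, HahnSeries.single_mul_single, one_mul]
    rw [show (1 + (c.order - 1)) = c.order by ring]
    exact hkey.symm
  · right
    refine ⟨hc, ?_⟩
    push_neg at ho
    set o := c.order with horder
    have hcc : IsUnit (c.powerSeriesPart) := by
      rw [PowerSeries.isUnit_iff_constantCoeff]
      have h0 := LaurentSeries.powerSeriesPart_coeff c 0
      rw [PowerSeries.coeff_zero_eq_constantCoeff] at h0
      norm_num at h0
      rw [h0]
      exact Ne.isUnit (HahnSeries.coeff_order_eq_zero.not.2 hc)
    obtain ⟨u, hu⟩ := hcc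
    refine ⟨PowerSeries.X ^ (-c.order).toNat * (↑(u⁻¹) : PowerSeries k), ?_⟩
    have hmul : c * (algebraMap (PowerSeries k) (LaurentSeries k)
        (PowerSeries.X ^ (-o).toNat * (↑(u⁻¹) : PowerSeries k))) = 1 := by
      rw [map_mul, LaurentSeries.coe_algebraMap, HahnSeries.ofPowerSeries_X_pow,
        Int.toNat_of_nonneg (by omega)]
      conv_lhs => rw [← hkey]
      rw [mul_mul_mul_comm, HahnSeries.single_mul_single, one_mul, add_neg_cancel,
        ← map_mul, ← hu, Units.mul_inv]
      simp
    exact inv_eq_of_mul_eq_one_right hmul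

lemma epz_mem {m : ℤ} (hm : 0 ≤ m) :
    ∃ P : PowerSeries k, (eps k)^m = algebraMap (PowerSeries k) (LaurentSeries k) P := by
  refine ⟨PowerSeries.X ^ m.toNat, ?_⟩
  rw [map_pow, ← zpow_natCast, Int.toNat_of_nonneg hm]
  rfl

lemma exists_pow_mul_mem (c : LaurentSeries k) :
    ∃ m : ℕ, (eps k)^(m : ℤ) * c ∈ oring k := by
  obtain ⟨⟨p, q⟩, hq⟩ := IsLocalization.surj
    (Submonoid.powers (PowerSeries.X : PowerSeries k)) c
  obtain ⟨m, hm⟩ := q.2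
  refine ⟨m, ?_⟩
  rw [mem_oring]
  refine ⟨p, ?_⟩
  rw [zpow_natCast, mul_comm]
  calc c * eps k ^ m = c * algebraMap (PowerSeries k) (LaurentSeries k) ↑q := by
        rw [← hm]; rw [eps, ← map_pow]
    _ = algebraMap (PowerSeries k) (LaurentSeries k) p := hq

variable {V : Type*} [AddCommGroup V] [Module (LaurentSeries k) V]
  [Module (PowerSeries k) V] [IsScalarTower (PowerSeries k) (LaurentSeries k) V]

lemma smul_mem_oring {c : LaurentSeries k} (hc : c ∈ oring k)
    {L : Submodule (PowerSeries k) V} {x : V} (hx : x ∈ L) : c • x ∈ L := by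
  obtain ⟨P, rfl⟩ := hc
  rw [algebraMap_smul]
  exact L.smul_mem P hx

lemma mem_esmul {a : LaurentSeries k} {L : Submodule (PowerSeries k) V} {v : V} :
    v ∈ esmul a L ↔ ∃ x ∈ L, v = a • x := by
  constructor
  · rintro ⟨x, hx, rfl⟩; exact ⟨x, hx, rfl⟩
  · rintro ⟨x, hx, rfl⟩; exact ⟨x, hx, rfl⟩

lemma mem_esmul_iff_inv {a : LaurentSeries k} (ha : a ≠ 0) {L : Submodule (PowerSeries k) V}
    {v : V} : v ∈ esmul a L ↔ a⁻¹ • v ∈ L := by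
  rw [mem_esmul]
  constructor
  · rintro ⟨x, hx, rfl⟩
    rwa [smul_smul, inv_mul_cancel₀ ha, one_smul]
  · intro h
    exact ⟨a⁻¹ • v, h, by rw [smul_smul, mul_inv_cancel₀ ha, one_smul]⟩

/-- `ε^m • L` -/
def zsm (m : ℤ) (L : Submodule (PowerSeries k) V) : Submodule (PowerSeries k) V :=
  esmul ((eps k)^m) L

lemma mem_zsm {m : ℤ} {L : Submodule (PowerSeries k) V} {v : V} :
    v ∈ zsm m L ↔ (eps k)^(-m) • v ∈ L := by
  rw [zsm, mem_esmul_iff_inv (zpow_ne_zero _ eps_ne_zero_s9), ← zpow_neg]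

lemma zsm_mono_le {m m' : ℤ} (h : m' ≤ m) {L : Submodule (PowerSeries k) V} :
    zsm m L ≤ zsm m' L := by
  intro v hv
  rw [mem_zsm] at hv ⊢
  have : (eps k)^(-m') • v = (eps k)^(m - m') • ((eps k)^(-m) • v) := by
    rw [smul_smul, ← zpow_add₀ eps_ne_zero_s9]
    ring_nf
  rw [this]
  obtain ⟨P, hP⟩ := epz_mem (k := k) (m := m - m') (by omega)
  rw [hP]
  exact smul_mem_oring ⟨P, rfl⟩ hv

lemma zsm_zsm {m m' : ℤ} {L : Submodule (PowerSeries k) V} :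
    zsm m (zsm m' L) = zsm (m + m') L := by
  ext v
  rw [mem_zsm, mem_zsm, mem_zsm, smul_smul, ← zpow_add₀ eps_ne_zero_s9,
    show -m' + -m = -(m + m') by ring]

lemma zsm_zero {L : Submodule (PowerSeries k) V} : zsm 0 L = L := by
  ext v; rw [mem_zsm]; simp

lemma zsm_le_zsm {m : ℤ} {L L' : Submodule (PowerSeries k) V} (h : L ≤ L') :
    zsm m L ≤ zsm m L' := by
  intro v hv; rw [mem_zsm] at hv ⊢; exact h hv

lemma pow_mul_mem {c : LaurentSeries k} {M M' : ℤ} (h : M ≤ M')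
    (hc : (eps k)^M * c ∈ oring k) : (eps k)^M' * c ∈ oring k := by
  obtain ⟨P, hP⟩ := epz_mem (k := k) (m := M' - M) (by omega)
  have : (eps k)^M' * c = (eps k)^(M' - M) * ((eps k)^M * c) := by
    rw [← mul_assoc, ← zpow_add₀ eps_ne_zero_s9]; ring_nf
  rw [this, hP]
  exact Subring.mul_mem _ ⟨P, rfl⟩ hc

lemma finset_bound (s : Finset (LaurentSeries k)) :
    ∃ M : ℕ, ∀ c ∈ s, (eps k)^(M : ℤ) * c ∈ oring k := by
  classical
  induction s using Finset.induction_on with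
  | empty => exact ⟨0, by simp⟩
  | @insert a t hx ih =>
    obtain ⟨M, hM⟩ := ih
    obtain ⟨M', hM'⟩ := exists_pow_mul_mem (k := k) a
    refine ⟨max M M', fun c hc => ?_⟩
    rcases Finset.mem_insert.mp hc with rfl | hc
    · exact pow_mul_mem (by exact_mod_cast le_max_right M M') hM'
    · exact pow_mul_mem (by exact_mod_cast le_max_left M M') (hM c hc)

variable {V : Type*} [AddCommGroup V] [Module (LaurentSeries k) V]
  [Module (PowerSeries k) V] [IsScalarTower (PowerSeries k) (LaurentSeries k) V]

lemma exists_ord {U : Submodule (LaurentSeries k) V} {L : Submodule (PowerSeries k) V}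
    (hfg : L.FG) (hspan : Submodule.span (LaurentSeries k) (L : Set V) = U)
    {z : V} (hz : z ≠ 0) (hzU : z ∈ U) :
    ∃ a : ℤ, z ∈ zsm a L ∧ ∀ m : ℤ, z ∈ zsm m L → m ≤ a := by
  have hne : ∃ m : ℤ, z ∈ zsm m L := by
    have hz' : z ∈ Submodule.span (LaurentSeries k) (L : Set V) := by rw [hspan]; exact hzU
    rw [Submodule.mem_span_set'] at hz'
    obtain ⟨t, f, g, hsum⟩ := hz'
    choose M hM using fun i => exists_pow_mul_mem (k := k) (f i)
    refine ⟨-(↑(Finset.univ.sup M) : ℤ), ?_⟩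
    rw [mem_zsm, neg_neg, ← hsum, Finset.smul_sum]
    apply Submodule.sum_mem
    intro i _
    rw [smul_smul]
    refine smul_mem_oring ?_ (g i).2
    exact pow_mul_mem (by exact_mod_cast Finset.le_sup (Finset.mem_univ i)) (hM i)
  obtain ⟨φ, hφ⟩ : ∃ φ : V →ₗ[LaurentSeries k] LaurentSeries k, φ z = 1 := by
    have h1 : ¬ (∀ ψ : Module.Dual (LaurentSeries k) V, ψ z = 0) := by
      rw [Module.forall_dual_apply_eq_zero_iff]; exact hz
    push_neg at h1
    obtain ⟨ψ, hψ⟩ := h1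
    exact ⟨(ψ z)⁻¹ • ψ, by simp [inv_mul_cancel₀ hψ]⟩
  obtain ⟨s, hs⟩ := hfg
  obtain ⟨M, hM⟩ := finset_bound (s.image φ)
  have key : ∀ x ∈ L, (eps k)^(M : ℤ) * φ x ∈ oring k := by
    intro x hx
    rw [← hs] at hx
    induction hx using Submodule.span_induction with
    | mem x hx => exact hM _ (Finset.mem_image_of_mem φ hx)
    | zero => simp
    | add x y _ _ hx hy => rw [map_add, mul_add]; exact Subring.add_mem _ hx hy
    | smul p x _ hx =>
      rw [← algebraMap_smul (LaurentSeries k) p x, map_smul, smul_eq_mul, ← mul_assoc,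
        mul_comm _ (algebraMap (PowerSeries k) (LaurentSeries k) p), mul_assoc]
      exact Subring.mul_mem _ ⟨p, rfl⟩ hx
  have bound : ∀ m : ℤ, z ∈ zsm m L → m ≤ M := by
    intro m hm
    by_contra hcon
    push_neg at hcon
    rw [mem_zsm] at hm
    have h1 := key _ hm
    rw [map_smul, smul_eq_mul, hφ, mul_one, ← zpow_add₀ eps_ne_zero_s9] at h1
    obtain ⟨P, hP⟩ := (mem_oring _).mp h1
    obtain ⟨t, ht⟩ : ∃ t : ℤ, m - (M : ℤ) - 1 = t := ⟨_, rfl⟩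
    obtain ⟨P', hP'⟩ := epz_mem (k := k) (m := t) (by omega)
    apply one_ne_eps_mul (P' * P)
    have h2 : (M : ℤ) + -m = -(t+1) := by omega
    rw [h2] at hP
    calc (1 : LaurentSeries k) = (eps k)^(t+1) * (eps k)^(-(t+1)) := by
          rw [← zpow_add₀ eps_ne_zero_s9, add_neg_cancel, zpow_zero]
      _ = eps k * ((eps k)^t * (eps k)^(-(t+1))) := by
          rw [zpow_add₀ eps_ne_zero_s9, zpow_one]; ring
      _ = eps k * algebraMap (PowerSeries k) (LaurentSeries k) (P' * P) := by
          rw [hP, hP', map_mul]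
  obtain ⟨a, ha, hub⟩ := Int.exists_greatest_of_bdd ⟨M, fun m hm => bound m hm⟩ hne
  exact ⟨a, ha, hub⟩

lemma skew {Φ : V →ₗ[LaurentSeries k] V →ₗ[LaurentSeries k] LaurentSeries k}
    (halt : ∀ v : V, Φ v v = 0) (x y : V) : Φ x y = - Φ y x := by
  have h := halt (x + y)
  simp only [map_add, LinearMap.add_apply, halt x, halt y] at h
  linear_combination h

section Chain

variable {n : ℕ} {L : ℤ → Submodule (PowerSeries k) V}

lemma chain_mono (hmono : ∀ i : ℤ, L i ≤ L (i+1)) {i j : ℤ} (h : i ≤ j) : L i ≤ L j := by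
  have key : ∀ d : ℕ, L i ≤ L (i + d) := by
    intro d
    induction d with
    | zero => simp
    | succ m ih =>
      refine le_trans ih (le_of_eq_of_le ?_ (le_of_le_of_eq (hmono (i + m)) ?_)) <;> congr 1 <;>
        push_cast <;> ring
  have := key (j - i).toNat
  rwa [Int.toNat_of_nonneg (by omega), show i + (j - i) = j by ring] at this

lemma chain_zsm (hper : ∀ i : ℤ, ∀ v : V, v ∈ L i ↔ ∃ w ∈ L (i + n), v = eps k • w) :
    ∀ (t : ℤ) (i : ℤ), zsm t (L i) = L (i - t * n) := by
  have base : ∀ i : ℤ, zsm 1 (L i) = L (i - n) := by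
    intro i
    ext v
    rw [mem_zsm, hper (i - n) v]
    have hidx : i - (n:ℤ) + n = i := by ring
    rw [hidx]
    constructor
    · intro h
      refine ⟨(eps k)^(-(1:ℤ)) • v, h, ?_⟩
      rw [smul_smul, show eps k * (eps k)^(-(1:ℤ)) = 1 from by
        rw [zpow_neg, zpow_one, mul_inv_cancel₀ eps_ne_zero_s9], one_smul]
    · rintro ⟨w, hw, rfl⟩
      rw [smul_smul, show (eps k)^(-(1:ℤ)) * eps k = 1 from by
        rw [zpow_neg, zpow_one, inv_mul_cancel₀ eps_ne_zero_s9], one_smul]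
      exact hw
  have base' : ∀ i : ℤ, zsm (-1) (L i) = L (i + n) := by
    intro i
    have := base (i + n)
    rw [show i + (n:ℤ) - n = i by ring] at this
    rw [← this, zsm_zsm]
    norm_num [zsm_zero]
  intro t
  induction t using Int.induction_on with
  | zero => intro i; rw [zsm_zero]; norm_num
  | succ t ih =>
    intro i
    rw [show ((t:ℤ)+1) = 1 + (t:ℤ) by ring, ← zsm_zsm, ih i, base]
    congr 1; ring
  | pred t ih =>
    intro i
    rw [show (-(t:ℤ)-1) = (-1) + (-(t:ℤ)) by ring, ← zsm_zsm, ih i, base']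
    congr 1; ring

end Chain

section Hyper

variable {Φ : V →ₗ[LaurentSeries k] V →ₗ[LaurentSeries k] LaurentSeries k}
variable {U : Submodule (LaurentSeries k) V}
variable {n : ℕ} {L : ℤ → Submodule (PowerSeries k) V}

/-- Key construction: the hyperbolic partner of a nonzero vector, adapted to the chain. -/
lemma hyperplane (halt : ∀ v : V, Φ v v = 0) (hn : 0 < n)
    (hfg : ∀ i : ℤ, (L i).FG)
    (hspan : ∀ i : ℤ, Submodule.span (LaurentSeries k) ((L i : Set V)) = U)
    (hmono : ∀ i : ℤ, L i ≤ L (i+1))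
    (hper : ∀ i : ℤ, ∀ v : V, v ∈ L i ↔ ∃ w ∈ L (i + n), v = eps k • w)
    (hsh : ∀ i : ℤ, ∀ v ∈ U, ((∀ x ∈ L i, Φ v x ∈ oring k) ↔ v ∈ L (-i-1)))
    {z : V} (hz : z ≠ 0) (hzU : z ∈ U) :
    ∃ w : V, w ∈ U ∧ Φ z w = 1 ∧
      ∀ i : ℤ, ∀ x ∈ L i, (Φ x w) • z ∈ L i ∧ (Φ z x) • w ∈ L i := by
  -- the order function
  choose a ha1 ha2 using fun i : ℤ => exists_ord (hfg i) (hspan i) hz hzU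
  have hLU : ∀ i : ℤ, (L i : Set V) ⊆ (U : Set V) := by
    intro i x hx
    rw [← hspan i]
    exact Submodule.subset_span hx
  have amono : ∀ {i j : ℤ}, i ≤ j → a i ≤ a j := by
    intro i j hij
    exact ha2 j _ (zsm_le_zsm (chain_mono hmono hij) (ha1 i))
  have hshift : ∀ (m i : ℤ), zsm m (L (i + n)) = zsm (m - 1) (L i) := by
    intro m i
    have h1 : zsm (-1) (L i) = L (i + n) := by
      rw [chain_zsm hper (-1) i]; congr 1; ring
    rw [← h1, zsm_zsm]; ring_nf
  have aper : ∀ i : ℤ, a (i + n) = a i + 1 := by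
    intro i
    have h1 : a (i + n) ≤ a i + 1 := by
      have := ha1 (i + n)
      rw [hshift] at this
      have := ha2 i _ this
      omega
    have h2 : a i + 1 ≤ a (i + n) := by
      apply ha2 (i + n)
      rw [hshift]
      rw [show a i + 1 - 1 = a i by ring]
      exact ha1 i
    omega
  have apert : ∀ (t : ℤ) (i : ℤ), a (i + t * n) = a i + t := by
    intro t
    induction t using Int.induction_on with
    | zero => intro i; norm_num
    | succ t ih =>
      intro i
      have := aper (i + t * n)
      rw [ih i] at this
      rw [show i + ((t:ℤ)+1) * n = i + (t:ℤ) * n + n by ring, this]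
      ring
    | pred t ih =>
      intro i
      have := aper (i + (-(t:ℤ)-1) * n)
      rw [show i + (-(t:ℤ)-1) * n + n = i + (-(t:ℤ)) * n by ring, ih i] at this
      omega
  -- jump index
  obtain ⟨j₀, hj₀⟩ : ∃ j₀ : ℤ, a j₀ < a (j₀ + 1) := by
    by_contra hcon
    push_neg at hcon
    have hdec : ∀ d : ℕ, a ((0:ℤ) + d) ≤ a 0 := by
      intro d
      induction d with
      | zero => norm_num
      | succ m ih =>
        have := hcon ((0:ℤ) + m)
        have heq : ((0:ℤ) + (m:ℤ)) + 1 = (0:ℤ) + ((m:ℤ)+1) := by ring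
        rw [heq] at this
        calc a ((0:ℤ) + ((m:ℤ)+1)) ≤ a ((0:ℤ) + m) := by exact_mod_cast this
          _ ≤ a 0 := ih
    have h1 := hdec n
    have h2 : a ((0:ℤ) + (1:ℤ) * n) = a 0 + 1 := apert 1 0
    rw [one_mul] at h2
    omega
  have window : ∀ j : ℤ, j₀ < j → j ≤ j₀ + n → a j = a j₀ + 1 := by
    intro j h1 h2
    have hlow : a j₀ + 1 ≤ a j := le_trans (by omega) (amono h1)
    have hup : a j ≤ a j₀ + 1 := by
      have := amono h2
      have h3 : a (j₀ + (1:ℤ) * n) = a j₀ + 1 := apert 1 j₀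
      rw [one_mul] at h3
      omega
    omega
  -- primitive duality at the jump
  set u : V := (eps k)^(-(a j₀)) • z with hu
  have huL : u ∈ L j₀ := by rw [hu]; exact mem_zsm.mp (ha1 j₀)
  have huU : u ∈ U := U.smul_mem _ hzU
  obtain ⟨w₀, hw₀L, hw₀1⟩ : ∃ w₀ ∈ L (-j₀-1), Φ u w₀ = 1 := by
    by_cases hcase : ∃ w' ∈ L (-j₀-1), ¬∃ P : PowerSeries k,
        Φ u w' = eps k * algebraMap (PowerSeries k) (LaurentSeries k) P
    · obtain ⟨w', hw', hno⟩ := hcase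
      rcases dichot (Φ u w') with h | ⟨hc0, P, hPinv⟩
      · exact absurd h hno
      · refine ⟨(Φ u w')⁻¹ • w', ?_, ?_⟩
        · exact smul_mem_oring ((mem_oring _).mpr ⟨P, hPinv⟩) hw'
        · rw [map_smul, smul_eq_mul, inv_mul_cancel₀ hc0]
    · push_neg at hcase
      exfalso
      have hmem : (eps k)^(-(1:ℤ)) • u ∈ L j₀ := by
        have hv : (eps k)^(-(1:ℤ)) • u ∈ U := U.smul_mem _ huU
        have h4 := (hsh (-j₀-1) _ hv).mp ?_
        · rw [show -(-j₀-1)-1 = j₀ by ring] at h4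
          exact h4
        · intro x hx
          obtain ⟨P, hP⟩ := hcase x hx
          rw [map_smul, LinearMap.smul_apply, smul_eq_mul, hP, ← mul_assoc,
            zpow_neg, zpow_one, inv_mul_cancel₀ eps_ne_zero_s9, one_mul]
          exact ⟨P, rfl⟩
      have : z ∈ zsm (a j₀ + 1) (L j₀) := by
        rw [mem_zsm]
        have : (eps k)^(-(a j₀ + 1)) • z = (eps k)^(-(1:ℤ)) • u := by
          rw [hu, smul_smul, ← zpow_add₀ eps_ne_zero_s9]
          congr 1; ring
        rw [this]
        exact hmem
      have := ha2 j₀ _ this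
      omega
  set w : V := (eps k)^(-(a j₀)) • w₀ with hw
  have hwU : w ∈ U := U.smul_mem _ (hLU _ hw₀L)
  have hzw : Φ z w = 1 := by
    rw [hw, map_smul, smul_eq_mul]
    rw [hu, map_smul, LinearMap.smul_apply, smul_eq_mul] at hw₀1
    linear_combination hw₀1
  -- the family of memberships
  have famkey : ∀ j : ℤ, (eps k)^(a j) • w ∈ L (-j-1) := by
    have winmem : ∀ j : ℤ, j₀ ≤ j → j < j₀ + n → (eps k)^(a j) • w ∈ L (-j-1) := by
      intro j h1 h2
      by_cases hjj : j = j₀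
      · rw [hjj]
        have : (eps k)^(a j₀) • w = w₀ := by
          rw [hw, smul_smul, ← zpow_add₀ eps_ne_zero_s9, add_neg_cancel, zpow_zero, one_smul]
        rw [this]
        exact hw₀L
      · have hlt : j₀ < j := by omega
        rw [window j hlt (by omega)]
        have hstep : (eps k)^(a j₀ + 1) • w = eps k • w₀ := by
          rw [hw, smul_smul, ← zpow_add₀ eps_ne_zero_s9,
            show a j₀ + 1 + -(a j₀) = 1 by ring, zpow_one]
        rw [hstep]
        have hmem1 : eps k • w₀ ∈ L (-j₀-1-n) := by
          have hz1 : zsm 1 (L (-j₀-1)) = L (-j₀-1-n) := by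
            rw [chain_zsm hper 1 (-j₀-1)]; congr 1; ring
          rw [← hz1, mem_zsm, smul_smul, zpow_neg, zpow_one, inv_mul_cancel₀ eps_ne_zero_s9,
            one_smul]
          exact hw₀L
        exact chain_mono hmono (by omega) hmem1
    intro j
    obtain ⟨t, r, hr0, hrn, hj⟩ : ∃ (t r : ℤ), 0 ≤ r ∧ r < n ∧ j = (j₀ + r) + t * n := by
      refine ⟨(j - j₀) / n, (j - j₀) % n, Int.emod_nonneg _ (by positivity), 
        Int.emod_lt_of_pos _ (by exact_mod_cast hn), ?_⟩
      have h5 := Int.mul_ediv_add_emod (j - j₀) n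
      rw [mul_comm] at h5
      linarith
    have haj : a j = a (j₀ + r) + t := by rw [hj]; exact apert t (j₀ + r)
    have hLj : L (-j-1) = zsm t (L (-(j₀+r)-1)) := by
      rw [chain_zsm hper t (-(j₀+r)-1)]
      congr 1
      linarith
    rw [hLj, mem_zsm, haj, smul_smul, ← zpow_add₀ eps_ne_zero_s9,
      show -t + (a (j₀ + r) + t) = a (j₀ + r) by ring]
    rcases eq_or_lt_of_le hr0 with hre | hrpos
    · have : j₀ + r = j₀ := by omega
      rw [this]
      exact winmem j₀ le_rfl (by omega)
    · exact winmem (j₀ + r) (by omega) (by omega)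
  -- conclusions
  refine ⟨w, hwU, hzw, ?_⟩
  intro i x hx
  constructor
  · -- Φ x w • z ∈ L i
    have h1 : (eps k)^(a i) • w ∈ L (-i-1) := famkey i
    have h2 : Φ ((eps k)^(a i) • w) x ∈ oring k :=
      (hsh i _ (U.smul_mem _ hwU)).mpr h1 x hx
    rw [map_smul, LinearMap.smul_apply, smul_eq_mul] at h2
    obtain ⟨P, hP⟩ := (mem_oring _).mp h2
    have hwx : Φ x w = -((eps k)^(-(a i)) * algebraMap (PowerSeries k) (LaurentSeries k) P) := by
      rw [skew halt x w, ← hP, ← mul_assoc, ← zpow_add₀ eps_ne_zero_s9, neg_add_cancel, zpow_zero,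
        one_mul]
    rw [hwx, neg_smul, mul_smul]
    apply Submodule.neg_mem
    have hz2 : (eps k)^(-(a i)) • z ∈ L i := mem_zsm.mp (ha1 i)
    rw [smul_comm]
    exact smul_mem_oring ⟨P, rfl⟩ hz2
  · -- Φ z x • w ∈ L i
    have h1 : (eps k)^(-(a (-i-1))) • z ∈ L (-i-1) := mem_zsm.mp (ha1 (-i-1))
    have h2 : Φ ((eps k)^(-(a (-i-1))) • z) x ∈ oring k :=
      (hsh i _ (U.smul_mem _ hzU)).mpr h1 x hx
    rw [map_smul, LinearMap.smul_apply, smul_eq_mul] at h2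
    obtain ⟨P, hP⟩ := (mem_oring _).mp h2
    have hzx : Φ z x = (eps k)^(a (-i-1)) * algebraMap (PowerSeries k) (LaurentSeries k) P := by
      rw [← hP, ← mul_assoc, ← zpow_add₀ eps_ne_zero_s9, add_neg_cancel, zpow_zero, one_mul]
    have h3 : (eps k)^(a (-i-1)) • w ∈ L i := by
      have := famkey (-i-1)
      rw [show -(-i-1)-1 = i by ring] at this
      exact this
    rw [hzx, mul_smul, smul_comm]
    exact smul_mem_oring ⟨P, rfl⟩ h3

end Hyper

lemma mem_perpF {Φ : V →ₗ[LaurentSeries k] V →ₗ[LaurentSeries k] LaurentSeries k}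
    {N : Submodule (LaurentSeries k) V} {v : V} :
    v ∈ perpF Φ N ↔ ∀ x ∈ N, Φ v x = 0 := Iff.rfl

section Main

variable (Φ : V →ₗ[LaurentSeries k] V →ₗ[LaurentSeries k] LaurentSeries k)

theorem aux [FiniteDimensional (LaurentSeries k) V]
    (halt : ∀ v : V, Φ v v = 0) (n : ℕ) (hn : 0 < n) :
    ∀ (s : ℕ) (U : Submodule (LaurentSeries k) V)
      (_hUnd : ∀ v ∈ U, (∀ y ∈ U, Φ v y = 0) → v = 0)
      (V'' : Submodule (LaurentSeries k) V) (_hV''U : V'' ≤ U)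
      (_hiso : ∀ x ∈ V'', ∀ y ∈ V'', Φ x y = 0)
      (_hs : Module.finrank (LaurentSeries k) V'' = s)
      (L : ℤ → Submodule (PowerSeries k) V)
      (_hfg : ∀ i : ℤ, (L i).FG)
      (_hspan : ∀ i : ℤ, Submodule.span (LaurentSeries k) ((L i : Set V)) = U)
      (_hmono : ∀ i : ℤ, L i ≤ L (i+1))
      (_hper : ∀ i : ℤ, ∀ v : V, v ∈ L i ↔ ∃ w ∈ L (i + n), v = eps k • w)
      (_hsh : ∀ i : ℤ, ∀ v ∈ U, ((∀ x ∈ L i, Φ v x ∈ oring k) ↔ v ∈ L (-i-1))),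
    ∃ T W : Submodule (LaurentSeries k) V,
      (V'' ⊓ (T ⊔ W) = ⊥ ∧ T ⊓ (V'' ⊔ W) = ⊥ ∧ W ⊓ (V'' ⊔ T) = ⊥ ∧ V'' ⊔ T ⊔ W = U) ∧
      perpF Φ V'' ⊓ U = V'' ⊔ T ∧
      (∀ x ∈ W, ∀ y ∈ W, Φ x y = 0) ∧
      (∀ x ∈ T, ∀ y ∈ W, Φ x y = 0) ∧
      (∃ (z : Module.Basis (Fin s) (LaurentSeries k) V'')
         (w : Module.Basis (Fin s) (LaurentSeries k) W),
        ∀ i j : Fin s, Φ (z i : V) (w j : V) = if i = j then 1 else 0) ∧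
      (∀ i : ℤ, L i = (L i ⊓ V''.restrictScalars (PowerSeries k))
          ⊔ (L i ⊓ T.restrictScalars (PowerSeries k))
          ⊔ (L i ⊓ W.restrictScalars (PowerSeries k))) := by
  intro s
  induction s with
  | zero =>
    intro U hUnd V'' hV''U hiso hs L hfg hspan hmono hper hsh
    have hLU : ∀ (i : ℤ) (x : V), x ∈ L i → x ∈ U := by
      intro i x hx
      rw [← hspan i]
      exact Submodule.subset_span hx
    have hbot : V'' = ⊥ := Submodule.finrank_eq_zero.mp hs
    subst hbot
    refine ⟨U, ⊥, ⟨by simp, by simp, by simp, by simp⟩, ?_, by simp, ?_, ?_, ?_⟩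
    · have hperp : perpF Φ (⊥ : Submodule (LaurentSeries k) V) = ⊤ := by
        ext v
        simp only [mem_perpF, Submodule.mem_top, iff_true]
        intro x hx
        rw [Submodule.mem_bot] at hx
        rw [hx, map_zero]
      rw [hperp]
      simp
    · intro x hx y hy
      rw [Submodule.mem_bot] at hy
      rw [hy, map_zero]
    · refine ⟨Module.Basis.empty _, Module.Basis.empty _, fun i j => i.elim0⟩
    · intro i
      have h1 : L i ⊓ (⊥ : Submodule (LaurentSeries k) V).restrictScalars (PowerSeries k) = ⊥ := by
        simp
      have h2 : L i ⊓ U.restrictScalars (PowerSeries k) = L i := by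
        rw [inf_eq_left]
        intro x hx
        exact hLU i x hx
      rw [h1, h2]
      simp
  | succ s' IH =>
    intro U hUnd V'' hV''U hiso hs L hfg hspan hmono hper hsh
    have hLU : ∀ (i : ℤ) (x : V), x ∈ L i → x ∈ U := by
      intro i x hx
      rw [← hspan i]
      exact Submodule.subset_span hx
    -- choose a nonzero z ∈ V''
    obtain ⟨z, hzV, hz0⟩ : ∃ z ∈ V'', z ≠ 0 := by
      apply Submodule.exists_mem_ne_zero_of_ne_bot
      intro hb
      rw [hb, finrank_bot] at hs
      omega
    obtain ⟨w, hwU, hzw, hkey⟩ := hyperplane halt hn hfg hspan hmono hper hsh hz0 (hV''U hzV)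
    have hwz : Φ w z = -1 := by rw [skew halt, hzw]
    -- the hyperbolic plane and its perp
    set P : Submodule (LaurentSeries k) V := Submodule.span (LaurentSeries k) {z, w} with hP
    have hzP : z ∈ P := Submodule.subset_span (by simp)
    have hwP : w ∈ P := Submodule.subset_span (by simp)
    set U' : Submodule (LaurentSeries k) V := U ⊓ perpF Φ P with hU'
    have hU'le : U' ≤ U := inf_le_left
    have hv0 : ∀ v ∈ U', Φ v z = 0 ∧ Φ v w = 0 ∧ Φ z v = 0 ∧ Φ w v = 0 := by
      intro v hv
      have h1 := hv.2 z hzP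
      have h2 := hv.2 w hwP
      refine ⟨h1, h2, ?_, ?_⟩
      · rw [skew halt, h1, neg_zero]
      · rw [skew halt, h2, neg_zero]
    have hρ : ∀ x ∈ U, x - Φ x w • z - Φ z x • w ∈ U' := by
      intro x hx
      refine ⟨U.sub_mem (U.sub_mem hx (U.smul_mem _ (hV''U hzV))) (U.smul_mem _ hwU), ?_⟩
      intro p hp
      obtain ⟨c1, c2, rfl⟩ := Submodule.mem_span_pair.mp hp
      simp only [map_sub, map_smul, map_add, LinearMap.sub_apply, LinearMap.smul_apply,
        LinearMap.add_apply, smul_eq_mul, halt z, halt w, hzw, hwz]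
      linear_combination c1 * (skew halt x z)
    set V₂ : Submodule (LaurentSeries k) V := V'' ⊓ U' with hV₂
    have hsub : ∀ x ∈ V'', x - Φ x w • z ∈ V₂ := by
      intro x hx
      have hzx : Φ z x = 0 := hiso z hzV x hx
      have h1 := hρ x (hV''U hx)
      rw [hzx, zero_smul, sub_zero] at h1
      exact ⟨V''.sub_mem hx (V''.smul_mem _ hzV), h1⟩
    have hV2dec : V'' = Submodule.span (LaurentSeries k) {z} ⊔ V₂ := by
      apply le_antisymm
      · intro x hx
        have h1 := hsub x hx
        have : x = Φ x w • z + (x - Φ x w • z) := by abel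
        rw [this]
        exact Submodule.add_mem _
          (Submodule.mem_sup_left (Submodule.smul_mem _ _ (Submodule.mem_span_singleton_self z)))
          (Submodule.mem_sup_right h1)
      · refine sup_le ?_ inf_le_left
        rw [Submodule.span_le, Set.singleton_subset_iff]
        exact hzV
    have hs2 : Module.finrank (LaurentSeries k) V₂ = s' := by
      have hdisj : Submodule.span (LaurentSeries k) {z} ⊓ V₂ = ⊥ := by
        rw [eq_bot_iff]
        intro x ⟨hx1, hx2⟩
        obtain ⟨c, rfl⟩ := Submodule.mem_span_singleton.mp hx1
        have := (hv0 _ (hx2.2)).2.1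
        rw [map_smul, LinearMap.smul_apply, smul_eq_mul, hzw, mul_one] at this
        rw [Submodule.mem_bot, this, zero_smul]
      have := Submodule.finrank_sup_add_finrank_inf_eq
        (Submodule.span (LaurentSeries k) {z}) V₂
      rw [← hV2dec, hdisj, finrank_bot, finrank_span_singleton hz0, hs] at this
      omega
    -- the projection onto the perp of the hyperbolic plane
    set ρF : V →ₗ[LaurentSeries k] V :=
      LinearMap.id - ((Φ.flip w).smulRight z) - ((Φ z).smulRight w) with hρFdef
    have hρF : ∀ x : V, ρF x = x - Φ x w • z - Φ z x • w := by
      intro x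
      simp [hρFdef, LinearMap.sub_apply, LinearMap.smulRight_apply, LinearMap.flip_apply]
    have hU'nd : ∀ v ∈ U', (∀ y ∈ U', Φ v y = 0) → v = 0 := by
      intro v hv hperp
      apply hUnd v (hU'le hv)
      intro y hy
      have hdec : y = Φ y w • z + Φ z y • w + ρF y := by rw [hρF]; abel
      have h' : ρF y ∈ U' := by rw [hρF]; exact hρ y hy
      rw [hdec, map_add, map_add, map_smul, map_smul, smul_eq_mul, smul_eq_mul,
        (hv0 v hv).1, (hv0 v hv).2.1, hperp _ h']
      ring
    set L' : ℤ → Submodule (PowerSeries k) V :=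
      fun i => L i ⊓ U'.restrictScalars (PowerSeries k) with hL'def
    have hL'le : ∀ i : ℤ, L' i ≤ L i := fun i => inf_le_left
    have hL'U' : ∀ (i : ℤ) (x : V), x ∈ L' i → x ∈ U' := by
      intro i x hx
      exact hx.2
    have hρL : ∀ (i : ℤ), ∀ x ∈ L i, ρF x ∈ L' i := by
      intro i x hx
      obtain ⟨hA, hB⟩ := hkey i x hx
      constructor
      · rw [hρF]
        exact (L i).sub_mem ((L i).sub_mem hx hA) hB
      · show ρF x ∈ U'
        rw [hρF]
        exact hρ x (hLU i x hx)
    have hfix : ∀ x ∈ U', ρF x = x := by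
      intro x hx
      rw [hρF, (hv0 x hx).2.1, (hv0 x hx).2.2.1, zero_smul, zero_smul, sub_zero, sub_zero]
    have hL'map : ∀ i : ℤ,
        Submodule.map (ρF.restrictScalars (PowerSeries k)) (L i) = L' i := by
      intro i
      apply le_antisymm
      · rintro x ⟨y, hy, rfl⟩
        exact hρL i y hy
      · intro x hx
        exact ⟨x, hx.1, hfix x hx.2⟩
    -- chain hypotheses for L'
    have hfg' : ∀ i : ℤ, (L' i).FG := by
      intro i
      rw [← hL'map i]
      exact Submodule.FG.map _ (hfg i)
    have hspan' : ∀ i : ℤ, Submodule.span (LaurentSeries k) ((L' i : Set V)) = U' := by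
      intro i
      apply le_antisymm
      · rw [Submodule.span_le]
        intro x hx
        exact hL'U' i x hx
      · intro v hv
        have hv1 : v ∈ Submodule.span (LaurentSeries k) ((L i : Set V)) := by
          rw [hspan i]; exact hU'le hv
        have hv2 : ρF v ∈ Submodule.map ρF (Submodule.span (LaurentSeries k) ((L i : Set V))) :=
          Submodule.mem_map_of_mem hv1
        rw [Submodule.map_span] at hv2
        rw [← hfix v hv]
        refine Submodule.span_mono ?_ hv2
        rintro _ ⟨y, hy, rfl⟩
        exact hρL i y hy
    have hmono' : ∀ i : ℤ, L' i ≤ L' (i+1) := by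
      intro i
      exact inf_le_inf (hmono i) le_rfl
    have hper' : ∀ i : ℤ, ∀ v : V, v ∈ L' i ↔ ∃ w' ∈ L' (i + n), v = eps k • w' := by
      intro i v
      constructor
      · rintro ⟨hv1, hv2⟩
        obtain ⟨w', hw', rfl⟩ := (hper i v).mp hv1
        have hw'eq : w' = (eps k)⁻¹ • (eps k • w') := by
          rw [smul_smul, inv_mul_cancel₀ eps_ne_zero_s9, one_smul]
        refine ⟨w', ⟨hw', ?_⟩, rfl⟩
        rw [hw'eq]
        exact U'.smul_mem _ hv2
      · rintro ⟨w', ⟨h1, h2⟩, rfl⟩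
        exact ⟨(hper i _).mpr ⟨w', h1, rfl⟩, U'.smul_mem _ h2⟩
    have hsh' : ∀ i : ℤ, ∀ v ∈ U', ((∀ x ∈ L' i, Φ v x ∈ oring k) ↔ v ∈ L' (-i-1)) := by
      intro i v hv
      constructor
      · intro hO
        refine ⟨(hsh i v (hU'le hv)).mp ?_, hv⟩
        intro x hx
        have hdec : x = Φ x w • z + Φ z x • w + ρF x := by rw [hρF]; abel
        rw [hdec, map_add, map_add, map_smul, map_smul, smul_eq_mul, smul_eq_mul,
          (hv0 v hv).1, (hv0 v hv).2.1]
        have := hO _ (hρL i x hx)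
        simpa using this
      · rintro ⟨h1, _⟩
        intro x hx
        exact (hsh i v (hU'le hv)).mpr h1 x (hL'le i hx)
    -- apply the induction hypothesis
    obtain ⟨T', W', ⟨h1a, h1b, h1c, h1d⟩, h2, h3, h4, ⟨bz', bw', hbase⟩, h6⟩ :=
      IH U' hU'nd V₂ inf_le_right (fun x hx y hy => hiso x hx.1 y hy.1) hs2
        L' hfg' hspan' hmono' hper' hsh'
    have hT'U' : T' ≤ U' := by
      rw [← h1d]
      exact le_sup_right.trans le_sup_left
    have hW'U' : W' ≤ U' := by
      rw [← h1d]
      exact le_sup_right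
    -- the enlarged W
    set Wbig : Submodule (LaurentSeries k) V := W' ⊔ Submodule.span (LaurentSeries k) {w}
      with hWbigdef
    have hwW : w ∈ Wbig := Submodule.mem_sup_right (Submodule.mem_span_singleton_self w)
    have hfunc1 : ∀ x ∈ U', Φ x w = 0 := fun x hx => (hv0 x hx).2.1
    have hfunc2 : ∀ x ∈ U', Φ z x = 0 := fun x hx => (hv0 x hx).2.2.1
    have hTw : ∀ x ∈ T', Φ x w = 0 := fun x hx => hfunc1 x (hT'U' hx)
    have hTz : ∀ x ∈ T', Φ z x = 0 := fun x hx => hfunc2 x (hT'U' hx)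
    have hWle : Wbig ≤ U := by
      refine sup_le (hW'U'.trans hU'le) ?_
      rw [Submodule.span_le, Set.singleton_subset_iff]
      exact hwU
    have hWw : ∀ x ∈ Wbig, Φ x w = 0 := by
      intro x hx
      obtain ⟨u, hu, e, he, rfl⟩ := Submodule.mem_sup.mp hx
      obtain ⟨d, rfl⟩ := Submodule.mem_span_singleton.mp he
      rw [map_add, LinearMap.add_apply, map_smul, LinearMap.smul_apply, smul_eq_mul,
        halt w, hfunc1 u (hW'U' hu)]
      ring
    have hWsub : ∀ x ∈ Wbig, x - Φ z x • w ∈ W' := by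
      intro x hx
      obtain ⟨u, hu, e, he, rfl⟩ := Submodule.mem_sup.mp hx
      obtain ⟨d, rfl⟩ := Submodule.mem_span_singleton.mp he
      have hc : Φ z (u + d • w) = d := by
        rw [map_add, map_smul, smul_eq_mul, hzw, hfunc2 u (hW'U' hu)]
        ring
      rw [hc]
      have : u + d • w - d • w = u := by abel
      rw [this]
      exact hu
    refine ⟨T', Wbig, ⟨?_, ?_, ?_, ?_⟩, ?_, ?_, ?_, ?_, ?_⟩
    · -- V'' ⊓ (T' ⊔ Wbig) = ⊥
      rw [eq_bot_iff]
      rintro x ⟨hx1, hx2⟩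
      obtain ⟨t, ht, ω, hω, rfl⟩ := Submodule.mem_sup.mp hx2
      have hxw : Φ (t + ω) w = 0 := by
        rw [map_add, LinearMap.add_apply, hTw t ht, hWw ω hω, add_zero]
      have hxV₂ : t + ω ∈ V₂ := by
        have := hsub _ hx1
        rwa [hxw, zero_smul, sub_zero] at this
      have hzx : Φ z (t + ω) = 0 := hfunc2 _ hxV₂.2
      have hzω : Φ z ω = 0 := by
        rw [map_add, hTz t ht, zero_add] at hzx
        exact hzx
      have hω' : ω ∈ W' := by
        have := hWsub ω hω
        rwa [hzω, zero_smul, sub_zero] at this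
      have hmem : t + ω ∈ V₂ ⊓ (T' ⊔ W') :=
        ⟨hxV₂, Submodule.add_mem_sup ht hω'⟩
      rw [h1a] at hmem
      exact hmem
    · -- T' ⊓ (V'' ⊔ Wbig) = ⊥
      rw [eq_bot_iff]
      rintro x ⟨hx1, hx2⟩
      obtain ⟨p, hp, ω, hω, rfl⟩ := Submodule.mem_sup.mp hx2
      have hxw : Φ (p + ω) w = 0 := hTw _ hx1
      rw [map_add, LinearMap.add_apply, hWw ω hω, add_zero] at hxw
      have hpV₂ : p ∈ V₂ := by
        have := hsub p hp
        rwa [hxw, zero_smul, sub_zero] at this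
      have hzx : Φ z (p + ω) = 0 := hTz _ hx1
      rw [map_add, hfunc2 p hpV₂.2, zero_add] at hzx
      have hω' : ω ∈ W' := by
        have := hWsub ω hω
        rwa [hzx, zero_smul, sub_zero] at this
      have hmem : p + ω ∈ T' ⊓ (V₂ ⊔ W') :=
        ⟨hx1, Submodule.add_mem_sup hpV₂ hω'⟩
      rw [h1b] at hmem
      exact hmem
    · -- Wbig ⊓ (V'' ⊔ T') = ⊥
      rw [eq_bot_iff]
      rintro x ⟨hx1, hx2⟩
      obtain ⟨p, hp, t, ht, rfl⟩ := Submodule.mem_sup.mp hx2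
      have hxw : Φ (p + t) w = 0 := hWw _ hx1
      rw [map_add, LinearMap.add_apply, hTw t ht, add_zero] at hxw
      have hpV₂ : p ∈ V₂ := by
        have := hsub p hp
        rwa [hxw, zero_smul, sub_zero] at this
      have hzx : Φ z (p + t) = 0 := by
        rw [map_add, hfunc2 p hpV₂.2, hTz t ht, add_zero]
      have hx' : p + t ∈ W' := by
        have := hWsub _ hx1
        rwa [hzx, zero_smul, sub_zero] at this
      have hmem : p + t ∈ W' ⊓ (V₂ ⊔ T') :=
        ⟨hx', Submodule.add_mem_sup hpV₂ ht⟩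
      rw [h1c] at hmem
      exact hmem
    · -- V'' ⊔ T' ⊔ Wbig = U
      apply le_antisymm
      · exact sup_le (sup_le hV''U (hT'U'.trans hU'le)) hWle
      · intro x hx
        have hA : Φ x w • z ∈ V'' ⊔ T' ⊔ Wbig :=
          Submodule.mem_sup_left (Submodule.mem_sup_left (V''.smul_mem _ hzV))
        have hB : Φ z x • w ∈ V'' ⊔ T' ⊔ Wbig :=
          Submodule.mem_sup_right (Wbig.smul_mem _ hwW)
        have hρx : ρF x ∈ V₂ ⊔ T' ⊔ W' := by
          rw [h1d]
          rw [hρF]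
          exact hρ x hx
        have hρx' : ρF x ∈ V'' ⊔ T' ⊔ Wbig := by
          refine (sup_le_sup (sup_le_sup_right inf_le_left T') le_sup_left) hρx
        have hdec : x = Φ x w • z + Φ z x • w + ρF x := by rw [hρF]; abel
        rw [hdec]
        exact Submodule.add_mem _ (Submodule.add_mem _ hA hB) hρx'
    · -- perpF Φ V'' ⊓ U = V'' ⊔ T'
      apply le_antisymm
      · rintro x ⟨hx1, hxU⟩
        have hxz : Φ x z = 0 := hx1 z hzV
        have hzx : Φ z x = 0 := by rw [skew halt, hxz, neg_zero]
        have hρ' : x - Φ x w • z ∈ U' := by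
          have := hρ x hxU
          rwa [hzx, zero_smul, sub_zero] at this
        have hperp2 : x - Φ x w • z ∈ perpF Φ V₂ := by
          intro y hy
          rw [map_sub, LinearMap.sub_apply, map_smul, LinearMap.smul_apply, smul_eq_mul,
            hx1 y hy.1, hiso z hzV y hy.1]
          ring
        have hmem : x - Φ x w • z ∈ V₂ ⊔ T' := by
          rw [← h2]
          exact ⟨hperp2, hρ'⟩
        have hdec : x = Φ x w • z + (x - Φ x w • z) := by abel
        rw [hdec]
        have hstep : V₂ ⊔ T' ≤ V'' ⊔ T' := sup_le_sup_right inf_le_left T'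
        exact Submodule.add_mem _ (Submodule.mem_sup_left (V''.smul_mem _ hzV)) (hstep hmem)
      · refine sup_le ?_ ?_
        · intro x hx
          exact ⟨fun y hy => hiso x hx y hy, hV''U hx⟩
        · intro t ht
          have htperp : t ∈ perpF Φ V₂ ⊓ U' := by
            rw [h2]
            exact Submodule.mem_sup_right ht
          refine ⟨?_, hU'le (hT'U' ht)⟩
          intro y hy
          have hy2 := hsub y hy
          have hdec : y = Φ y w • z + (y - Φ y w • z) := by abel
          rw [hdec, map_add, map_smul, smul_eq_mul, (hv0 t (hT'U' ht)).1,
            htperp.1 _ hy2]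
          ring
    · -- Wbig isotropic
      intro x hx y hy
      obtain ⟨u, hu, e, he, rfl⟩ := Submodule.mem_sup.mp hx
      obtain ⟨d, rfl⟩ := Submodule.mem_span_singleton.mp he
      obtain ⟨u', hu', e', he', rfl⟩ := Submodule.mem_sup.mp hy
      obtain ⟨d', rfl⟩ := Submodule.mem_span_singleton.mp he'
      simp only [map_add, map_smul, LinearMap.add_apply, LinearMap.smul_apply, smul_eq_mul]
      rw [h3 u hu u' hu', halt w, hfunc1 u (hW'U' hu), (hv0 u' (hW'U' hu')).2.2.2]
      ring
    · -- (T', Wbig) = 0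
      intro x hx y hy
      obtain ⟨u', hu', e', he', rfl⟩ := Submodule.mem_sup.mp hy
      obtain ⟨d', rfl⟩ := Submodule.mem_span_singleton.mp he'
      rw [map_add, map_smul, smul_eq_mul, h4 x hx u' hu', hTw x hx]
      ring
    · -- dual bases
      have hV₂le : V₂ ≤ V'' := inf_le_left
      have hW'le : W' ≤ Wbig := le_sup_left
      set N : Submodule (LaurentSeries k) ↥V'' := Submodule.comap V''.subtype V₂ with hN
      set NW : Submodule (LaurentSeries k) ↥Wbig := Submodule.comap Wbig.subtype W' with hNW
      set bN : Module.Basis (Fin s') (LaurentSeries k) ↥N :=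
        bz'.map (Submodule.comapSubtypeEquivOfLe hV₂le).symm with hbN
      set bNW : Module.Basis (Fin s') (LaurentSeries k) ↥NW :=
        bw'.map (Submodule.comapSubtypeEquivOfLe hW'le).symm with hbNW
      have hNval : ∀ j : Fin s', ((bN j : ↥V'') : V) = ((bz' j : ↥V₂) : V) := by
        intro j
        rw [hbN, Module.Basis.map_apply, Submodule.comapSubtypeEquivOfLe_symm_apply]
      have hNWval : ∀ j : Fin s', ((bNW j : ↥Wbig) : V) = ((bw' j : ↥W') : V) := by
        intro j
        rw [hbNW, Module.Basis.map_apply, Submodule.comapSubtypeEquivOfLe_symm_apply]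
      have hli : ∀ (c : LaurentSeries k), ∀ x ∈ N, c • (⟨z, hzV⟩ : ↥V'') + x = 0 → c = 0 := by
        intro c x hxN hEq
        have hEq' : c • z + (x : V) = 0 := by
          have := congrArg (Subtype.val : ↥V'' → V) hEq
          simpa using this
        have h0 := congrArg (fun v => Φ v w) hEq'
        simp only [map_add, map_smul, LinearMap.add_apply, LinearMap.smul_apply,
          smul_eq_mul, map_zero, LinearMap.zero_apply, hzw] at h0
        rw [hfunc1 (x : V) hxN.2] at h0
        simpa using h0
      have hsp : ∀ x : ↥V'', ∃ c : LaurentSeries k, x + c • (⟨z, hzV⟩ : ↥V'') ∈ N := by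
        intro x
        refine ⟨-(Φ (x : V) w), ?_⟩
        show ((x + (-(Φ (x : V) w)) • (⟨z, hzV⟩ : ↥V'') : ↥V'') : V) ∈ V₂
        have hcoe : ((x + (-(Φ (x : V) w)) • (⟨z, hzV⟩ : ↥V'') : ↥V'') : V)
            = (x : V) - Φ (x : V) w • z := by
          push_cast
          rw [neg_smul]
          abel
        rw [hcoe]
        exact hsub _ x.2
      have hliW : ∀ (c : LaurentSeries k), ∀ x ∈ NW, c • (⟨w, hwW⟩ : ↥Wbig) + x = 0 → c = 0 := by
        intro c x hxN hEq
        have hEq' : c • w + (x : V) = 0 := by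
          have := congrArg (Subtype.val : ↥Wbig → V) hEq
          simpa using this
        have h0 := congrArg (fun v => Φ z v) hEq'
        simp only [map_add, map_smul, smul_eq_mul, map_zero, hzw] at h0
        rw [hfunc2 (x : V) (hW'U' hxN)] at h0
        simpa using h0
      have hspW : ∀ x : ↥Wbig, ∃ c : LaurentSeries k, x + c • (⟨w, hwW⟩ : ↥Wbig) ∈ NW := by
        intro x
        refine ⟨-(Φ z (x : V)), ?_⟩
        show ((x + (-(Φ z (x : V))) • (⟨w, hwW⟩ : ↥Wbig) : ↥Wbig) : V) ∈ W'
        have hcoe : ((x + (-(Φ z (x : V))) • (⟨w, hwW⟩ : ↥Wbig) : ↥Wbig) : V)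
            = (x : V) - Φ z (x : V) • w := by
          push_cast
          rw [neg_smul]
          abel
        rw [hcoe]
        exact hWsub _ x.2
      refine ⟨Module.Basis.mkFinCons (⟨z, hzV⟩ : ↥V'') bN hli hsp,
        Module.Basis.mkFinCons (⟨w, hwW⟩ : ↥Wbig) bNW hliW hspW, ?_⟩
      intro i j
      rw [Module.Basis.coe_mkFinCons, Module.Basis.coe_mkFinCons]
      rcases Fin.eq_zero_or_eq_succ i with rfl | ⟨i', rfl⟩ <;>
        rcases Fin.eq_zero_or_eq_succ j with rfl | ⟨j', rfl⟩
      · simp [hzw]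
      · rw [Fin.cons_zero, Fin.cons_succ]
        simp only [Function.comp_apply]
        rw [if_neg (Ne.symm (Fin.succ_ne_zero j'))]
        show Φ z ((bNW j' : ↥Wbig) : V) = 0
        rw [hNWval j']
        exact hfunc2 _ (hW'U' (bw' j').2)
      · rw [Fin.cons_zero, Fin.cons_succ]
        simp only [Function.comp_apply]
        rw [if_neg (Fin.succ_ne_zero i')]
        show Φ ((bN i' : ↥V'') : V) w = 0
        rw [hNval i']
        exact hfunc1 _ (bz' i').2.2
      · rw [Fin.cons_succ, Fin.cons_succ]
        simp only [Function.comp_apply]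
        show Φ ((bN i' : ↥V'') : V) ((bNW j' : ↥Wbig) : V) = _
        rw [hNval i', hNWval j', hbase i' j']
        simp [Fin.succ_inj]
    · -- lattice decomposition
      intro i
      apply le_antisymm
      · intro x hx
        obtain ⟨hA, hB⟩ := hkey i x hx
        have hAm : Φ x w • z ∈ (L i ⊓ V''.restrictScalars (PowerSeries k))
            ⊔ (L i ⊓ T'.restrictScalars (PowerSeries k))
            ⊔ (L i ⊓ Wbig.restrictScalars (PowerSeries k)) :=
          Submodule.mem_sup_left (Submodule.mem_sup_left ⟨hA, V''.smul_mem _ hzV⟩)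
        have hBm : Φ z x • w ∈ (L i ⊓ V''.restrictScalars (PowerSeries k))
            ⊔ (L i ⊓ T'.restrictScalars (PowerSeries k))
            ⊔ (L i ⊓ Wbig.restrictScalars (PowerSeries k)) :=
          Submodule.mem_sup_right ⟨hB, Wbig.smul_mem _ hwW⟩
        have hρm : ρF x ∈ (L' i ⊓ V₂.restrictScalars (PowerSeries k))
            ⊔ (L' i ⊓ T'.restrictScalars (PowerSeries k))
            ⊔ (L' i ⊓ W'.restrictScalars (PowerSeries k)) := by
          rw [← h6 i]
          exact hρL i x hx
        have hle : (L' i ⊓ V₂.restrictScalars (PowerSeries k))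
            ⊔ (L' i ⊓ T'.restrictScalars (PowerSeries k))
            ⊔ (L' i ⊓ W'.restrictScalars (PowerSeries k))
            ≤ (L i ⊓ V''.restrictScalars (PowerSeries k))
            ⊔ (L i ⊓ T'.restrictScalars (PowerSeries k))
            ⊔ (L i ⊓ Wbig.restrictScalars (PowerSeries k)) := by
          refine sup_le_sup (sup_le_sup ?_ ?_) ?_
          · rintro v ⟨hv1, hv2⟩
            exact ⟨hL'le i hv1, hv2.1⟩
          · rintro v ⟨hv1, hv2⟩
            exact ⟨hL'le i hv1, hv2⟩
          · rintro v ⟨hv1, hv2⟩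
            exact ⟨hL'le i hv1, le_sup_left (a := W')
              (b := Submodule.span (LaurentSeries k) {w}) hv2⟩
        have hdec : x = Φ x w • z + Φ z x • w + ρF x := by rw [hρF]; abel
        rw [hdec]
        exact Submodule.add_mem _ (Submodule.add_mem _ hAm hBm) (hle hρm)
      · exact sup_le (sup_le inf_le_left inf_le_left) inf_le_left

end Main

end AffLat

open AffLat

/-- Let `V″` be an isotropic `F`-subspace of `V` of dimension `s` and let
`L ∈ X^c_{n,d}`.  Then there exist `F`-subspaces `T`, `W` of `V` such that
(1) `V = V″ ⊕ T ⊕ W` and `(V″)^⊥ = V″ ⊕ T`;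
(2) `W` is isotropic and `(T, W) = 0`;
(3) there are bases `(z_i)` of `V″` and `(w_j)` of `W` with `(z_i, w_j) = δ_{ij}`;
(4) `L_i = (L_i ∩ V″) ⊕ (L_i ∩ T) ⊕ (L_i ∩ W)` for all `i ∈ ℤ`. -/
theorem statement9 {k : Type*} [Field k] [Fintype k] (hodd : Odd (Fintype.card k))
    {V : Type*} [AddCommGroup V] [Module (LaurentSeries k) V]
    [Module (PowerSeries k) V] [IsScalarTower (PowerSeries k) (LaurentSeries k) V]
    [FiniteDimensional (LaurentSeries k) V]
    (r d : ℕ)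
    (hdim : Module.finrank (LaurentSeries k) V = 2 * d)
    (Φ : V →ₗ[LaurentSeries k] V →ₗ[LaurentSeries k] LaurentSeries k)
    (halt : ∀ v : V, Φ v v = 0)
    (hnondeg : ∀ v : V, (∀ w : V, Φ v w = 0) → v = 0)
    (V'' : Submodule (LaurentSeries k) V)
    (hiso : ∀ x ∈ V'', ∀ y ∈ V'', Φ x y = 0)
    (s : ℕ) (hs : Module.finrank (LaurentSeries k) V'' = s)
    (L : ℤ → Submodule (PowerSeries k) V) (hL : IsXc Φ (2 * r + 2) L) :
    ∃ T W : Submodule (LaurentSeries k) V,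
      -- (1) `V = V″ ⊕ T ⊕ W` and `(V″)^⊥ = V″ ⊕ T`
      (V'' ⊓ (T ⊔ W) = ⊥ ∧ T ⊓ (V'' ⊔ W) = ⊥ ∧ W ⊓ (V'' ⊔ T) = ⊥ ∧ V'' ⊔ T ⊔ W = ⊤) ∧
      perpF Φ V'' = V'' ⊔ T ∧
      -- (2) `W` is isotropic and `(T, W) = 0`
      (∀ x ∈ W, ∀ y ∈ W, Φ x y = 0) ∧
      (∀ x ∈ T, ∀ y ∈ W, Φ x y = 0) ∧
      -- (3) dual bases of `V″` and `W`
      (∃ (z : Module.Basis (Fin s) (LaurentSeries k) V'') (w : Module.Basis (Fin s) (LaurentSeries k) W),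
        ∀ i j : Fin s, Φ (z i : V) (w j : V) = if i = j then 1 else 0) ∧
      -- (4) `L_i = (L_i ∩ V″) ⊕ (L_i ∩ T) ⊕ (L_i ∩ W)` for all `i`
      (∀ i : ℤ,
        L i = (L i ⊓ V''.restrictScalars (PowerSeries k))
            ⊔ (L i ⊓ T.restrictScalars (PowerSeries k))
            ⊔ (L i ⊓ W.restrictScalars (PowerSeries k))) := by
  obtain ⟨T, W, h1, h2, h3, h4, h5, h6⟩ :=
    aux Φ halt (2*r+2) (by omega) s ⊤
      (fun v _ h => hnondeg v (fun y => h y trivial))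
      V'' le_top hiso hs L
      (fun i => (hL.1 i).1)
      (fun i => (hL.1 i).2)
      hL.2.1 hL.2.2.1
      (fun i v _ => by rw [← hL.2.2.2 i]; exact Iff.rfl)
  rw [inf_top_eq] at h2
  exact ⟨T, W, h1, h2, h3, h4, h5, h6⟩
end
end

section
/- For A ∈ Ξ_{n,d}, the transposed matrix Aᵗ (with (Aᵗ)_{ij} = a_{ji}) also lies in Ξ_{n,d}, and d_A − d_{Aᵗ} = (1/4)·( Σ_{i=1}^{n} ( ro(A)_i² − co(A)_i² ) − ( ro(A)_0 − co(A)_0 ) − ( ro(A)_{r+1} − co(A)_{r+1} ) ). -/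
open scoped Classical

noncomputable section

namespace AffMat

/-- Row sum `ro(A)_i = Σ_j a_{ij}`. -/
def ro (A : ℤ → ℤ → ℕ) (i : ℤ) : ℕ := ∑ᶠ j : ℤ, A i j

/-- Column sum `co(A)_j = Σ_i a_{ij}`. -/
def co (A : ℤ → ℤ → ℕ) (j : ℤ) : ℕ := ∑ᶠ i : ℤ, A i j

/-- Membership in `Ξ_{n,d}` (with `n = 2r+2`): a `ℤ×ℤ` matrix with entries in `ℕ` such that
`a_{ij} = a_{-i,-j} = a_{i-n,j-n}`, the entries `a_{00}` and `a_{r+1,r+1}` are odd, and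
`Σ_{i=1}^{n} Σ_{j ∈ ℤ} a_{ij} = 2d+2`. -/
def MemXi (r d : ℕ) (A : ℤ → ℤ → ℕ) : Prop :=
  (∀ i j : ℤ, A i j = A (-i) (-j)) ∧
  (∀ i j : ℤ, A i j = A (i - (2 * r + 2)) (j - (2 * r + 2))) ∧
  Odd (A 0 0) ∧ Odd (A ((r : ℤ) + 1) ((r : ℤ) + 1)) ∧
  (∑ᶠ j : ℤ, ∑ i ∈ Finset.Icc (1 : ℤ) (2 * r + 2), A i j) = 2 * d + 2

/-- `d_A = ½ (Σ_{0 ≤ i ≤ n-1, i ≥ k, j < l} a_{ij} a_{kl} - Σ_{i ≥ 0 > j} a_{ij}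
  - Σ_{i ≥ r+1 > j} a_{ij})`, as a rational number. -/
def dA (r : ℕ) (A : ℤ → ℤ → ℕ) : ℚ :=
  (1 / 2) *
    ((∑ᶠ i : ℤ, ∑ᶠ j : ℤ, ∑ᶠ m : ℤ, ∑ᶠ l : ℤ,
        if 0 ≤ i ∧ i ≤ 2 * (r : ℤ) + 1 ∧ m ≤ i ∧ j < l then ((A i j * A m l : ℕ) : ℚ) else 0)
      - (∑ᶠ i : ℤ, ∑ᶠ j : ℤ, if 0 ≤ i ∧ j < 0 then ((A i j : ℕ) : ℚ) else 0)
      - (∑ᶠ i : ℤ, ∑ᶠ j : ℤ,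
          if (r : ℤ) + 1 ≤ i ∧ j < (r : ℤ) + 1 then ((A i j : ℕ) : ℚ) else 0))

end AffMat

open AffMat

open Function

namespace S14

abbrev Pt := ℤ × ℤ

def nn (r : ℕ) : ℤ := 2 * r + 2

lemma nn_pos (r : ℕ) : 0 < nn r := by unfold nn; positivity

lemma two_le_nn (r : ℕ) : 2 ≤ nn r := by unfold nn; omega

structure Good (r : ℕ) (A : ℤ → ℤ → ℕ) : Prop where
  sym : ∀ i j : ℤ, A i j = A (-i) (-j)
  per : ∀ i j : ℤ, A i j = A (i - nn r) (j - nn r)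
  fin : {P : Pt | 1 ≤ P.1 ∧ P.1 ≤ nn r ∧ A P.1 P.2 ≠ 0}.Finite

variable {r : ℕ} {A : ℤ → ℤ → ℕ}

lemma Good.shift (hG : Good r A) (i j : ℤ) : A (i + nn r) (j + nn r) = A i j := by
  have h := hG.per (i + nn r) (j + nn r)
  rw [show i + nn r - nn r = i by ring, show j + nn r - nn r = j by ring] at h
  exact h

lemma Good.shiftk (hG : Good r A) (k : ℤ) : ∀ i j : ℤ, A (i + nn r * k) (j + nn r * k) = A i j := by
  induction k using Int.induction_on with
  | zero => simp
  | succ m ih =>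
      intro i j
      have : A (i + nn r * (m + 1)) (j + nn r * (m + 1))
          = A (i + nn r * m + nn r) (j + nn r * m + nn r) := by ring_nf
      rw [this, hG.shift, ih]
  | pred m ih =>
      intro i j
      have h2 := hG.per (i + nn r * (-m : ℤ)) (j + nn r * (-m))
      have : A (i + nn r * (-m - 1)) (j + nn r * (-m - 1))
          = A (i + nn r * (-m : ℤ) - nn r) (j + nn r * (-m) - nn r) := by ring_nf
      rw [this, ← h2, ih]

/-- the integer `⌊(x-1)/n⌋`. -/
def ee (r : ℕ) (x : ℤ) : ℤ := (x - 1) / nn r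

lemma ee_mem (r : ℕ) (x : ℤ) : 1 ≤ x - nn r * ee r x ∧ x - nn r * ee r x ≤ nn r := by
  have h := Int.mul_ediv_add_emod (x - 1) (nn r)
  have h1 := Int.emod_nonneg (x - 1) (ne_of_gt (nn_pos r))
  have h2 := Int.emod_lt_of_pos (x - 1) (nn_pos r)
  unfold ee
  omega

lemma ee_add (r : ℕ) (x k : ℤ) : ee r (x + nn r * k) = ee r x + k := by
  unfold ee
  rw [show x + nn r * k - 1 = x - 1 + k * nn r by ring,
    Int.add_mul_ediv_right _ _ (ne_of_gt (nn_pos r))]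

lemma ee_zero_iff (r : ℕ) (x : ℤ) : ee r x = 0 ↔ 1 ≤ x ∧ x ≤ nn r := by
  constructor
  · intro h
    have := ee_mem r x
    rw [h] at this
    simpa using this
  · rintro ⟨h1, h2⟩
    have hm := ee_mem r x
    have hn := two_le_nn r
    rcases lt_trichotomy (ee r x) 0 with h | h | h
    · nlinarith [hm.1, hm.2]
    · exact h
    · nlinarith [hm.1, hm.2]

lemma Good.baseA (hG : Good r A) (P : Pt) :
    A (P.1 - nn r * ee r P.1) (P.2 - nn r * ee r P.1) = A P.1 P.2 := by
  have := hG.shiftk (ee r P.1) (P.1 - nn r * ee r P.1) (P.2 - nn r * ee r P.1)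
  rw [show P.1 - nn r * ee r P.1 + nn r * ee r P.1 = P.1 by ring,
    show P.2 - nn r * ee r P.1 + nn r * ee r P.1 = P.2 by ring] at this
  exact this.symm

lemma Good.boundB (hG : Good r A) :
    ∃ B : ℤ, ∀ P : Pt, (1 ≤ P.1 ∧ P.1 ≤ nn r ∧ A P.1 P.2 ≠ 0) → |P.1| ≤ B ∧ |P.2| ≤ B := by
  have hfin : ((fun P : Pt => |P.1| ⊔ |P.2|) '' {P : Pt | 1 ≤ P.1 ∧ P.1 ≤ nn r ∧ A P.1 P.2 ≠ 0}).Finite :=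
    hG.fin.image _
  obtain ⟨B, hB⟩ := hfin.bddAbove
  refine ⟨B, fun P hP => ?_⟩
  have := hB (Set.mem_image_of_mem _ hP)
  constructor
  · exact le_trans (le_max_left _ _) this
  · exact le_trans (le_max_right _ _) this

lemma Good.fin_region (hG : Good r A) (u v : Bool) (c c' : ℤ) :
    {P : Pt | A P.1 P.2 ≠ 0 ∧ c ≤ (cond u P.1 P.2) ∧ (cond v P.1 P.2) ≤ c'}.Finite := by
  obtain ⟨B, hB⟩ := hG.boundB
  set K1 : ℤ := min (c - B) 0 with hK1
  set K2 : ℤ := max (c' + B) 0 with hK2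
  refine Set.Finite.subset
    ((hG.fin.prod (Set.finite_Icc K1 K2)).image
      (fun z : Pt × ℤ => (z.1.1 + nn r * z.2, z.1.2 + nn r * z.2))) ?_
  rintro ⟨p1, p2⟩ ⟨hne, h1, h2⟩
  simp only [Set.mem_setOf_eq] at hne h1 h2 ⊢
  set k : ℤ := ee r (p1 : ℤ) with hk
  have hQA : A (p1 - nn r * k) (p2 - nn r * k) ≠ 0 := by
    exact fun h => hne ((hG.baseA (p1, p2)).symm.trans h)
  have hQmem : ((p1 - nn r * k, p2 - nn r * k) : Pt)
      ∈ {P : Pt | 1 ≤ P.1 ∧ P.1 ≤ nn r ∧ A P.1 P.2 ≠ 0} :=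
    ⟨(ee_mem r p1).1, (ee_mem r p1).2, hQA⟩
  obtain ⟨hB1, hB2⟩ := hB _ hQmem
  simp only [abs_le] at hB1 hB2
  have hlo : c - B ≤ nn r * k := by
    cases u <;> simp only [cond_true, cond_false] at h1 <;> omega
  have hhi : nn r * k ≤ c' + B := by
    cases v <;> simp only [cond_true, cond_false] at h2 <;> omega
  have hn2 := two_le_nn r
  have hkIcc : k ∈ Set.Icc K1 K2 := by
    constructor
    · rcases le_or_gt 0 k with h | h
      · omega
      · have : nn r * k ≤ k := by nlinarith
        omega
    · rcases le_or_gt 0 k with h | h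
      · have : k ≤ nn r * k := by nlinarith
        omega
      · omega
  refine ⟨((p1 - nn r * k, p2 - nn r * k), k), ⟨hQmem, hkIcc⟩, ?_⟩
  simp only [Prod.mk.injEq]
  constructor <;> ring


/-! ### Region finiteness corollaries -/

lemma Good.fin_strip1 (hG : Good r A) (c c' : ℤ) :
    {P : Pt | A P.1 P.2 ≠ 0 ∧ c ≤ P.1 ∧ P.1 ≤ c'}.Finite := by
  simpa using hG.fin_region true true c c'

lemma Good.fin_strip2 (hG : Good r A) (c c' : ℤ) :
    {P : Pt | A P.1 P.2 ≠ 0 ∧ c ≤ P.2 ∧ P.2 ≤ c'}.Finite := by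
  simpa using hG.fin_region false false c c'

lemma Good.fin_SE (hG : Good r A) (c c' : ℤ) :
    {P : Pt | A P.1 P.2 ≠ 0 ∧ c ≤ P.1 ∧ P.2 ≤ c'}.Finite := by
  simpa using hG.fin_region true false c c'

lemma Good.fin_NW (hG : Good r A) (c c' : ℤ) :
    {P : Pt | A P.1 P.2 ≠ 0 ∧ c ≤ P.2 ∧ P.1 ≤ c'}.Finite := by
  simpa using hG.fin_region false true c c'

lemma Good.fin_row (hG : Good r A) (p : ℤ) : (support (A p)).Finite := by
  have := (hG.fin_strip1 p p).image Prod.snd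
  refine this.subset ?_
  intro q hq
  exact ⟨(p, q), ⟨hq, le_refl _, le_refl _⟩, rfl⟩

lemma Good.fin_col (hG : Good r A) (q : ℤ) : (support (fun i => A i q)).Finite := by
  have := (hG.fin_strip2 q q).image Prod.fst
  refine this.subset ?_
  intro p hp
  exact ⟨(p, q), ⟨hp, le_refl _, le_refl _⟩, rfl⟩

/-! ### The rational-valued entry function -/

def bq (A : ℤ → ℤ → ℕ) (P : Pt) : ℚ := (A P.1 P.2 : ℚ)

def bbq (A : ℤ → ℤ → ℕ) (PP : Pt × Pt) : ℚ := bq A PP.1 * bq A PP.2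

def ind (p : Prop) : ℚ := if p then 1 else 0

lemma bq_ne_zero {P : Pt} : bq A P ≠ 0 ↔ A P.1 P.2 ≠ 0 := by
  simp [bq]

lemma ind_mul_ne_zero {c : Prop} {x : ℚ} (h : x * ind c ≠ 0) : x ≠ 0 ∧ c := by
  by_cases hc : c
  · exact ⟨by simpa [ind, hc] using h, hc⟩
  · simp [ind, hc] at h

/-- support helper for point sums -/
lemma fin_point {S : Set Pt} (hS : S.Finite) {f : Pt → ℚ}
    (hf : ∀ P, f P ≠ 0 → P ∈ S) : (support f).Finite :=
  hS.subset fun P hP => hf P hP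

/-- support helper for pair sums -/
lemma fin_pair {S : Set Pt} {Q : Pt → Set Pt} (hS : S.Finite)
    (hQ : ∀ P ∈ S, (Q P).Finite) {f : Pt × Pt → ℚ}
    (hf : ∀ PP, f PP ≠ 0 → PP.1 ∈ S ∧ PP.2 ∈ Q PP.1) : (support f).Finite := by
  have hbig : (⋃ P ∈ S, ({P} : Set Pt) ×ˢ Q P).Finite :=
    hS.biUnion fun P hP => (Set.finite_singleton P).prod (hQ P hP)
  refine hbig.subset ?_
  intro PP hPP
  obtain ⟨h1, h2⟩ := hf PP hPP
  simp only [Set.mem_iUnion]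
  refine ⟨PP.1, h1, ?_⟩
  simp only [Set.singleton_prod, Set.mem_image]
  exact ⟨PP.2, h2, by simp⟩

/-! ### finsum curry helpers -/

lemma curry2 {M : Type*} [AddCommMonoid M] (f : Pt → M) (hf : (support f).Finite) :
    ∑ᶠ P : Pt, f P = ∑ᶠ i : ℤ, ∑ᶠ j : ℤ, f (i, j) := finsum_curry f hf

lemma curry4 (f : Pt × Pt → ℚ) (hf : (support f).Finite) :
    ∑ᶠ PP : Pt × Pt, f PP = ∑ᶠ i : ℤ, ∑ᶠ j : ℤ, ∑ᶠ m : ℤ, ∑ᶠ l : ℤ, f ((i, j), (m, l)) := by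
  rw [finsum_curry f hf]
  have hsupP : (support fun P : Pt => ∑ᶠ P' : Pt, f (P, P')).Finite := by
    refine ((hf.image Prod.fst)).subset ?_
    intro P hP
    rw [mem_support] at hP
    by_contra hc
    refine hP (finsum_eq_zero_of_forall_eq_zero fun P' => ?_)
    by_contra hc2
    exact hc ⟨(P, P'), hc2, rfl⟩
  rw [finsum_curry _ hsupP]
  refine finsum_congr fun i => ?_
  have hsupj : (support fun j : ℤ => ∑ᶠ P' : Pt, f ((i, j), P')).Finite := by
    refine ((hf.image (fun PP => PP.1.2))).subset ?_
    intro j hj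
    rw [mem_support] at hj
    by_contra hc
    refine hj (finsum_eq_zero_of_forall_eq_zero fun P' => ?_)
    by_contra hc2
    exact hc ⟨((i, j), P'), hc2, rfl⟩
  refine finsum_congr fun j => ?_
  have hsec : (support fun P' : Pt => f ((i, j), P')).Finite := by
    refine ((hf.image Prod.snd)).subset ?_
    intro P' hP'
    rw [mem_support] at hP'
    exact ⟨((i, j), P'), hP', rfl⟩
  exact finsum_curry _ hsec


/-! ### Equivs on `Pt` -/

def negE : Pt ≃ Pt where
  toFun P := (-P.1, -P.2)
  invFun P := (-P.1, -P.2)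
  left_inv := by rintro ⟨a, b⟩; simp
  right_inv := by rintro ⟨a, b⟩; simp

def shE (t : ℤ) : Pt ≃ Pt where
  toFun P := (P.1 + t, P.2 + t)
  invFun P := (P.1 - t, P.2 - t)
  left_inv := by rintro ⟨a, b⟩; simp
  right_inv := by rintro ⟨a, b⟩; simp

def refE (s : ℤ) : Pt ≃ Pt where
  toFun P := (s - P.1, s - P.2)
  invFun P := (s - P.1, s - P.2)
  left_inv := by rintro ⟨a, b⟩; simp
  right_inv := by rintro ⟨a, b⟩; simp

lemma Good.bq_neg (hG : Good r A) (P : Pt) : bq A (negE P) = bq A P := by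
  unfold bq negE
  simp [← hG.sym]

lemma Good.bq_shn (hG : Good r A) (P : Pt) : bq A (shE (nn r) P) = bq A P := by
  unfold bq shE
  simp [hG.shift]

lemma Good.bq_shmn (hG : Good r A) (P : Pt) : bq A (shE (-(nn r)) P) = bq A P := by
  unfold bq shE
  simp only [Equiv.coe_fn_mk]
  rw [show P.1 + -nn r = P.1 - nn r by ring, show P.2 + -nn r = P.2 - nn r by ring,
    ← hG.per]

lemma Good.bq_ref (hG : Good r A) (P : Pt) : bq A (refE (nn r) P) = bq A P := by
  unfold bq refE
  simp only [Equiv.coe_fn_mk]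
  rw [show nn r - P.1 = -P.1 + nn r by ring, show nn r - P.2 = -P.2 + nn r by ring,
    hG.shift, ← hG.sym]

/-! ### ind lemmas -/

@[simp] lemma ind_True : ind True = 1 := by simp [ind]

@[simp] lemma ind_False : ind False = 0 := by simp [ind]

lemma ind_congr {a b : Prop} (h : a ↔ b) : ind a = ind b := by
  unfold ind; simp [h]

lemma ind_key' {N : ℤ} (hN : 2 ≤ N) (x : ℤ) :
    ind (0 ≤ x ∧ x ≤ N - 1) = ind (0 ≤ x) - ind (N ≤ x) := by
  unfold ind
  split_ifs <;> first | ring1 | (exfalso; omega)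

lemma ind_key (r : ℕ) (x : ℤ) :
    ind (0 ≤ x ∧ x ≤ nn r - 1) = ind (0 ≤ x) - ind (nn r ≤ x) :=
  ind_key' (two_le_nn r) x

/-! ### The pair sums -/

def WW (A : ℤ → ℤ → ℕ) (C : Pt × Pt → Prop) : ℚ :=
  ∑ᶠ PP : Pt × Pt, bbq A PP * ind (C PP)

def VV (A : ℤ → ℤ → ℕ) (w : Pt → ℚ) : ℚ := ∑ᶠ P : Pt, bq A P * w P

lemma WW_congr {C C' : Pt × Pt → Prop} (h : ∀ PP, C PP ↔ C' PP) : WW A C = WW A C' := by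
  unfold WW
  exact finsum_congr fun PP => by rw [ind_congr (h PP)]

lemma WW_equiv (e : Pt ≃ Pt) (hb : ∀ P, bq A (e P) = bq A P) (C : Pt × Pt → Prop) :
    WW A (fun PP => C (e PP.1, e PP.2)) = WW A C := by
  unfold WW
  rw [← finsum_comp_equiv (e.prodCongr e) (f := fun PP => bbq A PP * ind (C PP))]
  refine finsum_congr fun PP => ?_
  simp only [Equiv.prodCongr_apply, Prod.map]
  unfold bbq
  rw [hb, hb]

lemma VV_equiv (e : Pt ≃ Pt) (hb : ∀ P, bq A (e P) = bq A P) (w : Pt → ℚ) :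
    VV A (fun P => w (e P)) = VV A w := by
  unfold VV
  rw [← finsum_comp_equiv e (f := fun P => bq A P * w P)]
  exact finsum_congr fun P => by rw [hb]

/-! ### row and column sums -/

lemma Good.ro_cast (hG : Good r A) (p : ℤ) :
    ((ro A p : ℚ)) = ∑ᶠ q : ℤ, bq A (p, q) := by
  unfold ro bq
  exact (Nat.castAddMonoidHom ℚ).map_finsum (hG.fin_row p)

lemma Good.co_cast (hG : Good r A) (q : ℤ) :
    ((co A q : ℚ)) = ∑ᶠ i : ℤ, bq A (i, q) := by
  unfold co bq
  exact (Nat.castAddMonoidHom ℚ).map_finsum (hG.fin_col q)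

lemma Good.row_sum (hG : Good r A) (p : ℤ) :
    ∑ᶠ P : Pt, bq A P * ind (P.1 = p) = (ro A p : ℚ) := by
  have hsupp : (support fun P : Pt => bq A P * ind (P.1 = p)).Finite := by
    refine fin_point (hG.fin_strip1 p p) fun P hP => ?_
    obtain ⟨h1, h2⟩ := ind_mul_ne_zero hP
    exact ⟨bq_ne_zero.1 h1, le_of_eq h2.symm, le_of_eq h2⟩
  rw [curry2 _ hsupp]
  rw [finsum_eq_single _ p]
  · rw [hG.ro_cast]
    exact finsum_congr fun q => by simp [ind]
  · intro i hi
    refine finsum_eq_zero_of_forall_eq_zero fun q => ?_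
    simp [ind, hi]

lemma Good.col_sum (hG : Good r A) (q : ℤ) :
    ∑ᶠ P : Pt, bq A P * ind (P.2 = q) = (co A q : ℚ) := by
  have hsupp : (support fun P : Pt => bq A P * ind (P.2 = q)).Finite := by
    refine fin_point (hG.fin_strip2 q q) fun P hP => ?_
    obtain ⟨h1, h2⟩ := ind_mul_ne_zero hP
    exact ⟨bq_ne_zero.1 h1, le_of_eq h2.symm, le_of_eq h2⟩
  rw [curry2 _ hsupp]
  rw [hG.co_cast]
  refine finsum_congr fun i => ?_
  rw [finsum_eq_single _ q]
  · simp [ind]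
  · intro l hl
    simp [ind, hl]

lemma Good.ro_per (hG : Good r A) (p : ℤ) : ro A (p + nn r) = ro A p := by
  unfold ro
  rw [← finsum_comp_equiv (Equiv.addRight (nn r)) (f := fun j => A (p + nn r) j)]
  exact finsum_congr fun j => by simpa using hG.shift p j

lemma Good.co_per (hG : Good r A) (q : ℤ) : co A (q + nn r) = co A q := by
  unfold co
  rw [← finsum_comp_equiv (Equiv.addRight (nn r)) (f := fun i => A i (q + nn r))]
  exact finsum_congr fun i => by simpa using hG.shift i q


/-! ### the master pointwise identity -/

lemma master (r : ℕ) (p q p' q' : ℤ) :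
    ind (0 ≤ p ∧ p ≤ nn r - 1 ∧ p' ≤ p ∧ q < q')
      + ind (0 ≤ p ∧ p ≤ nn r - 1 ∧ p ≤ p' ∧ q' < q)
      - ind (0 ≤ q ∧ q ≤ nn r - 1 ∧ q' ≤ q ∧ p < p')
      - ind (0 ≤ q ∧ q ≤ nn r - 1 ∧ q ≤ q' ∧ p' < p)
    = ind (0 ≤ p ∧ p ≤ nn r - 1 ∧ p' = p)
      - ind (0 ≤ p ∧ p ≤ nn r - 1 ∧ q' = q)
      + (ind (0 ≤ p) - ind (0 ≤ q)) * (ind (q ≤ q' ∧ p' < p) + ind (q' ≤ q ∧ p < p'))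
      - (ind (nn r ≤ p) - ind (nn r ≤ q)) * (ind (q ≤ q' ∧ p' < p) + ind (q' ≤ q ∧ p < p')) := by
  have k1 := ind_key r p
  have k2 := ind_key r q
  rcases lt_trichotomy p' p with h | h | h <;> rcases lt_trichotomy q' q with h2 | h2 | h2
  · -- p' < p, q' < q
    simp only [le_of_lt h, le_of_lt h2, not_le.mpr h, not_le.mpr h2, lt_asymm h, lt_asymm h2,
      h, h2, ne_of_lt h, ne_of_lt h2, and_true, true_and, and_false, false_and,
      ind_True, ind_False]
    ring1
  · -- p' < p, q' = q
    subst h2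
    simp only [le_of_lt h, le_refl, not_le.mpr h, lt_asymm h, lt_irrefl, h, ne_of_lt h,
      and_true, true_and, and_false, false_and, ind_True, ind_False]
    rw [k1, k2]
    ring1
  · -- p' < p, q < q'
    simp only [le_of_lt h, le_of_lt h2, not_le.mpr h, not_le.mpr h2, lt_asymm h, lt_asymm h2,
      h, h2, ne_of_lt h, ne_of_gt h2, and_true, true_and, and_false, false_and,
      ind_True, ind_False]
    rw [k1, k2]
    ring1
  · -- p' = p, q' < q
    subst h
    simp only [le_of_lt h2, le_refl, not_le.mpr h2, lt_asymm h2, lt_irrefl, h2, ne_of_lt h2,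
      and_true, true_and, and_false, false_and, ind_True, ind_False]
    ring1
  · -- p' = p, q' = q
    subst h
    subst h2
    simp only [le_refl, lt_irrefl, and_true, true_and, and_false, false_and,
      ind_True, ind_False]
    ring1
  · -- p' = p, q < q'
    subst h
    simp only [le_of_lt h2, le_refl, not_le.mpr h2, lt_asymm h2, lt_irrefl, h2, ne_of_gt h2,
      and_true, true_and, and_false, false_and, ind_True, ind_False]
    ring1
  · -- p < p', q' < q
    simp only [le_of_lt h, le_of_lt h2, not_le.mpr h, not_le.mpr h2, lt_asymm h, lt_asymm h2,
      h, h2, ne_of_gt h, ne_of_lt h2, and_true, true_and, and_false, false_and,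
      ind_True, ind_False]
    rw [k1, k2]
    ring1
  · -- p < p', q' = q
    subst h2
    simp only [le_of_lt h, le_refl, not_le.mpr h, lt_asymm h, lt_irrefl, h, ne_of_gt h,
      and_true, true_and, and_false, false_and, ind_True, ind_False]
    rw [k1, k2]
    ring1
  · -- p < p', q < q'
    simp only [le_of_lt h, le_of_lt h2, not_le.mpr h, not_le.mpr h2, lt_asymm h, lt_asymm h2,
      h, h2, ne_of_gt h, ne_of_gt h2, and_true, true_and, and_false, false_and,
      ind_True, ind_False]
    ring1


@[simp] lemma negE_apply (P : Pt) : negE P = (-P.1, -P.2) := rfl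
@[simp] lemma shE_apply (t : ℤ) (P : Pt) : shE t P = (P.1 + t, P.2 + t) := rfl
@[simp] lemma refE_apply (s : ℤ) (P : Pt) : refE s P = (s - P.1, s - P.2) := rfl

/-! ### more ind helpers -/

lemma ind_sub_ne {a b : Prop} (h : ind a - ind b ≠ 0) : (a ∧ ¬b) ∨ (b ∧ ¬a) := by
  by_cases ha : a <;> by_cases hb : b <;> simp [ind, ha, hb] at h ⊢

lemma ind_add_ne {a b : Prop} (h : ind a + ind b ≠ 0) : a ∨ b := by
  by_cases ha : a <;> by_cases hb : b <;> simp [ind, ha, hb] at h ⊢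

lemma ind_win {N : ℤ} (hN : 2 ≤ N) (x : ℤ) (c : Prop) :
    ind (1 ≤ x ∧ x ≤ N ∧ c)
      = ind (0 ≤ x ∧ x ≤ N - 1 ∧ c) + ind (N ≤ x ∧ x ≤ N ∧ c) - ind (0 ≤ x ∧ x ≤ 0 ∧ c) := by
  by_cases hc : c
  · simp only [hc, and_true]
    unfold ind
    split_ifs <;> first | ring1 | (exfalso; omega)
  · simp only [hc, and_false]
    simp [ind]

/-! ### finsum combination helpers -/

lemma finsum_addsub3 {α : Type*} {f g h : α → ℚ} (hf : (support f).Finite)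
    (hg : (support g).Finite) (hh : (support h).Finite) :
    ∑ᶠ x, (f x + g x - h x) = (∑ᶠ x, f x) + (∑ᶠ x, g x) - ∑ᶠ x, h x := by
  have s12 : (support fun x => f x + g x).Finite := ((hf.union hg).subset (support_add f g))
  rw [finsum_sub_distrib s12 hh, finsum_add_distrib hf hg]

lemma finsum_comb4a {α : Type*} {f1 f2 f3 f4 : α → ℚ} (h1 : (support f1).Finite)
    (h2 : (support f2).Finite) (h3 : (support f3).Finite) (h4 : (support f4).Finite) :
    ∑ᶠ x, (f1 x + f2 x - f3 x - f4 x)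
      = (∑ᶠ x, f1 x) + (∑ᶠ x, f2 x) - (∑ᶠ x, f3 x) - ∑ᶠ x, f4 x := by
  have s12 : (support fun x => f1 x + f2 x).Finite := ((h1.union h2).subset (support_add f1 f2))
  have s123 : (support fun x => f1 x + f2 x - f3 x).Finite :=
    ((s12.union h3).subset (support_sub _ f3))
  rw [finsum_sub_distrib s123 h4, finsum_sub_distrib s12 h3, finsum_add_distrib h1 h2]

lemma finsum_comb4b {α : Type*} {f1 f2 f3 f4 : α → ℚ} (h1 : (support f1).Finite)
    (h2 : (support f2).Finite) (h3 : (support f3).Finite) (h4 : (support f4).Finite) :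
    ∑ᶠ x, (f1 x - f2 x + f3 x - f4 x)
      = (∑ᶠ x, f1 x) - (∑ᶠ x, f2 x) + (∑ᶠ x, f3 x) - ∑ᶠ x, f4 x := by
  have s12 : (support fun x => f1 x - f2 x).Finite := ((h1.union h2).subset (support_sub f1 f2))
  have s123 : (support fun x => f1 x - f2 x + f3 x).Finite :=
    ((s12.union h3).subset (support_add _ f3))
  rw [finsum_sub_distrib s123 h4, finsum_add_distrib s12 h3, finsum_sub_distrib h1 h2]

/-! ### conditions -/

def CN (r : ℕ) : Pt × Pt → Prop := fun PP =>
  0 ≤ PP.1.1 ∧ PP.1.1 ≤ nn r - 1 ∧ PP.2.1 ≤ PP.1.1 ∧ PP.1.2 < PP.2.2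

def CN' (r : ℕ) : Pt × Pt → Prop := fun PP =>
  0 ≤ PP.1.1 ∧ PP.1.1 ≤ nn r - 1 ∧ PP.1.1 ≤ PP.2.1 ∧ PP.2.2 < PP.1.2

def CM (r : ℕ) : Pt × Pt → Prop := fun PP =>
  0 ≤ PP.1.2 ∧ PP.1.2 ≤ nn r - 1 ∧ PP.2.2 ≤ PP.1.2 ∧ PP.1.1 < PP.2.1

def CM' (r : ℕ) : Pt × Pt → Prop := fun PP =>
  0 ≤ PP.1.2 ∧ PP.1.2 ≤ nn r - 1 ∧ PP.1.2 ≤ PP.2.2 ∧ PP.2.1 < PP.1.1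

def CG1 (r : ℕ) : Pt × Pt → Prop := fun PP =>
  0 ≤ PP.1.1 ∧ PP.1.1 ≤ nn r - 1 ∧ PP.2.1 = PP.1.1

def CG2 (r : ℕ) : Pt × Pt → Prop := fun PP =>
  0 ≤ PP.1.1 ∧ PP.1.1 ≤ nn r - 1 ∧ PP.2.2 = PP.1.2

def Gfac : Pt × Pt → ℚ := fun PP =>
  ind (PP.1.2 ≤ PP.2.2 ∧ PP.2.1 < PP.1.1) + ind (PP.2.2 ≤ PP.1.2 ∧ PP.1.1 < PP.2.1)

def Dq (A : ℤ → ℤ → ℕ) (c : ℤ) : ℚ :=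
  ∑ᶠ PP : Pt × Pt, bbq A PP * ((ind (c ≤ PP.1.1) - ind (c ≤ PP.1.2)) * Gfac PP)

/-! ### support lemmas -/

lemma bbq_ne {PP : Pt × Pt} (h : bbq A PP ≠ 0) :
    A PP.1.1 PP.1.2 ≠ 0 ∧ A PP.2.1 PP.2.2 ≠ 0 := by
  rw [bbq, mul_ne_zero_iff, bq_ne_zero, bq_ne_zero] at h
  exact h

lemma Good.finW (hG : Good r A) {C : Pt × Pt → Prop} {S : Set Pt} (hS : S.Finite)
    {Q : Pt → Set Pt} (hQ : ∀ P ∈ S, (Q P).Finite)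
    (hC : ∀ PP : Pt × Pt, C PP → A PP.1.1 PP.1.2 ≠ 0 → A PP.2.1 PP.2.2 ≠ 0 →
      PP.1 ∈ S ∧ PP.2 ∈ Q PP.1) :
    (support fun PP : Pt × Pt => bbq A PP * ind (C PP)).Finite := by
  refine fin_pair hS hQ fun PP hPP => ?_
  obtain ⟨hb, hc⟩ := ind_mul_ne_zero hPP
  obtain ⟨h1, h2⟩ := bbq_ne hb
  exact hC PP hc h1 h2

lemma Good.finNN (hG : Good r A) (a b : ℤ) :
    (support fun PP : Pt × Pt =>
      bbq A PP * ind (a ≤ PP.1.1 ∧ PP.1.1 ≤ b ∧ PP.2.1 ≤ PP.1.1 ∧ PP.1.2 < PP.2.2)).Finite := by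
  refine hG.finW (hG.fin_strip1 a b) (fun P _ => hG.fin_NW (P.2 + 1) P.1) ?_
  rintro ⟨P, P'⟩ ⟨hc1, hc2, hc3, hc4⟩ h1 h2
  exact ⟨⟨h1, hc1, hc2⟩, h2, by omega, hc3⟩

lemma Good.finNN' (hG : Good r A) (a b : ℤ) :
    (support fun PP : Pt × Pt =>
      bbq A PP * ind (a ≤ PP.1.1 ∧ PP.1.1 ≤ b ∧ PP.1.1 ≤ PP.2.1 ∧ PP.2.2 < PP.1.2)).Finite := by
  refine hG.finW (hG.fin_strip1 a b) (fun P _ => hG.fin_SE P.1 (P.2 - 1)) ?_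
  rintro ⟨P, P'⟩ ⟨hc1, hc2, hc3, hc4⟩ h1 h2
  exact ⟨⟨h1, hc1, hc2⟩, h2, hc3, by omega⟩

lemma Good.finMM (hG : Good r A) (a b : ℤ) :
    (support fun PP : Pt × Pt =>
      bbq A PP * ind (a ≤ PP.1.2 ∧ PP.1.2 ≤ b ∧ PP.2.2 ≤ PP.1.2 ∧ PP.1.1 < PP.2.1)).Finite := by
  refine hG.finW (hG.fin_strip2 a b) (fun P _ => hG.fin_SE (P.1 + 1) P.2) ?_
  rintro ⟨P, P'⟩ ⟨hc1, hc2, hc3, hc4⟩ h1 h2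
  exact ⟨⟨h1, hc1, hc2⟩, h2, by omega, hc3⟩

lemma Good.finMM' (hG : Good r A) (a b : ℤ) :
    (support fun PP : Pt × Pt =>
      bbq A PP * ind (a ≤ PP.1.2 ∧ PP.1.2 ≤ b ∧ PP.1.2 ≤ PP.2.2 ∧ PP.2.1 < PP.1.1)).Finite := by
  refine hG.finW (hG.fin_strip2 a b) (fun P _ => hG.fin_NW P.2 (P.1 - 1)) ?_
  rintro ⟨P, P'⟩ ⟨hc1, hc2, hc3, hc4⟩ h1 h2
  exact ⟨⟨h1, hc1, hc2⟩, h2, hc3, by omega⟩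

lemma Good.finG1 (hG : Good r A) :
    (support fun PP : Pt × Pt => bbq A PP * ind (CG1 r PP)).Finite := by
  refine hG.finW (hG.fin_strip1 0 (nn r - 1)) (fun P _ => hG.fin_strip1 P.1 P.1) ?_
  rintro ⟨P, P'⟩ ⟨hc1, hc2, hc3⟩ h1 h2
  exact ⟨⟨h1, hc1, hc2⟩, h2, le_of_eq hc3.symm, le_of_eq hc3⟩

lemma Good.finG2 (hG : Good r A) :
    (support fun PP : Pt × Pt => bbq A PP * ind (CG2 r PP)).Finite := by
  refine hG.finW (hG.fin_strip1 0 (nn r - 1)) (fun P _ => hG.fin_strip2 P.2 P.2) ?_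
  rintro ⟨P, P'⟩ ⟨hc1, hc2, hc3⟩ h1 h2
  exact ⟨⟨h1, hc1, hc2⟩, h2, le_of_eq hc3.symm, le_of_eq hc3⟩

lemma Good.finDq (hG : Good r A) (c : ℤ) :
    (support fun PP : Pt × Pt =>
      bbq A PP * ((ind (c ≤ PP.1.1) - ind (c ≤ PP.1.2)) * Gfac PP)).Finite := by
  refine fin_pair (S := {P : Pt | A P.1 P.2 ≠ 0 ∧ c ≤ P.1 ∧ P.2 ≤ c - 1}
      ∪ {P : Pt | A P.1 P.2 ≠ 0 ∧ c ≤ P.2 ∧ P.1 ≤ c - 1})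
    ((hG.fin_SE c (c - 1)).union (hG.fin_NW c (c - 1)))
    (Q := fun P => {P' : Pt | A P'.1 P'.2 ≠ 0 ∧ P.2 ≤ P'.2 ∧ P'.1 ≤ P.1 - 1}
      ∪ {P' : Pt | A P'.1 P'.2 ≠ 0 ∧ P.1 + 1 ≤ P'.1 ∧ P'.2 ≤ P.2})
    (fun P _ => (hG.fin_NW P.2 (P.1 - 1)).union (hG.fin_SE (P.1 + 1) P.2)) ?_
  rintro ⟨P, P'⟩ hne
  rw [mul_ne_zero_iff] at hne
  obtain ⟨hb, hrest⟩ := hne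
  rw [mul_ne_zero_iff] at hrest
  obtain ⟨hd, hg⟩ := hrest
  obtain ⟨h1, h2⟩ := bbq_ne hb
  have hstr := ind_sub_ne hd
  have hg' : ind ((P, P').1.2 ≤ (P, P').2.2 ∧ (P, P').2.1 < (P, P').1.1)
      + ind ((P, P').2.2 ≤ (P, P').1.2 ∧ (P, P').1.1 < (P, P').2.1) ≠ 0 := hg
  have hgf := ind_add_ne hg'
  constructor
  · rcases hstr with ⟨ha, hb'⟩ | ⟨ha, hb'⟩
    · exact Or.inl ⟨h1, ha, by omega⟩
    · exact Or.inr ⟨h1, ha, by omega⟩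
  · rcases hgf with ⟨ha, hb'⟩ | ⟨ha, hb'⟩
    · exact Or.inl ⟨h2, ha, by omega⟩
    · exact Or.inr ⟨h2, by omega, ha⟩

/-! ### window-shift lemmas -/

lemma Good.win1 (hG : Good r A) {R : Pt × Pt → Prop}
    (hR : ∀ PP : Pt × Pt,
      R ((PP.1.1 + nn r, PP.1.2 + nn r), (PP.2.1 + nn r, PP.2.2 + nn r)) ↔ R PP)
    (hfin : ∀ a b : ℤ,
      (support fun PP : Pt × Pt => bbq A PP * ind (a ≤ PP.1.1 ∧ PP.1.1 ≤ b ∧ R PP)).Finite) :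
    WW A (fun PP => 1 ≤ PP.1.1 ∧ PP.1.1 ≤ nn r ∧ R PP)
      = WW A (fun PP => 0 ≤ PP.1.1 ∧ PP.1.1 ≤ nn r - 1 ∧ R PP) := by
  have key : ∀ PP : Pt × Pt, bbq A PP * ind (1 ≤ PP.1.1 ∧ PP.1.1 ≤ nn r ∧ R PP)
      = bbq A PP * ind (0 ≤ PP.1.1 ∧ PP.1.1 ≤ nn r - 1 ∧ R PP)
        + bbq A PP * ind (nn r ≤ PP.1.1 ∧ PP.1.1 ≤ nn r ∧ R PP)
        - bbq A PP * ind (0 ≤ PP.1.1 ∧ PP.1.1 ≤ 0 ∧ R PP) := by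
    intro PP
    rw [ind_win (two_le_nn r) PP.1.1 (R PP)]
    ring1
  have hmid : WW A (fun PP => nn r ≤ PP.1.1 ∧ PP.1.1 ≤ nn r ∧ R PP)
      = WW A (fun PP => 0 ≤ PP.1.1 ∧ PP.1.1 ≤ 0 ∧ R PP) := by
    have h2 := WW_equiv (A := A) (shE (nn r)) hG.bq_shn
      (fun PP => nn r ≤ PP.1.1 ∧ PP.1.1 ≤ nn r ∧ R PP)
    rw [← h2]
    refine WW_congr fun PP => ?_
    simp only [shE_apply]
    have hR' := hR PP
    constructor
    · rintro ⟨ha, hb, hc⟩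
      exact ⟨by omega, by omega, hR'.1 hc⟩
    · rintro ⟨ha, hb, hc⟩
      exact ⟨by omega, by omega, hR'.2 hc⟩
  unfold WW at hmid ⊢
  rw [finsum_congr key, finsum_addsub3 (hfin 0 (nn r - 1)) (hfin (nn r) (nn r)) (hfin 0 0), hmid]
  ring1

lemma Good.win2 (hG : Good r A) {R : Pt × Pt → Prop}
    (hR : ∀ PP : Pt × Pt,
      R ((PP.1.1 + nn r, PP.1.2 + nn r), (PP.2.1 + nn r, PP.2.2 + nn r)) ↔ R PP)
    (hfin : ∀ a b : ℤ,
      (support fun PP : Pt × Pt => bbq A PP * ind (a ≤ PP.1.2 ∧ PP.1.2 ≤ b ∧ R PP)).Finite) :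
    WW A (fun PP => 1 ≤ PP.1.2 ∧ PP.1.2 ≤ nn r ∧ R PP)
      = WW A (fun PP => 0 ≤ PP.1.2 ∧ PP.1.2 ≤ nn r - 1 ∧ R PP) := by
  have key : ∀ PP : Pt × Pt, bbq A PP * ind (1 ≤ PP.1.2 ∧ PP.1.2 ≤ nn r ∧ R PP)
      = bbq A PP * ind (0 ≤ PP.1.2 ∧ PP.1.2 ≤ nn r - 1 ∧ R PP)
        + bbq A PP * ind (nn r ≤ PP.1.2 ∧ PP.1.2 ≤ nn r ∧ R PP)
        - bbq A PP * ind (0 ≤ PP.1.2 ∧ PP.1.2 ≤ 0 ∧ R PP) := by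
    intro PP
    rw [ind_win (two_le_nn r) PP.1.2 (R PP)]
    ring1
  have hmid : WW A (fun PP => nn r ≤ PP.1.2 ∧ PP.1.2 ≤ nn r ∧ R PP)
      = WW A (fun PP => 0 ≤ PP.1.2 ∧ PP.1.2 ≤ 0 ∧ R PP) := by
    have h2 := WW_equiv (A := A) (shE (nn r)) hG.bq_shn
      (fun PP => nn r ≤ PP.1.2 ∧ PP.1.2 ≤ nn r ∧ R PP)
    rw [← h2]
    refine WW_congr fun PP => ?_
    simp only [shE_apply]
    have hR' := hR PP
    constructor
    · rintro ⟨ha, hb, hc⟩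
      exact ⟨by omega, by omega, hR'.1 hc⟩
    · rintro ⟨ha, hb, hc⟩
      exact ⟨by omega, by omega, hR'.2 hc⟩
  unfold WW at hmid ⊢
  rw [finsum_congr key, finsum_addsub3 (hfin 0 (nn r - 1)) (hfin (nn r) (nn r)) (hfin 0 0), hmid]
  ring1

/-! ### the reflection steps -/

lemma Good.NN_eq (hG : Good r A) : WW A (CN r) = WW A (CN' r) := by
  calc WW A (CN r)
      = WW A (fun PP => CN r (negE PP.1, negE PP.2)) := (WW_equiv negE hG.bq_neg _).symm
    _ = WW A (fun PP => (fun QQ : Pt × Pt => 1 ≤ QQ.1.1 ∧ QQ.1.1 ≤ nn r ∧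
          (QQ.1.1 ≤ QQ.2.1 ∧ QQ.2.2 < QQ.1.2)) (shE (nn r) PP.1, shE (nn r) PP.2)) := by
        refine WW_congr fun PP => ?_
        unfold CN
        simp only [negE_apply, shE_apply]
        omega
    _ = WW A (fun QQ : Pt × Pt => 1 ≤ QQ.1.1 ∧ QQ.1.1 ≤ nn r ∧
          (QQ.1.1 ≤ QQ.2.1 ∧ QQ.2.2 < QQ.1.2)) :=
        WW_equiv (shE (nn r)) hG.bq_shn
          (fun QQ : Pt × Pt => 1 ≤ QQ.1.1 ∧ QQ.1.1 ≤ nn r ∧ (QQ.1.1 ≤ QQ.2.1 ∧ QQ.2.2 < QQ.1.2))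
    _ = WW A (fun QQ : Pt × Pt => 0 ≤ QQ.1.1 ∧ QQ.1.1 ≤ nn r - 1 ∧
          (QQ.1.1 ≤ QQ.2.1 ∧ QQ.2.2 < QQ.1.2)) :=
        hG.win1 (R := fun QQ => QQ.1.1 ≤ QQ.2.1 ∧ QQ.2.2 < QQ.1.2)
          (fun PP => by dsimp only; omega)
          (fun a b => hG.finNN' a b)
    _ = WW A (CN' r) := by
        refine WW_congr fun PP => ?_
        unfold CN'
        tauto

lemma Good.MM_eq (hG : Good r A) : WW A (CM r) = WW A (CM' r) := by
  calc WW A (CM r)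
      = WW A (fun PP => CM r (negE PP.1, negE PP.2)) := (WW_equiv negE hG.bq_neg _).symm
    _ = WW A (fun PP => (fun QQ : Pt × Pt => 1 ≤ QQ.1.2 ∧ QQ.1.2 ≤ nn r ∧
          (QQ.1.2 ≤ QQ.2.2 ∧ QQ.2.1 < QQ.1.1)) (shE (nn r) PP.1, shE (nn r) PP.2)) := by
        refine WW_congr fun PP => ?_
        unfold CM
        simp only [negE_apply, shE_apply]
        omega
    _ = WW A (fun QQ : Pt × Pt => 1 ≤ QQ.1.2 ∧ QQ.1.2 ≤ nn r ∧
          (QQ.1.2 ≤ QQ.2.2 ∧ QQ.2.1 < QQ.1.1)) :=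
        WW_equiv (shE (nn r)) hG.bq_shn
          (fun QQ : Pt × Pt => 1 ≤ QQ.1.2 ∧ QQ.1.2 ≤ nn r ∧ (QQ.1.2 ≤ QQ.2.2 ∧ QQ.2.1 < QQ.1.1))
    _ = WW A (fun QQ : Pt × Pt => 0 ≤ QQ.1.2 ∧ QQ.1.2 ≤ nn r - 1 ∧
          (QQ.1.2 ≤ QQ.2.2 ∧ QQ.2.1 < QQ.1.1)) :=
        hG.win2 (R := fun QQ => QQ.1.2 ≤ QQ.2.2 ∧ QQ.2.1 < QQ.1.1)
          (fun PP => by dsimp only; omega)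
          (fun a b => hG.finMM' a b)
    _ = WW A (CM' r) := by
        refine WW_congr fun PP => ?_
        unfold CM'
        tauto


/-! ### supports for row/column indicator sums -/

lemma Good.fin_rowind (hG : Good r A) (p : ℤ) :
    (support fun P : Pt => bq A P * ind (P.1 = p)).Finite := by
  refine fin_point (hG.fin_strip1 p p) fun P hP => ?_
  obtain ⟨h1, h2⟩ := ind_mul_ne_zero hP
  exact ⟨bq_ne_zero.1 h1, le_of_eq h2.symm, le_of_eq h2⟩

lemma Good.fin_colind (hG : Good r A) (q : ℤ) :
    (support fun P : Pt => bq A P * ind (P.2 = q)).Finite := by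
  refine fin_point (hG.fin_strip2 q q) fun P hP => ?_
  obtain ⟨h1, h2⟩ := ind_mul_ne_zero hP
  exact ⟨bq_ne_zero.1 h1, le_of_eq h2.symm, le_of_eq h2⟩

lemma Good.fin_rowq (hG : Good r A) (i : ℤ) :
    (support fun q : ℤ => bq A (i, q)).Finite := by
  refine (hG.fin_row i).subset fun q hq => ?_
  rw [mem_support] at hq ⊢
  exact fun hc => hq (by simp [bq, hc])

lemma Good.fin_colq (hG : Good r A) (q : ℤ) :
    (support fun i : ℤ => bq A (i, q)).Finite := by
  refine (hG.fin_col q).subset fun i hi => ?_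
  rw [mem_support] at hi ⊢
  exact fun hc => hi (by simp [bq, hc])

/-! ### Step S3 : summing the master identity -/

lemma Good.S3 (hG : Good r A) :
    WW A (CN r) + WW A (CN' r) - WW A (CM r) - WW A (CM' r)
      = WW A (CG1 r) - WW A (CG2 r) + Dq A 0 - Dq A (nn r) := by
  unfold WW Dq
  have hfN : (support fun PP : Pt × Pt => bbq A PP * ind (CN r PP)).Finite := hG.finNN 0 (nn r - 1)
  have hfN' : (support fun PP : Pt × Pt => bbq A PP * ind (CN' r PP)).Finite :=
    hG.finNN' 0 (nn r - 1)
  have hfM : (support fun PP : Pt × Pt => bbq A PP * ind (CM r PP)).Finite := hG.finMM 0 (nn r - 1)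
  have hfM' : (support fun PP : Pt × Pt => bbq A PP * ind (CM' r PP)).Finite :=
    hG.finMM' 0 (nn r - 1)
  rw [← finsum_comb4a hfN hfN' hfM hfM',
    ← finsum_comb4b hG.finG1 hG.finG2 (hG.finDq 0) (hG.finDq (nn r))]
  refine finsum_congr fun PP => ?_
  obtain ⟨⟨p, q⟩, ⟨p', q'⟩⟩ := PP
  have h := master r p q p' q'
  unfold CN CN' CM CM' CG1 CG2 Gfac
  dsimp only
  linear_combination (bbq A ((p, q), (p', q'))) * h

/-! ### Step S4 : periodicity of `Dq` -/

lemma Good.Dq_per (hG : Good r A) : Dq A (nn r) = Dq A 0 := by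
  unfold Dq
  rw [← finsum_comp_equiv ((shE (nn r)).prodCongr (shE (nn r)))
    (f := fun PP : Pt × Pt => bbq A PP * ((ind (nn r ≤ PP.1.1) - ind (nn r ≤ PP.1.2)) * Gfac PP))]
  refine finsum_congr fun PP => ?_
  simp only [Equiv.prodCongr_apply, Prod.map]
  have hb : bbq A (shE (nn r) PP.1, shE (nn r) PP.2) = bbq A PP := by
    unfold bbq; rw [hG.bq_shn, hG.bq_shn]
  rw [hb]
  have h1 : ind (nn r ≤ (shE (nn r) PP.1).1) = ind (0 ≤ PP.1.1) :=
    ind_congr (by simp only [shE_apply]; omega)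
  have h2 : ind (nn r ≤ (shE (nn r) PP.1).2) = ind (0 ≤ PP.1.2) :=
    ind_congr (by simp only [shE_apply]; omega)
  have h3 : Gfac (shE (nn r) PP.1, shE (nn r) PP.2) = Gfac PP := by
    unfold Gfac
    dsimp only [shE_apply]
    rw [ind_congr (show (PP.1.2 + nn r ≤ PP.2.2 + nn r ∧ PP.2.1 + nn r < PP.1.1 + nn r)
        ↔ (PP.1.2 ≤ PP.2.2 ∧ PP.2.1 < PP.1.1) by omega),
      ind_congr (show (PP.2.2 + nn r ≤ PP.1.2 + nn r ∧ PP.1.1 + nn r < PP.2.1 + nn r)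
        ↔ (PP.2.2 ≤ PP.1.2 ∧ PP.1.1 < PP.2.1) by omega)]
  rw [h1, h2, h3]

/-! ### Step S5 : evaluation of `G1` -/

lemma Good.G1_eval (hG : Good r A) :
    WW A (CG1 r) = ∑ p ∈ Finset.Icc (0 : ℤ) (nn r - 1), ((ro A p : ℚ)) ^ 2 := by
  unfold WW
  rw [finsum_curry _ hG.finG1]
  have inner : ∀ P : Pt, (∑ᶠ P' : Pt, bbq A (P, P') * ind (CG1 r (P, P')))
      = (bq A P * (ro A P.1 : ℚ)) * ind (0 ≤ P.1 ∧ P.1 ≤ nn r - 1) := by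
    intro P
    by_cases hw : 0 ≤ P.1 ∧ P.1 ≤ nn r - 1
    · have hpt : ∀ P' : Pt, bbq A (P, P') * ind (CG1 r (P, P'))
          = bq A P * (bq A P' * ind (P'.1 = P.1)) := by
        intro P'
        unfold bbq CG1
        dsimp only
        rw [ind_congr (show (0 ≤ P.1 ∧ P.1 ≤ nn r - 1 ∧ P'.1 = P.1) ↔ (P'.1 = P.1) by tauto)]
        ring1
      rw [finsum_congr hpt, ← mul_finsum _ _, hG.row_sum P.1,
        ind_congr (iff_true_intro hw), ind_True, mul_one]
    · rw [ind_congr (iff_false_intro hw), ind_False, mul_zero]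
      refine finsum_eq_zero_of_forall_eq_zero fun P' => ?_
      have : ¬ CG1 r (P, P') := fun hc => hw ⟨hc.1, hc.2.1⟩
      rw [ind_congr (iff_false_intro this), ind_False, mul_zero]
  rw [finsum_congr inner]
  have hsupp : (support fun P : Pt =>
      (bq A P * (ro A P.1 : ℚ)) * ind (0 ≤ P.1 ∧ P.1 ≤ nn r - 1)).Finite := by
    refine fin_point (hG.fin_strip1 0 (nn r - 1)) fun P hP => ?_
    obtain ⟨h1, h2⟩ := ind_mul_ne_zero hP
    rw [mul_ne_zero_iff] at h1
    exact ⟨bq_ne_zero.1 h1.1, h2.1, h2.2⟩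
  rw [curry2 _ hsupp]
  have hin : ∀ i : ℤ, (∑ᶠ q : ℤ, (bq A (i, q) * (ro A i : ℚ)) * ind (0 ≤ i ∧ i ≤ nn r - 1))
      = ((ro A i : ℚ)) ^ 2 * ind (0 ≤ i ∧ i ≤ nn r - 1) := by
    intro i
    have h1 : ∀ q : ℤ, (bq A (i, q) * (ro A i : ℚ)) * ind (0 ≤ i ∧ i ≤ nn r - 1)
        = bq A (i, q) * ((ro A i : ℚ) * ind (0 ≤ i ∧ i ≤ nn r - 1)) := fun q => by ring
    rw [finsum_congr h1, ← finsum_mul _ _, ← hG.ro_cast]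
    ring1
  rw [finsum_congr hin]
  rw [finsum_eq_sum_of_support_subset _ (s := Finset.Icc (0 : ℤ) (nn r - 1)) ?hsub]
  case hsub =>
    intro i hi
    rw [mem_support] at hi
    have h2 : ind (0 ≤ i ∧ i ≤ nn r - 1) ≠ 0 := fun hc => hi (by rw [hc, mul_zero])
    have : 0 ≤ i ∧ i ≤ nn r - 1 := by
      by_contra hc
      exact h2 (by rw [ind_congr (iff_false_intro hc), ind_False])
    simpa [Finset.mem_Icc] using this
  refine Finset.sum_congr rfl fun i hi => ?_
  rw [Finset.mem_Icc] at hi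
  rw [ind_congr (iff_true_intro hi), ind_True, mul_one]

/-! ### Step S6 : evaluation of `G2` -/

lemma Good.G2_to_Y (hG : Good r A) :
    WW A (CG2 r) = ∑ᶠ P : Pt, (bq A P * (co A P.2 : ℚ)) * ind (0 ≤ P.1 ∧ P.1 ≤ nn r - 1) := by
  unfold WW
  rw [finsum_curry _ hG.finG2]
  refine finsum_congr fun P => ?_
  by_cases hw : 0 ≤ P.1 ∧ P.1 ≤ nn r - 1
  · have hpt : ∀ P' : Pt, bbq A (P, P') * ind (CG2 r (P, P'))
        = bq A P * (bq A P' * ind (P'.2 = P.2)) := by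
      intro P'
      unfold bbq CG2
      dsimp only
      rw [ind_congr (show (0 ≤ P.1 ∧ P.1 ≤ nn r - 1 ∧ P'.2 = P.2) ↔ (P'.2 = P.2) by tauto)]
      ring1
    rw [finsum_congr hpt, ← mul_finsum _ _, hG.col_sum P.2,
      ind_congr (iff_true_intro hw), ind_True, mul_one]
  · rw [ind_congr (iff_false_intro hw), ind_False, mul_zero]
    refine finsum_eq_zero_of_forall_eq_zero fun P' => ?_
    have : ¬ CG2 r (P, P') := fun hc => hw ⟨hc.1, hc.2.1⟩
    rw [ind_congr (iff_false_intro this), ind_False, mul_zero]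

def Eq' (A : ℤ → ℤ → ℕ) (c : ℤ) : ℚ :=
  ∑ᶠ P : Pt, (bq A P * (co A P.2 : ℚ)) * (ind (c ≤ P.1) - ind (c ≤ P.2))

lemma Good.finE (hG : Good r A) (c : ℤ) :
    (support fun P : Pt => (bq A P * (co A P.2 : ℚ)) * (ind (c ≤ P.1) - ind (c ≤ P.2))).Finite := by
  refine fin_point (S := {P : Pt | A P.1 P.2 ≠ 0 ∧ c ≤ P.1 ∧ P.2 ≤ c - 1}
      ∪ {P : Pt | A P.1 P.2 ≠ 0 ∧ c ≤ P.2 ∧ P.1 ≤ c - 1})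
    ((hG.fin_SE c (c - 1)).union (hG.fin_NW c (c - 1))) fun P hP => ?_
  rw [mul_ne_zero_iff] at hP
  obtain ⟨hb, hd⟩ := hP
  rw [mul_ne_zero_iff] at hb
  have h1 := bq_ne_zero.1 hb.1
  rcases ind_sub_ne hd with ⟨ha, hb'⟩ | ⟨ha, hb'⟩
  · exact Or.inl ⟨h1, ha, by omega⟩
  · exact Or.inr ⟨h1, ha, by omega⟩

lemma Good.E_per (hG : Good r A) : Eq' A (nn r) = Eq' A 0 := by
  unfold Eq'
  rw [← finsum_comp_equiv (shE (nn r))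
    (f := fun P : Pt => (bq A P * (co A P.2 : ℚ)) * (ind (nn r ≤ P.1) - ind (nn r ≤ P.2)))]
  refine finsum_congr fun P => ?_
  rw [hG.bq_shn]
  have hco : co A ((shE (nn r) P).2) = co A P.2 := by
    simp only [shE_apply]
    exact hG.co_per P.2
  rw [hco,
    ind_congr (show nn r ≤ (shE (nn r) P).1 ↔ 0 ≤ P.1 by simp only [shE_apply]; omega),
    ind_congr (show nn r ≤ (shE (nn r) P).2 ↔ 0 ≤ P.2 by simp only [shE_apply]; omega)]

lemma Good.finY1 (hG : Good r A) :
    (support fun P : Pt => (bq A P * (co A P.2 : ℚ)) * ind (0 ≤ P.1 ∧ P.1 ≤ nn r - 1)).Finite := by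
  refine fin_point (hG.fin_strip1 0 (nn r - 1)) fun P hP => ?_
  obtain ⟨h1, h2⟩ := ind_mul_ne_zero hP
  rw [mul_ne_zero_iff] at h1
  exact ⟨bq_ne_zero.1 h1.1, h2.1, h2.2⟩

lemma Good.finY2 (hG : Good r A) :
    (support fun P : Pt => (bq A P * (co A P.2 : ℚ)) * ind (0 ≤ P.2 ∧ P.2 ≤ nn r - 1)).Finite := by
  refine fin_point (hG.fin_strip2 0 (nn r - 1)) fun P hP => ?_
  obtain ⟨h1, h2⟩ := ind_mul_ne_zero hP
  rw [mul_ne_zero_iff] at h1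
  exact ⟨bq_ne_zero.1 h1.1, h2.1, h2.2⟩

lemma Good.Y_eq (hG : Good r A) :
    (∑ᶠ P : Pt, (bq A P * (co A P.2 : ℚ)) * ind (0 ≤ P.1 ∧ P.1 ≤ nn r - 1))
      = ∑ᶠ P : Pt, (bq A P * (co A P.2 : ℚ)) * ind (0 ≤ P.2 ∧ P.2 ≤ nn r - 1) := by
  have hdiff : (∑ᶠ P : Pt, (bq A P * (co A P.2 : ℚ)) * ind (0 ≤ P.1 ∧ P.1 ≤ nn r - 1))
      - (∑ᶠ P : Pt, (bq A P * (co A P.2 : ℚ)) * ind (0 ≤ P.2 ∧ P.2 ≤ nn r - 1))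
      = Eq' A 0 - Eq' A (nn r) := by
    unfold Eq'
    rw [← finsum_sub_distrib hG.finY1 hG.finY2, ← finsum_sub_distrib (hG.finE 0) (hG.finE (nn r))]
    refine finsum_congr fun P => ?_
    rw [ind_key r P.1, ind_key r P.2]
    ring1
  rw [hG.E_per] at hdiff
  linarith

lemma Good.Y_eval (hG : Good r A) :
    (∑ᶠ P : Pt, (bq A P * (co A P.2 : ℚ)) * ind (0 ≤ P.2 ∧ P.2 ≤ nn r - 1))
      = ∑ q ∈ Finset.Icc (0 : ℤ) (nn r - 1), ((co A q : ℚ)) ^ 2 := by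
  rw [← finsum_comp_equiv (Equiv.prodComm ℤ ℤ)
    (f := fun P : Pt => (bq A P * (co A P.2 : ℚ)) * ind (0 ≤ P.2 ∧ P.2 ≤ nn r - 1))]
  have hsupp : (support fun x : Pt =>
      (bq A (x.2, x.1) * (co A x.1 : ℚ)) * ind (0 ≤ x.1 ∧ x.1 ≤ nn r - 1)).Finite := by
    refine Set.Finite.subset (((hG.fin_strip2 0 (nn r - 1)).image Prod.swap)) fun x hx => ?_
    rw [mem_support] at hx
    have h2 : ind (0 ≤ x.1 ∧ x.1 ≤ nn r - 1) ≠ 0 := fun hc => hx (by rw [hc, mul_zero])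
    have hw : 0 ≤ x.1 ∧ x.1 ≤ nn r - 1 := by
      by_contra hc
      exact h2 (by rw [ind_congr (iff_false_intro hc), ind_False])
    have hb : bq A (x.2, x.1) ≠ 0 := by
      intro hc
      exact hx (by rw [hc, zero_mul, zero_mul])
    exact ⟨(x.2, x.1), ⟨bq_ne_zero.1 hb, hw.1, hw.2⟩, rfl⟩
  have hcomm : ∀ x : Pt, (fun P : Pt => (bq A P * (co A P.2 : ℚ)) * ind (0 ≤ P.2 ∧ P.2 ≤ nn r - 1))
      ((Equiv.prodComm ℤ ℤ) x)
      = (bq A (x.2, x.1) * (co A x.1 : ℚ)) * ind (0 ≤ x.1 ∧ x.1 ≤ nn r - 1) := fun x => rfl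
  rw [finsum_congr hcomm, curry2 _ hsupp]
  have hin : ∀ a : ℤ, (∑ᶠ b : ℤ, (bq A (b, a) * (co A a : ℚ)) * ind (0 ≤ a ∧ a ≤ nn r - 1))
      = ((co A a : ℚ)) ^ 2 * ind (0 ≤ a ∧ a ≤ nn r - 1) := by
    intro a
    have h1 : ∀ b : ℤ, (bq A (b, a) * (co A a : ℚ)) * ind (0 ≤ a ∧ a ≤ nn r - 1)
        = bq A (b, a) * ((co A a : ℚ) * ind (0 ≤ a ∧ a ≤ nn r - 1)) := fun b => by ring
    rw [finsum_congr h1, ← finsum_mul _ _, ← hG.co_cast]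
    ring1
  rw [finsum_congr hin]
  rw [finsum_eq_sum_of_support_subset _ (s := Finset.Icc (0 : ℤ) (nn r - 1)) ?hsub]
  case hsub =>
    intro a ha
    rw [mem_support] at ha
    have h2 : ind (0 ≤ a ∧ a ≤ nn r - 1) ≠ 0 := fun hc => ha (by rw [hc, mul_zero])
    have : 0 ≤ a ∧ a ≤ nn r - 1 := by
      by_contra hc
      exact h2 (by rw [ind_congr (iff_false_intro hc), ind_False])
    simpa [Finset.mem_Icc] using this
  refine Finset.sum_congr rfl fun a ha => ?_
  rw [Finset.mem_Icc] at ha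
  rw [ind_congr (iff_true_intro ha), ind_True, mul_one]

lemma Good.G2_eval (hG : Good r A) :
    WW A (CG2 r) = ∑ q ∈ Finset.Icc (0 : ℤ) (nn r - 1), ((co A q : ℚ)) ^ 2 := by
  rw [hG.G2_to_Y, hG.Y_eq, hG.Y_eval]

/-! ### the linear functional `K` -/

def Kq (A : ℤ → ℤ → ℕ) (c : ℤ) : ℚ :=
  ∑ᶠ P : Pt, bq A P * (ind (c ≤ P.1) - ind (c ≤ P.2))

lemma Good.finK (hG : Good r A) (c : ℤ) :
    (support fun P : Pt => bq A P * (ind (c ≤ P.1) - ind (c ≤ P.2))).Finite := by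
  refine fin_point (S := {P : Pt | A P.1 P.2 ≠ 0 ∧ c ≤ P.1 ∧ P.2 ≤ c - 1}
      ∪ {P : Pt | A P.1 P.2 ≠ 0 ∧ c ≤ P.2 ∧ P.1 ≤ c - 1})
    ((hG.fin_SE c (c - 1)).union (hG.fin_NW c (c - 1))) fun P hP => ?_
  rw [mul_ne_zero_iff] at hP
  obtain ⟨hb, hd⟩ := hP
  have h1 := bq_ne_zero.1 hb
  rcases ind_sub_ne hd with ⟨ha, hb'⟩ | ⟨ha, hb'⟩
  · exact Or.inl ⟨h1, ha, by omega⟩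
  · exact Or.inr ⟨h1, ha, by omega⟩

lemma ind_step (c x : ℤ) : ind (c ≤ x) - ind (c + 1 ≤ x) = ind (x = c) := by
  unfold ind
  split_ifs <;> first | ring1 | (exfalso; omega)

lemma Good.K_step (hG : Good r A) (c : ℤ) :
    Kq A c - Kq A (c + 1) = (ro A c : ℚ) - (co A c : ℚ) := by
  unfold Kq
  rw [← finsum_sub_distrib (hG.finK c) (hG.finK (c + 1))]
  rw [← hG.row_sum c, ← hG.col_sum c,
    ← finsum_sub_distrib (hG.fin_rowind c) (hG.fin_colind c)]
  refine finsum_congr fun P => ?_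
  have h1 := ind_step c P.1
  have h2 := ind_step c P.2
  linear_combination (bq A P) * h1 - (bq A P) * h2

lemma Good.K_neg (hG : Good r A) : Kq A 0 = - Kq A 1 := by
  unfold Kq
  rw [← finsum_comp_equiv negE (f := fun P : Pt => bq A P * (ind (0 ≤ P.1) - ind (0 ≤ P.2)))]
  rw [← finsum_neg_distrib]
  refine finsum_congr fun P => ?_
  rw [hG.bq_neg]
  have h1 : ind (0 ≤ (negE P).1) = ind (P.1 ≤ 0) := ind_congr (by simp only [negE_apply]; omega)
  have h2 : ind (0 ≤ (negE P).2) = ind (P.2 ≤ 0) := ind_congr (by simp only [negE_apply]; omega)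
  rw [h1, h2]
  have k1 : ∀ x : ℤ, ind (x ≤ 0) = 1 - ind (1 ≤ x) := by
    intro x
    unfold ind
    split_ifs <;> first | ring1 | (exfalso; omega)
  rw [k1 P.1, k1 P.2]
  ring1

lemma Good.K_zero (hG : Good r A) : Kq A 0 = ((ro A 0 : ℚ) - (co A 0 : ℚ)) / 2 := by
  have h1 := hG.K_step 0
  have h2 := hG.K_neg
  rw [show (0 : ℤ) + 1 = 1 by ring] at h1
  linarith

lemma Good.K_ref (hG : Good r A) : Kq A ((r : ℤ) + 1) = - Kq A ((r : ℤ) + 2) := by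
  unfold Kq
  rw [← finsum_comp_equiv (refE (nn r))
    (f := fun P : Pt => bq A P * (ind ((r : ℤ) + 1 ≤ P.1) - ind ((r : ℤ) + 1 ≤ P.2)))]
  rw [← finsum_neg_distrib]
  refine finsum_congr fun P => ?_
  rw [hG.bq_ref]
  have h1 : ind ((r : ℤ) + 1 ≤ (refE (nn r) P).1) = ind (P.1 ≤ (r : ℤ) + 1) :=
    ind_congr (by simp only [refE_apply]; unfold nn; omega)
  have h2 : ind ((r : ℤ) + 1 ≤ (refE (nn r) P).2) = ind (P.2 ≤ (r : ℤ) + 1) :=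
    ind_congr (by simp only [refE_apply]; unfold nn; omega)
  rw [h1, h2]
  have k1 : ∀ x : ℤ, ind (x ≤ (r : ℤ) + 1) = 1 - ind ((r : ℤ) + 2 ≤ x) := by
    intro x
    unfold ind
    split_ifs <;> first | ring1 | (exfalso; omega)
  rw [k1 P.1, k1 P.2]
  ring1

lemma Good.K_mid (hG : Good r A) :
    Kq A ((r : ℤ) + 1) = ((ro A ((r : ℤ) + 1) : ℚ) - (co A ((r : ℤ) + 1) : ℚ)) / 2 := by
  have h1 := hG.K_step ((r : ℤ) + 1)
  have h2 := hG.K_ref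
  rw [show (r : ℤ) + 1 + 1 = (r : ℤ) + 2 by ring] at h1
  linarith


/-! ### transpose -/

lemma Good.transpose (hG : Good r A) : Good r (fun i j => A j i) where
  sym i j := hG.sym j i
  per i j := hG.per j i
  fin := by
    refine Set.Finite.subset ((hG.fin_strip2 1 (nn r)).image Prod.swap) ?_
    rintro ⟨x, y⟩ ⟨h1, h2, h3⟩
    exact ⟨(y, x), ⟨h3, h1, h2⟩, rfl⟩

lemma bq_transpose (P : Pt) : bq (fun i j => A j i) P = bq A (P.2, P.1) := rfl

lemma Good.WW_transpose (hG : Good r A) :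
    WW (fun i j => A j i) (CN r) = WW A (CM r) := by
  unfold WW
  rw [← finsum_comp_equiv ((Equiv.prodComm ℤ ℤ).prodCongr (Equiv.prodComm ℤ ℤ))
    (f := fun PP : Pt × Pt => bbq A PP * ind (CM r PP))]
  refine finsum_congr fun PP => ?_
  simp only [Equiv.prodCongr_apply, Equiv.coe_prodComm, Prod.map]
  have hb : bbq A (Prod.swap PP.1, Prod.swap PP.2) = bbq (fun i j => A j i) PP := by
    unfold bbq
    rw [bq_transpose, bq_transpose]
    rfl
  rw [hb]
  have hc : CM r (Prod.swap PP.1, Prod.swap PP.2) ↔ CN r PP := by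
    unfold CM CN
    dsimp only [Prod.swap]
    tauto
  rw [ind_congr hc]

/-! ### conversions from the iterated sums in `dA` -/

lemma Good.quadA (hG : Good r A) :
    (∑ᶠ i : ℤ, ∑ᶠ j : ℤ, ∑ᶠ m : ℤ, ∑ᶠ l : ℤ,
        if 0 ≤ i ∧ i ≤ 2 * (r : ℤ) + 1 ∧ m ≤ i ∧ j < l then ((A i j * A m l : ℕ) : ℚ) else 0)
      = WW A (CN r) := by
  unfold WW
  have hfin : (support fun PP : Pt × Pt => bbq A PP * ind (CN r PP)).Finite :=
    hG.finNN 0 (nn r - 1)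
  rw [curry4 _ hfin]
  refine finsum_congr fun i => finsum_congr fun j => finsum_congr fun m =>
    finsum_congr fun l => ?_
  unfold CN bbq bq ind
  dsimp only
  split_ifs <;>
    first
      | (push_cast; ring1)
      | ring1
      | (exfalso; unfold nn at *; omega)

lemma Good.L_conv (hG : Good r A) (c : ℤ) :
    (∑ᶠ i : ℤ, ∑ᶠ j : ℤ, if c ≤ i ∧ j < c then ((A i j : ℕ) : ℚ) else 0)
      = ∑ᶠ P : Pt, bq A P * ind (c ≤ P.1 ∧ P.2 < c) := by
  have hsupp : (support fun P : Pt => bq A P * ind (c ≤ P.1 ∧ P.2 < c)).Finite := by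
    refine fin_point (hG.fin_SE c (c - 1)) fun P hP => ?_
    obtain ⟨h1, h2⟩ := ind_mul_ne_zero hP
    exact ⟨bq_ne_zero.1 h1, h2.1, by omega⟩
  rw [curry2 _ hsupp]
  refine finsum_congr fun i => finsum_congr fun j => ?_
  unfold bq ind
  dsimp only
  split_ifs
  · ring1
  · ring1

lemma Good.LT_swap (hG : Good r A) (c : ℤ) :
    (∑ᶠ P : Pt, bq (fun i j => A j i) P * ind (c ≤ P.1 ∧ P.2 < c))
      = ∑ᶠ P : Pt, bq A P * ind (c ≤ P.2 ∧ P.1 < c) := by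
  rw [← finsum_comp_equiv (Equiv.prodComm ℤ ℤ)
    (f := fun P : Pt => bq A P * ind (c ≤ P.2 ∧ P.1 < c))]
  refine finsum_congr fun P => ?_
  simp only [Equiv.coe_prodComm]
  rw [bq_transpose]
  have h1 : bq A (P.2, P.1) = bq A (Prod.swap P) := rfl
  rw [h1]
  refine congrArg _ (ind_congr ?_)
  dsimp only [Prod.swap]
  tauto

lemma Good.L_K (hG : Good r A) (c : ℤ) :
    (∑ᶠ P : Pt, bq A P * ind (c ≤ P.1 ∧ P.2 < c))
      - (∑ᶠ P : Pt, bq A P * ind (c ≤ P.2 ∧ P.1 < c)) = Kq A c := by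
  have hs1 : (support fun P : Pt => bq A P * ind (c ≤ P.1 ∧ P.2 < c)).Finite := by
    refine fin_point (hG.fin_SE c (c - 1)) fun P hP => ?_
    obtain ⟨h1, h2⟩ := ind_mul_ne_zero hP
    exact ⟨bq_ne_zero.1 h1, h2.1, by omega⟩
  have hs2 : (support fun P : Pt => bq A P * ind (c ≤ P.2 ∧ P.1 < c)).Finite := by
    refine fin_point (hG.fin_NW c (c - 1)) fun P hP => ?_
    obtain ⟨h1, h2⟩ := ind_mul_ne_zero hP
    exact ⟨bq_ne_zero.1 h1, h2.1, by omega⟩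
  rw [← finsum_sub_distrib hs1 hs2]
  unfold Kq
  refine finsum_congr fun P => ?_
  have key : ∀ x y : ℤ, ind (c ≤ x ∧ y < c) - ind (c ≤ y ∧ x < c)
      = ind (c ≤ x) - ind (c ≤ y) := by
    intro x y
    unfold ind
    split_ifs <;> first | ring1 | (exfalso; omega)
  linear_combination (bq A P) * key P.1 P.2

/-! ### endpoint shift for the quadratic sum -/

lemma sum_Icc_shift (r : ℕ) {f : ℤ → ℚ} (hf : f (nn r) = f 0) :
    ∑ i ∈ Finset.Icc (0 : ℤ) (nn r - 1), f i = ∑ i ∈ Finset.Icc (1 : ℤ) (nn r), f i := by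
  have hn := two_le_nn r
  have h1 : Finset.Icc (0 : ℤ) (nn r - 1) = insert 0 (Finset.Icc 1 (nn r - 1)) := by
    ext x
    simp only [Finset.mem_Icc, Finset.mem_insert]
    omega
  have h2 : Finset.Icc (1 : ℤ) (nn r) = insert (nn r) (Finset.Icc 1 (nn r - 1)) := by
    ext x
    simp only [Finset.mem_Icc, Finset.mem_insert]
    omega
  rw [h1, h2, Finset.sum_insert (by simp only [Finset.mem_Icc]; omega),
    Finset.sum_insert (by simp only [Finset.mem_Icc]; omega), hf]

/-! ### building `Good` from `MemXi` -/

lemma good_of_mem {d : ℕ} (hA : MemXi r d A) : Good r A := by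
  obtain ⟨hsym, hper, hodd1, hodd2, hsum⟩ := hA
  refine ⟨hsym, hper, ?_⟩
  have hgfin : (support fun j => ∑ i ∈ Finset.Icc (1 : ℤ) (2 * r + 2), A i j).Finite := by
    by_contra h
    rw [finsum_of_infinite_support h] at hsum
    omega
  refine Set.Finite.subset ((Set.finite_Icc (1 : ℤ) (nn r)).prod hgfin) ?_
  rintro ⟨x, y⟩ ⟨h1, h2, h3⟩
  refine ⟨⟨h1, h2⟩, ?_⟩
  rw [mem_support]
  intro hc
  rw [Finset.sum_eq_zero_iff] at hc
  exact h3 (hc x (by rw [Finset.mem_Icc]; exact ⟨h1, by unfold nn at h2; omega⟩))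

/-! ### the diagonal rectification equivalence -/

def chiE (r : ℕ) : Pt ≃ Pt where
  toFun P := (P.1 + nn r * (ee r P.1 - ee r P.2), P.2 + nn r * (ee r P.1 - ee r P.2))
  invFun P := (P.1 + nn r * (ee r P.2 - ee r P.1), P.2 + nn r * (ee r P.2 - ee r P.1))
  left_inv := by
    rintro ⟨x, y⟩
    simp only [ee_add, Prod.mk.injEq]
    constructor <;> ring
  right_inv := by
    rintro ⟨x, y⟩
    simp only [ee_add, Prod.mk.injEq]
    constructor <;> ring

lemma Good.strip_swap (hG : Good r A) :
    (∑ᶠ j : ℤ, ∑ i ∈ Finset.Icc (1 : ℤ) (2 * r + 2), A j i)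
      = ∑ᶠ j : ℤ, ∑ i ∈ Finset.Icc (1 : ℤ) (2 * r + 2), A i j := by
  classical
  set F : Pt → ℕ := fun P => if 1 ≤ P.2 ∧ P.2 ≤ nn r then A P.1 P.2 else 0 with hF
  set Grow : Pt → ℕ := fun P => if 1 ≤ P.1 ∧ P.1 ≤ nn r then A P.1 P.2 else 0 with hGrow
  have hIcc : Finset.Icc (1 : ℤ) (2 * r + 2) = Finset.Icc (1 : ℤ) (nn r) := by
    unfold nn; norm_num
  have hFsupp : (support F).Finite := by
    refine (hG.fin_strip2 1 (nn r)).subset fun P hP => ?_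
    rw [mem_support, hF] at hP
    by_cases hc : 1 ≤ P.2 ∧ P.2 ≤ nn r
    · exact ⟨by simpa [hc] using hP, hc.1, hc.2⟩
    · simp [hc] at hP
  have hGsupp : (support fun x : Pt => Grow (Prod.swap x)).Finite := by
    refine Set.Finite.subset ((hG.fin_strip1 1 (nn r)).image Prod.swap) fun x hx => ?_
    rw [mem_support, hGrow] at hx
    by_cases hc : 1 ≤ x.2 ∧ x.2 ≤ nn r
    · refine ⟨(x.2, x.1), ⟨?_, hc.1, hc.2⟩, rfl⟩
      simpa [hc] using hx
    · simp [hc] at hx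
  have step1 : (∑ᶠ j : ℤ, ∑ i ∈ Finset.Icc (1 : ℤ) (2 * r + 2), A j i) = ∑ᶠ P : Pt, F P := by
    rw [curry2 F hFsupp]
    refine finsum_congr fun x => ?_
    rw [finsum_eq_sum_of_support_subset _ (s := Finset.Icc (1 : ℤ) (2 * r + 2)) ?sub1]
    case sub1 =>
      intro y hy
      rw [mem_support, hF] at hy
      by_cases hc : 1 ≤ y ∧ y ≤ nn r
      · simp only [Finset.coe_Icc, Set.mem_Icc]
        unfold nn at hc
        omega
      · simp [hc] at hy
    refine Finset.sum_congr rfl fun y hy => ?_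
    rw [Finset.mem_Icc] at hy
    rw [hF]
    have hc : 1 ≤ y ∧ y ≤ nn r := by unfold nn; omega
    simp [hc]
  have step2 : (∑ᶠ P : Pt, F P) = ∑ᶠ P : Pt, Grow P := by
    rw [← finsum_comp_equiv (chiE r) (f := F)]
    refine finsum_congr fun P => ?_
    have happ : (chiE r) P = (P.1 + nn r * (ee r P.1 - ee r P.2),
        P.2 + nn r * (ee r P.1 - ee r P.2)) := rfl
    rw [happ, hF, hGrow]
    by_cases h : 1 ≤ P.1 ∧ P.1 ≤ nn r
    · have h0 : ee r P.1 = 0 := (ee_zero_iff r P.1).2 h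
      have hmem := ee_mem r P.2
      have hx : P.2 + nn r * (ee r P.1 - ee r P.2) = P.2 - nn r * ee r P.2 := by
        rw [h0]; ring
      have hcond : 1 ≤ P.2 + nn r * (ee r P.1 - ee r P.2)
          ∧ P.2 + nn r * (ee r P.1 - ee r P.2) ≤ nn r := by
        rw [hx]; exact hmem
      have hval : A (P.1 + nn r * (ee r P.1 - ee r P.2)) (P.2 + nn r * (ee r P.1 - ee r P.2))
          = A P.1 P.2 := hG.shiftk _ P.1 P.2
      simp [hcond, h, hval]
    · have hcond : ¬ (1 ≤ P.2 + nn r * (ee r P.1 - ee r P.2)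
          ∧ P.2 + nn r * (ee r P.1 - ee r P.2) ≤ nn r) := by
        intro hc
        have he : ee r (P.2 + nn r * (ee r P.1 - ee r P.2)) = 0 := (ee_zero_iff r _).2 hc
        rw [ee_add] at he
        have he1 : ee r P.1 = 0 := by omega
        exact h ((ee_zero_iff r P.1).1 he1)
      simp [hcond, h]
  have step3 : (∑ᶠ P : Pt, Grow P) = ∑ᶠ j : ℤ, ∑ i ∈ Finset.Icc (1 : ℤ) (2 * r + 2), A i j := by
    rw [← finsum_comp_equiv (Equiv.prodComm ℤ ℤ) (f := Grow)]
    have hco : (fun x : Pt => Grow ((Equiv.prodComm ℤ ℤ) x)) = fun x => Grow (Prod.swap x) := rfl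
    rw [hco, curry2 _ hGsupp]
    refine finsum_congr fun x => ?_
    rw [finsum_eq_sum_of_support_subset _ (s := Finset.Icc (1 : ℤ) (2 * r + 2)) ?sub3]
    case sub3 =>
      intro y hy
      rw [mem_support, hGrow] at hy
      by_cases hc : 1 ≤ y ∧ y ≤ nn r
      · simp only [Finset.coe_Icc, Set.mem_Icc]
        unfold nn at hc
        omega
      · simp only [Prod.swap_prod_mk] at hy
        simp [hc] at hy
    refine Finset.sum_congr rfl fun y hy => ?_
    rw [Finset.mem_Icc] at hy
    rw [hGrow]
    have hc : 1 ≤ y ∧ y ≤ nn r := by unfold nn; omega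
    simp [hc]
  rw [step1, step2, step3]

end S14

open S14

/-- For `A ∈ Ξ_{n,d}`, the transpose `Aᵗ` also lies in `Ξ_{n,d}` and
`d_A - d_{Aᵗ} = ¼ (Σ_{i=1}^n (ro(A)_i² - co(A)_i²) - (ro(A)_0 - co(A)_0)
  - (ro(A)_{r+1} - co(A)_{r+1}))`. -/
theorem statement14 (r d : ℕ) (hd : 1 ≤ d) (A : ℤ → ℤ → ℕ) (hA : MemXi r d A) :
    MemXi r d (fun i j => A j i) ∧
    dA r A - dA r (fun i j => A j i) =
      (1 / 4) *
        ((∑ i ∈ Finset.Icc (1 : ℤ) (2 * r + 2), ((ro A i : ℚ) ^ 2 - (co A i : ℚ) ^ 2))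
          - ((ro A 0 : ℚ) - (co A 0 : ℚ))
          - ((ro A ((r : ℤ) + 1) : ℚ) - (co A ((r : ℤ) + 1) : ℚ))) := by
  have hG : Good r A := good_of_mem hA
  obtain ⟨hsym, hper, hodd1, hodd2, hsum⟩ := hA
  have hGT : Good r (fun i j => A j i) := hG.transpose
  constructor
  · refine ⟨fun i j => hsym j i, fun i j => hper j i, hodd1, hodd2, ?_⟩
    show (∑ᶠ j : ℤ, ∑ i ∈ Finset.Icc (1 : ℤ) (2 * r + 2), A j i) = 2 * d + 2
    rw [hG.strip_swap]
    exact hsum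
  · have e1 : dA r A = (1 / 2) * (WW A (CN r)
        - (∑ᶠ P : Pt, bq A P * ind (0 ≤ P.1 ∧ P.2 < 0))
        - (∑ᶠ P : Pt, bq A P * ind ((r : ℤ) + 1 ≤ P.1 ∧ P.2 < (r : ℤ) + 1))) := by
      unfold dA
      rw [hG.quadA, hG.L_conv 0, hG.L_conv ((r : ℤ) + 1)]
    have e2 : dA r (fun i j => A j i) = (1 / 2) * (WW A (CM r)
        - (∑ᶠ P : Pt, bq A P * ind (0 ≤ P.2 ∧ P.1 < 0))
        - (∑ᶠ P : Pt, bq A P * ind ((r : ℤ) + 1 ≤ P.2 ∧ P.1 < (r : ℤ) + 1))) := by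
      unfold dA
      rw [hGT.quadA, hGT.L_conv 0, hGT.L_conv ((r : ℤ) + 1), hG.WW_transpose,
        hG.LT_swap 0, hG.LT_swap ((r : ℤ) + 1)]
    have hK0 := hG.L_K 0
    have hK1 := hG.L_K ((r : ℤ) + 1)
    have hKz := hG.K_zero
    have hKm := hG.K_mid
    have h3 := hG.S3
    have hNNeq := hG.NN_eq
    have hMMeq := hG.MM_eq
    have hDq := hG.Dq_per
    have hG1 := hG.G1_eval
    have hG2 := hG.G2_eval
    have hshift : (∑ i ∈ Finset.Icc (0 : ℤ) (nn r - 1), ((ro A i : ℚ) ^ 2 - (co A i : ℚ) ^ 2))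
        = ∑ i ∈ Finset.Icc (1 : ℤ) (nn r), ((ro A i : ℚ) ^ 2 - (co A i : ℚ) ^ 2) := by
      refine sum_Icc_shift r ?_
      have h1 : ro A (nn r) = ro A 0 := by simpa using hG.ro_per 0
      have h2 : co A (nn r) = co A 0 := by simpa using hG.co_per 0
      rw [h1, h2]
    have hsplit : (∑ i ∈ Finset.Icc (0 : ℤ) (nn r - 1), ((ro A i : ℚ) ^ 2 - (co A i : ℚ) ^ 2))
        = (∑ i ∈ Finset.Icc (0 : ℤ) (nn r - 1), ((ro A i : ℚ)) ^ 2)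
          - ∑ i ∈ Finset.Icc (0 : ℤ) (nn r - 1), ((co A i : ℚ)) ^ 2 :=
      Finset.sum_sub_distrib _ _
    have hIcc : Finset.Icc (1 : ℤ) (2 * (r : ℤ) + 2) = Finset.Icc (1 : ℤ) (nn r) := rfl
    rw [e1, e2, hIcc, ← hshift, hsplit]
    linarith
end
end

section
/- For A ∈ Ξ_{n,d} and 0 ≤ i ≤ r, define ε_i(A) = Σ_{(s,t): s ≤ i < t} a_{st} − Σ_{(s,t): s > i ≥ t} a_{st} (both sums have finitely many nonzero terms). Then ε_i(A) = (1/2)·Σ_{s=−i}^{i} ( ro(A)_s − co(A)_s ). -/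
open scoped Classical

noncomputable section

namespace AffMat

/-- `ε_i(A) = Σ_{s ≤ i < t} a_{st} - Σ_{s > i ≥ t} a_{st}`. -/
def epsI (A : ℤ → ℤ → ℕ) (i : ℤ) : ℤ :=
  (∑ᶠ s : ℤ, ∑ᶠ t : ℤ, if s ≤ i ∧ i < t then ((A s t : ℕ) : ℤ) else 0)
  - (∑ᶠ s : ℤ, ∑ᶠ t : ℤ, if i < s ∧ t ≤ i then ((A s t : ℕ) : ℤ) else 0)

end AffMat

open AffMat

private lemma ptwise (i s t x : ℤ) (hi : 0 ≤ i) :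
    ((if s ≤ i ∧ i < t then x else 0) - (if i < s ∧ t ≤ i then x else 0))
      + ((if -s ≤ i ∧ i < -t then x else 0) - (if i < -s ∧ -t ≤ i then x else 0))
    = (if -i ≤ s ∧ s ≤ i then x else 0) - (if -i ≤ t ∧ t ≤ i then x else 0) := by
  split_ifs <;> omega

/-- For `A ∈ Ξ_{n,d}` and `0 ≤ i ≤ r`,
`ε_i(A) = ½ Σ_{s=-i}^{i} (ro(A)_s - co(A)_s)`. -/
theorem statement15 (r d : ℕ) (hd : 1 ≤ d) (A : ℤ → ℤ → ℕ) (hA : MemXi r d A)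
    (i : ℕ) (hi : i ≤ r) :
    (epsI A (i : ℤ) : ℚ) =
      (1 / 2) * ∑ s ∈ Finset.Icc (-(i : ℤ)) (i : ℤ), ((ro A s : ℚ) - (co A s : ℚ)) := by
  classical
  obtain ⟨hsym, hper, -, -, hsum⟩ := hA
  have hnpos : (0:ℤ) < 2 * (r:ℤ) + 2 := by positivity
  have hg : (Function.support fun j : ℤ =>
      ∑ k ∈ Finset.Icc (1:ℤ) (2 * r + 2), A k j).Finite := by
    by_contra h
    rw [finsum_of_infinite_support h] at hsum
    omega
  set F : Finset ℤ := hg.toFinset with hF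
  set M : ℤ := ((F.sup fun j => (|j| + (2 * (r:ℤ) + 2)).toNat : ℕ) : ℤ) with hMdef
  have hM0 : 0 ≤ M := Int.natCast_nonneg _
  have hshift : ∀ (k : ℤ) (s t : ℤ), A (s - k * (2 * r + 2)) (t - k * (2 * r + 2)) = A s t := by
    intro k
    induction k using Int.induction_on with
    | zero => simp
    | succ k ih =>
      intro s t
      have e1 : s - ((k:ℤ) + 1) * (2 * r + 2) = (s - k * (2 * r + 2)) - (2 * r + 2) := by ring
      have e2 : t - ((k:ℤ) + 1) * (2 * r + 2) = (t - k * (2 * r + 2)) - (2 * r + 2) := by ring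
      rw [e1, e2, ← hper, ih]
    | pred k ih =>
      intro s t
      have h0 := hper (s - (-(k:ℤ) - 1) * (2 * r + 2)) (t - (-(k:ℤ) - 1) * (2 * r + 2))
      have e1 : s - (-(k:ℤ) - 1) * (2 * r + 2) - (2 * r + 2) = s - (-(k:ℤ)) * (2 * r + 2) := by
        ring
      have e2 : t - (-(k:ℤ) - 1) * (2 * r + 2) - (2 * r + 2) = t - (-(k:ℤ)) * (2 * r + 2) := by
        ring
      rw [e1, e2] at h0
      rw [h0, ih]
  have hband : ∀ s t : ℤ, A s t ≠ 0 → s - M ≤ t ∧ t ≤ s + M := by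
    intro s t hst
    set q : ℤ := (s - 1) / (2 * (r:ℤ) + 2) with hq
    have hmod1 : 0 ≤ (s - 1) % (2 * (r:ℤ) + 2) := Int.emod_nonneg _ (by omega)
    have hmod2 : (s - 1) % (2 * (r:ℤ) + 2) < 2 * (r:ℤ) + 2 := Int.emod_lt_of_pos _ hnpos
    have hdiv : (2 * (r:ℤ) + 2) * q + (s - 1) % (2 * (r:ℤ) + 2) = s - 1 :=
      Int.mul_ediv_add_emod _ _
    have hdiv' : q * (2 * (r:ℤ) + 2) + (s - 1) % (2 * (r:ℤ) + 2) = s - 1 := by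
      rw [mul_comm] at hdiv; exact hdiv
    have hs1 : 1 ≤ s - q * (2 * (r:ℤ) + 2) := by linarith
    have hs2 : s - q * (2 * (r:ℤ) + 2) ≤ 2 * (r:ℤ) + 2 := by linarith
    have hA' : A (s - q * (2 * r + 2)) (t - q * (2 * r + 2)) ≠ 0 := by
      rw [hshift]; exact hst
    have hgne : (∑ k ∈ Finset.Icc (1:ℤ) (2 * r + 2),
        A k (t - q * (2 * r + 2))) ≠ 0 := by
      intro h0
      exact hA' (Finset.sum_eq_zero_iff.mp h0 _ (Finset.mem_Icc.mpr ⟨hs1, hs2⟩))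
    have htF : t - q * (2 * (r:ℤ) + 2) ∈ F := by
      rw [hF, Set.Finite.mem_toFinset, Function.mem_support]
      exact hgne
    have hle : ((|t - q * (2 * (r:ℤ) + 2)| + (2 * (r:ℤ) + 2)).toNat : ℤ) ≤ M := by
      rw [hMdef]
      exact_mod_cast Finset.le_sup (f := fun j => (|j| + (2 * (r:ℤ) + 2)).toNat) htF
    have habs : 0 ≤ |t - q * (2 * (r:ℤ) + 2)| := abs_nonneg _
    rw [Int.toNat_of_nonneg (by linarith)] at hle
    have h1 := le_abs_self (t - q * (2 * (r:ℤ) + 2))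
    have h2 := neg_abs_le (t - q * (2 * (r:ℤ) + 2))
    constructor <;> linarith
  set B : Finset ℤ := Finset.Icc (-(i:ℤ) - M) ((i:ℤ) + M) with hB
  have hi0 : (0:ℤ) ≤ (i:ℤ) := Int.natCast_nonneg _
  have hro : ∀ s : ℤ, -(i:ℤ) ≤ s → s ≤ (i:ℤ) → ro A s = ∑ t ∈ B, A s t := by
    intro s h1 h2
    refine finsum_eq_finset_sum_of_support_subset _ ?_
    intro t ht
    rw [Function.mem_support] at ht
    have := hband s t ht
    simp only [hB, Finset.coe_Icc, Set.mem_Icc]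
    omega
  have hco : ∀ s : ℤ, -(i:ℤ) ≤ s → s ≤ (i:ℤ) → co A s = ∑ t ∈ B, A t s := by
    intro s h1 h2
    refine finsum_eq_finset_sum_of_support_subset _ ?_
    intro t ht
    rw [Function.mem_support] at ht
    have := hband t s ht
    simp only [hB, Finset.coe_Icc, Set.mem_Icc]
    omega
  have hconv1 : (∑ᶠ s : ℤ, ∑ᶠ t : ℤ, if s ≤ (i:ℤ) ∧ (i:ℤ) < t then ((A s t : ℕ) : ℤ) else 0)
      = ∑ s ∈ B, ∑ t ∈ B, (if s ≤ (i:ℤ) ∧ (i:ℤ) < t then ((A s t : ℕ) : ℤ) else 0) := by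
    have inner : ∀ s : ℤ,
        (∑ᶠ t : ℤ, if s ≤ (i:ℤ) ∧ (i:ℤ) < t then ((A s t : ℕ) : ℤ) else 0)
        = ∑ t ∈ B, (if s ≤ (i:ℤ) ∧ (i:ℤ) < t then ((A s t : ℕ) : ℤ) else 0) := by
      intro s
      refine finsum_eq_finset_sum_of_support_subset _ ?_
      intro t ht
      rw [Function.mem_support] at ht
      by_cases hc : s ≤ (i:ℤ) ∧ (i:ℤ) < t
      · have hne : A s t ≠ 0 := by
          intro h0; apply ht; rw [if_pos hc, h0]; simp
        have := hband s t hne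
        simp only [hB, Finset.coe_Icc, Set.mem_Icc]
        omega
      · exact absurd (if_neg hc) ht
    rw [finsum_congr inner]
    refine finsum_eq_finset_sum_of_support_subset _ ?_
    intro s hs
    rw [Function.mem_support] at hs
    obtain ⟨t, -, ht⟩ := Finset.exists_ne_zero_of_sum_ne_zero hs
    by_cases hc : s ≤ (i:ℤ) ∧ (i:ℤ) < t
    · have hne : A s t ≠ 0 := by
        intro h0; apply ht; rw [if_pos hc, h0]; simp
      have := hband s t hne
      simp only [hB, Finset.coe_Icc, Set.mem_Icc]
      omega
    · exact absurd (if_neg hc) ht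
  have hconv2 : (∑ᶠ s : ℤ, ∑ᶠ t : ℤ, if (i:ℤ) < s ∧ t ≤ (i:ℤ) then ((A s t : ℕ) : ℤ) else 0)
      = ∑ s ∈ B, ∑ t ∈ B, (if (i:ℤ) < s ∧ t ≤ (i:ℤ) then ((A s t : ℕ) : ℤ) else 0) := by
    have inner : ∀ s : ℤ,
        (∑ᶠ t : ℤ, if (i:ℤ) < s ∧ t ≤ (i:ℤ) then ((A s t : ℕ) : ℤ) else 0)
        = ∑ t ∈ B, (if (i:ℤ) < s ∧ t ≤ (i:ℤ) then ((A s t : ℕ) : ℤ) else 0) := by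
      intro s
      refine finsum_eq_finset_sum_of_support_subset _ ?_
      intro t ht
      rw [Function.mem_support] at ht
      by_cases hc : (i:ℤ) < s ∧ t ≤ (i:ℤ)
      · have hne : A s t ≠ 0 := by
          intro h0; apply ht; rw [if_pos hc, h0]; simp
        have := hband s t hne
        simp only [hB, Finset.coe_Icc, Set.mem_Icc]
        omega
      · exact absurd (if_neg hc) ht
    rw [finsum_congr inner]
    refine finsum_eq_finset_sum_of_support_subset _ ?_
    intro s hs
    rw [Function.mem_support] at hs
    obtain ⟨t, -, ht⟩ := Finset.exists_ne_zero_of_sum_ne_zero hs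
    by_cases hc : (i:ℤ) < s ∧ t ≤ (i:ℤ)
    · have hne : A s t ≠ 0 := by
        intro h0; apply ht; rw [if_pos hc, h0]; simp
      have := hband s t hne
      simp only [hB, Finset.coe_Icc, Set.mem_Icc]
      omega
    · exact absurd (if_neg hc) ht
  -- negation reindexing on B
  have hnegB : ∀ f : ℤ → ℤ, (∑ s ∈ B, f s) = ∑ s ∈ B, f (-s) := by
    intro f
    refine Finset.sum_nbij' (fun s => -s) (fun s => -s) ?_ ?_ ?_ ?_ ?_
    · intro a ha
      simp only [hB, Finset.mem_Icc] at ha ⊢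
      omega
    · intro a ha
      simp only [hB, Finset.mem_Icc] at ha ⊢
      omega
    · intro a ha
      simp
    · intro a ha
      simp
    · intro a ha
      simp
  have hpair : ∀ f : ℤ → ℤ → ℤ,
      (∑ s ∈ B, ∑ t ∈ B, f s t) = ∑ s ∈ B, ∑ t ∈ B, f (-s) (-t) := by
    intro f
    rw [hnegB (fun s => ∑ t ∈ B, f s t)]
    exact Finset.sum_congr rfl fun s _ => hnegB fun t => f (-s) t
  have hsymS1 : (∑ s ∈ B, ∑ t ∈ B, if s ≤ (i:ℤ) ∧ (i:ℤ) < t then ((A s t : ℕ) : ℤ) else 0)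
      = ∑ s ∈ B, ∑ t ∈ B, (if -s ≤ (i:ℤ) ∧ (i:ℤ) < -t then ((A s t : ℕ) : ℤ) else 0) := by
    rw [hpair (fun s t => if s ≤ (i:ℤ) ∧ (i:ℤ) < t then ((A s t : ℕ) : ℤ) else 0)]
    refine Finset.sum_congr rfl fun s _ => Finset.sum_congr rfl fun t _ => ?_
    rw [← hsym]
  have hsymS2 : (∑ s ∈ B, ∑ t ∈ B, if (i:ℤ) < s ∧ t ≤ (i:ℤ) then ((A s t : ℕ) : ℤ) else 0)
      = ∑ s ∈ B, ∑ t ∈ B, (if (i:ℤ) < -s ∧ -t ≤ (i:ℤ) then ((A s t : ℕ) : ℤ) else 0) := by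
    rw [hpair (fun s t => if (i:ℤ) < s ∧ t ≤ (i:ℤ) then ((A s t : ℕ) : ℤ) else 0)]
    refine Finset.sum_congr rfl fun s _ => Finset.sum_congr rfl fun t _ => ?_
    rw [← hsym]
  have hIB : Finset.Icc (-(i:ℤ)) (i:ℤ) ⊆ B := by
    intro x hx
    rw [Finset.mem_Icc] at hx
    rw [hB, Finset.mem_Icc]
    omega
  -- RHS rewriting
  have hRHS : (∑ s ∈ Finset.Icc (-(i:ℤ)) (i:ℤ), ((ro A s : ℤ) - (co A s : ℤ)))
      = (∑ s ∈ B, ∑ t ∈ B, (if -(i:ℤ) ≤ s ∧ s ≤ (i:ℤ) then ((A s t : ℕ) : ℤ) else 0))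
        - (∑ s ∈ B, ∑ t ∈ B, (if -(i:ℤ) ≤ t ∧ t ≤ (i:ℤ) then ((A s t : ℕ) : ℤ) else 0)) := by
    rw [Finset.sum_sub_distrib]
    congr 1
    · -- row part
      have e1 : (∑ s ∈ Finset.Icc (-(i:ℤ)) (i:ℤ), (ro A s : ℤ))
          = ∑ s ∈ Finset.Icc (-(i:ℤ)) (i:ℤ), ∑ t ∈ B, ((A s t : ℕ) : ℤ) := by
        refine Finset.sum_congr rfl fun s hs => ?_
        rw [Finset.mem_Icc] at hs
        rw [hro s hs.1 hs.2]
        push_cast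
        rfl
      rw [e1]
      have e2 : ∀ s ∈ B, (∑ t ∈ B, (if -(i:ℤ) ≤ s ∧ s ≤ (i:ℤ) then ((A s t : ℕ) : ℤ) else 0))
          = if -(i:ℤ) ≤ s ∧ s ≤ (i:ℤ) then (∑ t ∈ B, ((A s t : ℕ) : ℤ)) else 0 := by
        intro s _
        by_cases hc : -(i:ℤ) ≤ s ∧ s ≤ (i:ℤ) <;> simp [hc]
      rw [Finset.sum_congr rfl e2, ← Finset.sum_filter]
      apply Finset.sum_congr _ fun _ _ => rfl
      ext x
      simp only [Finset.mem_filter, Finset.mem_Icc, hB]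
      omega
    · -- column part
      have e1 : (∑ s ∈ Finset.Icc (-(i:ℤ)) (i:ℤ), (co A s : ℤ))
          = ∑ s ∈ Finset.Icc (-(i:ℤ)) (i:ℤ), ∑ t ∈ B, ((A t s : ℕ) : ℤ) := by
        refine Finset.sum_congr rfl fun s hs => ?_
        rw [Finset.mem_Icc] at hs
        rw [hco s hs.1 hs.2]
        push_cast
        rfl
      rw [e1]
      have e2 : ∀ s ∈ B, (∑ t ∈ B, (if -(i:ℤ) ≤ t ∧ t ≤ (i:ℤ) then ((A s t : ℕ) : ℤ) else 0))
          = ∑ t ∈ Finset.Icc (-(i:ℤ)) (i:ℤ), ((A s t : ℕ) : ℤ) := by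
        intro s _
        rw [← Finset.sum_filter]
        apply Finset.sum_congr _ fun _ _ => rfl
        ext x
        simp only [Finset.mem_filter, Finset.mem_Icc, hB]
        omega
      rw [Finset.sum_congr rfl e2, Finset.sum_comm]
  -- key integer identity
  have key : 2 * epsI A (i:ℤ)
      = ∑ s ∈ Finset.Icc (-(i:ℤ)) (i:ℤ), ((ro A s : ℤ) - (co A s : ℤ)) := by
    rw [hRHS]
    have combined :
        ((∑ s ∈ B, ∑ t ∈ B, (if s ≤ (i:ℤ) ∧ (i:ℤ) < t then ((A s t : ℕ) : ℤ) else 0))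
          - (∑ s ∈ B, ∑ t ∈ B, (if (i:ℤ) < s ∧ t ≤ (i:ℤ) then ((A s t : ℕ) : ℤ) else 0)))
        + ((∑ s ∈ B, ∑ t ∈ B, (if -s ≤ (i:ℤ) ∧ (i:ℤ) < -t then ((A s t : ℕ) : ℤ) else 0))
          - (∑ s ∈ B, ∑ t ∈ B, (if (i:ℤ) < -s ∧ -t ≤ (i:ℤ) then ((A s t : ℕ) : ℤ) else 0)))
        = (∑ s ∈ B, ∑ t ∈ B, (if -(i:ℤ) ≤ s ∧ s ≤ (i:ℤ) then ((A s t : ℕ) : ℤ) else 0))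
          - (∑ s ∈ B, ∑ t ∈ B, (if -(i:ℤ) ≤ t ∧ t ≤ (i:ℤ) then ((A s t : ℕ) : ℤ) else 0)) := by
      rw [← Finset.sum_sub_distrib, ← Finset.sum_sub_distrib, ← Finset.sum_add_distrib,
        ← Finset.sum_sub_distrib]
      refine Finset.sum_congr rfl fun s _ => ?_
      rw [← Finset.sum_sub_distrib, ← Finset.sum_sub_distrib, ← Finset.sum_add_distrib,
        ← Finset.sum_sub_distrib]
      exact Finset.sum_congr rfl fun t _ => ptwise (i:ℤ) s t _ hi0
    rw [epsI, hconv1, hconv2]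
    linarith [combined, hsymS1, hsymS2]
  have keyQ := congrArg (fun z : ℤ => (z : ℚ)) key
  push_cast at keyQ
  linarith

end
end

section
/- Let A = (a_{ij}) be such a matrix, and let h ∈ {1, …, r−1}, k ∈ ℤ, R ∈ ℕ. Let t : ℤ → ℕ be finitely supported with Σ_{u∈ℤ} t_u = R and t_u = 0 for all u > k. Set M = A + R·(E^θ_{h,k} − E^θ_{h+1,k}) and M′ = A + Σ_{u∈ℤ} t_u·(E^θ_{h,u} − E^θ_{h+1,u}) (ℤ-valued ℤ×ℤ matrices). Then M′ ≤_alg M, i.e., for all integers i < j one has Σ_{(a,b): a ≤ i, b ≥ j} M′_{ab} ≤ Σ_{(a,b): a ≤ i, b ≥ j} M_{ab} (all these sums have only finitely many nonzero terms). -/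
open scoped Classical

noncomputable section

namespace AffMat

/-- The `n`-periodic matrix `E^{ij}` (integer valued): its `(a,b)` entry is `1` if
`(a,b) = (i+pn, j+pn)` for some `p ∈ ℤ`, and `0` otherwise. -/
def Eper (n i j : ℤ) : ℤ → ℤ → ℤ := fun a b =>
  if ∃ p : ℤ, a = i + p * n ∧ b = j + p * n then 1 else 0

/-- `E^θ_{ij} = E^{ij} + E^{-i,-j}`. -/
def Ethe (n i j : ℤ) : ℤ → ℤ → ℤ := fun a b => Eper n i j a b + Eper n (-i) (-j) a b

end AffMat

open AffMat

open AffMat Function Set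

namespace S18

lemma qset_finite {n : ℤ} (hn : 1 ≤ n) (i j x y : ℤ) :
    {q : ℤ | x + q * n ≤ i ∧ j ≤ y + q * n}.Finite := by
  apply (Set.finite_Icc (min 0 (j - y)) (max 0 (i - x))).subset
  rintro q ⟨h1, h2⟩
  constructor
  · rcases le_or_gt q 0 with hq | hq
    · have := mul_le_mul_of_nonpos_left hn hq
      exact (min_le_right _ _).trans (by linarith)
    · exact (min_le_left _ _).trans hq.le
  · rcases le_or_gt q 0 with hq | hq
    · exact hq.trans (le_max_left _ _)
    · have := mul_le_mul_of_nonneg_left hn hq.le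
      exact le_trans (by linarith) (le_max_right _ _)

lemma eper_eq_one {n x y a b : ℤ} (q : ℤ) (ha : a = x + q * n) (hb : b = y + q * n) :
    Eper n x y a b = 1 := if_pos ⟨q, ha, hb⟩

lemma eper_ne_zero {n x y a b : ℤ} (h : Eper n x y a b ≠ 0) :
    ∃ q : ℤ, a = x + q * n ∧ b = y + q * n := by
  by_contra hc
  exact h (if_neg hc)

lemma coneE_finite {n : ℤ} (hn : 1 ≤ n) (i j x y : ℤ) :
    {p : ℤ × ℤ | p.1 ≤ i ∧ j ≤ p.2 ∧ Eper n x y p.1 p.2 ≠ 0}.Finite := by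
  apply ((qset_finite hn i j x y).image (fun q => (x + q * n, y + q * n))).subset
  rintro ⟨a, b⟩ ⟨h1, h2, h3⟩
  obtain ⟨q, rfl, rfl⟩ := eper_ne_zero h3
  exact ⟨q, ⟨h1, h2⟩, rfl⟩

lemma count_eq {n : ℤ} (hn : 1 ≤ n) (i j x y : ℤ) :
    (∑ᶠ p : ℤ × ℤ, if p.1 ≤ i ∧ j ≤ p.2 then Eper n x y p.1 p.2 else 0)
      = ∑ᶠ q : ℤ, if x + q * n ≤ i ∧ j ≤ y + q * n then (1 : ℤ) else 0 := by
  have hn0 : n ≠ 0 := by omega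
  set g : ℤ → ℤ × ℤ := fun q => (x + q * n, y + q * n) with hg
  have hginj : Injective g := by
    intro q1 q2 hq
    have : x + q1 * n = x + q2 * n := congrArg Prod.fst hq
    have h2 : q1 * n = q2 * n := by linarith
    exact mul_right_cancel₀ hn0 h2
  set f : ℤ × ℤ → ℤ := fun p => if p.1 ≤ i ∧ j ≤ p.2 then Eper n x y p.1 p.2 else 0 with hf
  have hsupp : support f ⊆ Set.range g := by
    intro p hp
    have h1 : Eper n x y p.1 p.2 ≠ 0 := by
      intro hz; apply hp; simp only [hf]; split_ifs <;> simp [hz]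
    obtain ⟨q, hq1, hq2⟩ := eper_ne_zero h1
    exact ⟨q, by simp [hg, ← hq1, ← hq2]⟩
  calc ∑ᶠ p, f p = ∑ᶠ p ∈ Set.range g, f p := by
        rw [finsum_mem_def, Set.indicator_eq_self.2 hsupp]
    _ = ∑ᶠ q, f (g q) := finsum_mem_range hginj
    _ = ∑ᶠ q : ℤ, if x + q * n ≤ i ∧ j ≤ y + q * n then (1 : ℤ) else 0 := by
        refine finsum_congr fun q => ?_
        simp only [hf, hg]
        split_ifs with hc
        · exact eper_eq_one q rfl rfl
        · rfl

lemma count_sub {n : ℤ} (hn : 1 ≤ n) (i j x y : ℤ) :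
    ((∑ᶠ q : ℤ, if x + q * n ≤ i ∧ j ≤ y + q * n then (1 : ℤ) else 0)
      - ∑ᶠ q : ℤ, if x + 1 + q * n ≤ i ∧ j ≤ y + q * n then (1 : ℤ) else 0)
      = if ∃ q : ℤ, i = x + q * n ∧ j ≤ y + q * n then 1 else 0 := by
  have hn0 : n ≠ 0 := by omega
  have hs1 : (support fun q : ℤ => if x + q * n ≤ i ∧ j ≤ y + q * n then (1 : ℤ) else 0).Finite := by
    apply (qset_finite hn i j x y).subset
    intro q hq
    by_contra hc
    exact hq (if_neg hc)
  have hs2 : (support fun q : ℤ => if x + 1 + q * n ≤ i ∧ j ≤ y + q * n then (1 : ℤ) else 0).Finite := by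
    apply (qset_finite hn i j (x + 1) y).subset
    intro q hq
    by_contra hc
    exact hq (if_neg hc)
  rw [← finsum_sub_distrib hs1 hs2]
  have hpt : ∀ q : ℤ, ((if x + q * n ≤ i ∧ j ≤ y + q * n then (1 : ℤ) else 0)
      - if x + 1 + q * n ≤ i ∧ j ≤ y + q * n then (1 : ℤ) else 0)
      = if i = x + q * n ∧ j ≤ y + q * n then 1 else 0 := by
    intro q
    split_ifs with h1 h2 h3 h2 h3 h3 <;> (try push_neg at *) <;> omega
  rw [finsum_congr hpt]
  by_cases hex : ∃ q : ℤ, i = x + q * n ∧ j ≤ y + q * n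
  · obtain ⟨q0, hq0⟩ := hex
    rw [finsum_eq_single _ q0, if_pos hq0, if_pos ⟨q0, hq0⟩]
    intro q hq
    rw [if_neg]
    rintro ⟨h1, h2⟩
    exact hq (mul_right_cancel₀ hn0 (by linarith [hq0.1]))
  · rw [if_neg hex, finsum_eq_zero_of_forall_eq_zero]
    intro q
    exact if_neg fun hc => hex ⟨q, hc⟩

lemma periodic_ext (n : ℤ) (A : ℤ → ℤ → ℕ) (hA : ∀ a b : ℤ, A a b = A (a - n) (b - n)) :
    ∀ (m a b : ℤ), A (a + m * n) (b + m * n) = A a b := by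
  have step : ∀ a b : ℤ, A (a + n) (b + n) = A a b := by
    intro a b
    have := hA (a + n) (b + n)
    simpa using this
  intro m
  induction m using Int.induction_on with
  | zero => simp
  | succ m ih =>
      intro a b
      have e : a + ((m : ℤ) + 1) * n = a + m * n + n := by ring
      have e' : b + ((m : ℤ) + 1) * n = b + m * n + n := by ring
      rw [e, e', step, ih]
  | pred m ih =>
      intro a b
      have e : a + (-(m : ℤ) - 1) * n + n = a + (-(m : ℤ)) * n := by ring
      have e' : b + (-(m : ℤ) - 1) * n + n = b + (-(m : ℤ)) * n := by ring
      have := step (a + (-(m : ℤ) - 1) * n) (b + (-(m : ℤ) - 1) * n)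
      rw [e, e'] at this
      rw [← this, ih]

lemma coneA_finite {n : ℤ} (hn : 1 ≤ n) (i j : ℤ) (A : ℤ → ℤ → ℕ)
    (hper : ∀ (m a b : ℤ), A (a + m * n) (b + m * n) = A a b)
    (hstrip : {p : ℤ × ℤ | 0 < p.1 ∧ p.1 ≤ n ∧ A p.1 p.2 ≠ 0}.Finite) :
    {p : ℤ × ℤ | p.1 ≤ i ∧ j ≤ p.2 ∧ A p.1 p.2 ≠ 0}.Finite := by
  apply Set.Finite.subset
    (hstrip.biUnion (fun s _ =>
      ((qset_finite hn i j s.1 s.2).image (fun m => (s.1 + m * n, s.2 + m * n)))))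
  rintro ⟨a, b⟩ ⟨h1, h2, h3⟩
  have hn0 : n ≠ 0 := by omega
  set m : ℤ := (a - 1) / n with hm
  have hmod1 : 0 ≤ (a - 1) % n := Int.emod_nonneg _ hn0
  have hmod2 : (a - 1) % n < n := Int.emod_lt_of_pos _ (by omega)
  have hdiv : n * ((a - 1) / n) + (a - 1) % n = a - 1 := Int.mul_ediv_add_emod _ _
  have hcomm : m * n = n * ((a - 1) / n) := by rw [hm, mul_comm]
  have key1 : 0 < a - m * n := by omega
  have key2 : a - m * n ≤ n := by omega
  have hmemS : (a - m * n, b - m * n) ∈ {p : ℤ × ℤ | 0 < p.1 ∧ p.1 ≤ n ∧ A p.1 p.2 ≠ 0} := by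
    refine ⟨key1, key2, ?_⟩
    have := hper m (a - m * n) (b - m * n)
    simp only [sub_add_cancel] at this
    simpa using this ▸ h3
  refine Set.mem_biUnion hmemS ?_
  refine ⟨m, ⟨?_, ?_⟩, ?_⟩
  · simp only [sub_add_cancel]; exact h1
  · simp only [sub_add_cancel]; exact h2
  · simp only [sub_add_cancel]

lemma fiber_finite {S : Set (ℤ × ℤ)} (hS : S.Finite) (a : ℤ) : {b : ℤ | (a, b) ∈ S}.Finite := by
  have : {b : ℤ | (a, b) ∈ S} = (fun b : ℤ => (a, b)) ⁻¹' S := rfl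
  rw [this]
  exact hS.preimage (fun b1 _ b2 _ h => congrArg Prod.snd h)

end S18

/-- Let `n = 2r+2` with `r ≥ 2`, let `A` be a centrosymmetric `n`-periodic
`ℕ`-matrix with finitely many nonzero entries in each strip, `1 ≤ h ≤ r-1`, `k ∈ ℤ`, `R ∈ ℕ`,
and let `t : ℤ → ℕ` be finitely supported with `Σ t_u = R` and `t_u = 0` for `u > k`.  With
`M = A + R (E^θ_{h,k} - E^θ_{h+1,k})` and `M′ = A + Σ_u t_u (E^θ_{h,u} - E^θ_{h+1,u})`,
we have `M′ ≤_alg M`. -/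


theorem statement18 (r : ℕ) (hr : 2 ≤ r) (A : ℤ → ℤ → ℕ)
    (hAsym : ∀ i j : ℤ, A i j = A (-i) (-j))
    (hAper : ∀ i j : ℤ, A i j = A (i - (2 * r + 2)) (j - (2 * r + 2)))
    (hAfin : ∀ i₀ : ℤ, {p : ℤ × ℤ | i₀ < p.1 ∧ p.1 ≤ i₀ + (2 * r + 2) ∧ A p.1 p.2 ≠ 0}.Finite)
    (h : ℤ) (hh1 : 1 ≤ h) (hhr : h ≤ (r : ℤ) - 1) (k : ℤ) (R : ℕ)
    (t : ℤ → ℕ) (htfin : (Function.support t).Finite)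
    (htsum : ∑ᶠ u : ℤ, t u = R) (htk : ∀ u : ℤ, k < u → t u = 0) :
    ∀ i j : ℤ, i < j →
      (∑ᶠ a : ℤ, ∑ᶠ b : ℤ, if a ≤ i ∧ j ≤ b then
          ((A a b : ℤ) + ∑ᶠ u : ℤ, (t u : ℤ) *
            (Ethe (2 * r + 2) h u a b - Ethe (2 * r + 2) (h + 1) u a b))
        else 0) ≤
      (∑ᶠ a : ℤ, ∑ᶠ b : ℤ, if a ≤ i ∧ j ≤ b then
          ((A a b : ℤ) + (R : ℤ) *
            (Ethe (2 * r + 2) h k a b - Ethe (2 * r + 2) (h + 1) k a b))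
        else 0) := by
  intro i j hij
  set n : ℤ := 2 * (r : ℤ) + 2 with hndef
  have hn : (1 : ℤ) ≤ n := by omega
  -- periodicity in both directions
  have hA' : ∀ (m a b : ℤ), A (a + m * n) (b + m * n) = A a b :=
    S18.periodic_ext n A (fun a b => hAper a b)
  have hconeA : {p : ℤ × ℤ | p.1 ≤ i ∧ j ≤ p.2 ∧ A p.1 p.2 ≠ 0}.Finite := by
    apply S18.coneA_finite hn i j A hA'
    have := hAfin 0
    simpa using this
  set XF : ℤ → ℤ → ℤ := fun a b => ∑ᶠ u : ℤ, (t u : ℤ) *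
      (Ethe n h u a b - Ethe n (h + 1) u a b) with hXF
  set YF : ℤ → ℤ → ℤ := fun a b => (R : ℤ) *
      (Ethe n h k a b - Ethe n (h + 1) k a b) with hYF
  have hconeX : {p : ℤ × ℤ | (p.1 ≤ i ∧ j ≤ p.2) ∧ XF p.1 p.2 ≠ 0}.Finite := by
    apply Set.Finite.subset (htfin.biUnion (fun u _ =>
      (((S18.coneE_finite hn i j h u).union (S18.coneE_finite hn i j (-h) (-u))).union
        ((S18.coneE_finite hn i j (h + 1) u).union
          (S18.coneE_finite hn i j (-(h + 1)) (-u))))))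
    rintro ⟨a, b⟩ ⟨⟨h1, h2⟩, h3⟩
    have hex : ∃ u : ℤ, t u ≠ 0 ∧ (Eper n h u a b ≠ 0 ∨ Eper n (-h) (-u) a b ≠ 0 ∨
        Eper n (h + 1) u a b ≠ 0 ∨ Eper n (-(h + 1)) (-u) a b ≠ 0) := by
      by_contra hc
      push_neg at hc
      apply h3
      simp only [hXF]
      apply finsum_eq_zero_of_forall_eq_zero
      intro u
      by_cases hu : t u = 0
      · simp [hu]
      · obtain ⟨e1, e2, e3, e4⟩ := hc u hu
        simp only [Ethe, e1, e2, e3, e4]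
        ring
    obtain ⟨u, hu, hne⟩ := hex
    refine Set.mem_biUnion hu ?_
    simp only [Set.mem_union]
    rcases hne with hca | hca | hca | hca
    · exact Or.inl (Or.inl ⟨h1, h2, hca⟩)
    · exact Or.inl (Or.inr ⟨h1, h2, hca⟩)
    · exact Or.inr (Or.inl ⟨h1, h2, hca⟩)
    · exact Or.inr (Or.inr ⟨h1, h2, hca⟩)
  have hconeY : {p : ℤ × ℤ | (p.1 ≤ i ∧ j ≤ p.2) ∧ YF p.1 p.2 ≠ 0}.Finite := by
    apply Set.Finite.subset
      ((((S18.coneE_finite hn i j h k).union (S18.coneE_finite hn i j (-h) (-k))).union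
        ((S18.coneE_finite hn i j (h + 1) k).union
          (S18.coneE_finite hn i j (-(h + 1)) (-k)))))
    rintro ⟨a, b⟩ ⟨⟨h1, h2⟩, h3⟩
    simp only [Set.mem_union]
    by_cases c1 : Eper n h k a b = 0
    · by_cases c2 : Eper n (-h) (-k) a b = 0
      · by_cases c3 : Eper n (h + 1) k a b = 0
        · by_cases c4 : Eper n (-(h + 1)) (-k) a b = 0
          · exfalso
            apply h3
            simp only [hYF, Ethe, c1, c2, c3, c4]
            ring
          · exact Or.inr (Or.inr ⟨h1, h2, c4⟩)
        · exact Or.inr (Or.inl ⟨h1, h2, c3⟩)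
      · exact Or.inl (Or.inr ⟨h1, h2, c2⟩)
    · exact Or.inl (Or.inl ⟨h1, h2, c1⟩)
  -- Reduction: pull out the A-part
  have key : ∀ Z : ℤ → ℤ → ℤ,
      {p : ℤ × ℤ | (p.1 ≤ i ∧ j ≤ p.2) ∧ Z p.1 p.2 ≠ 0}.Finite →
      (∑ᶠ a : ℤ, ∑ᶠ b : ℤ, if a ≤ i ∧ j ≤ b then ((A a b : ℤ) + Z a b) else 0)
        = (∑ᶠ a : ℤ, ∑ᶠ b : ℤ, if a ≤ i ∧ j ≤ b then (A a b : ℤ) else 0)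
          + ∑ᶠ p : ℤ × ℤ, (if p.1 ≤ i ∧ j ≤ p.2 then Z p.1 p.2 else 0) := by
    intro Z hZ
    have hrowA : ∀ a : ℤ,
        (support fun b => if a ≤ i ∧ j ≤ b then (A a b : ℤ) else 0).Finite := by
      intro a
      apply (S18.fiber_finite (hAfin (a - 1)) a).subset
      intro b hb
      have hA0 : A a b ≠ 0 := by
        intro h0
        apply hb
        simp [h0]
      exact ⟨by omega, by omega, hA0⟩
    have hrowZ : ∀ a : ℤ,
        (support fun b => if a ≤ i ∧ j ≤ b then Z a b else 0).Finite := by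
      intro a
      apply (S18.fiber_finite hZ a).subset
      intro b hb
      by_cases hc : a ≤ i ∧ j ≤ b
      · refine ⟨hc, ?_⟩
        rw [mem_support, if_pos hc] at hb
        exact hb
      · exact absurd (if_neg hc) hb
    have step1 : ∀ a : ℤ,
        (∑ᶠ b : ℤ, if a ≤ i ∧ j ≤ b then ((A a b : ℤ) + Z a b) else 0)
          = (∑ᶠ b : ℤ, if a ≤ i ∧ j ≤ b then (A a b : ℤ) else 0)
            + (∑ᶠ b : ℤ, if a ≤ i ∧ j ≤ b then Z a b else 0) := by
      intro a
      rw [← finsum_add_distrib (hrowA a) (hrowZ a)]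
      refine finsum_congr fun b => ?_
      split_ifs <;> simp
    rw [finsum_congr step1]
    have hPA : (support fun a : ℤ =>
        ∑ᶠ b : ℤ, if a ≤ i ∧ j ≤ b then (A a b : ℤ) else 0).Finite := by
      apply (hconeA.image Prod.fst).subset
      intro a ha
      have hex : ∃ b : ℤ, (if a ≤ i ∧ j ≤ b then (A a b : ℤ) else 0) ≠ 0 := by
        by_contra hc
        push_neg at hc
        exact ha (finsum_eq_zero_of_forall_eq_zero hc)
      obtain ⟨b, hb⟩ := hex
      by_cases hcond : a ≤ i ∧ j ≤ b
      · rw [if_pos hcond] at hb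
        exact ⟨(a, b), ⟨hcond.1, hcond.2, by exact_mod_cast hb⟩, rfl⟩
      · exact absurd (if_neg hcond) hb
    have hPZ : (support fun a : ℤ =>
        ∑ᶠ b : ℤ, if a ≤ i ∧ j ≤ b then Z a b else 0).Finite := by
      apply (hZ.image Prod.fst).subset
      intro a ha
      have hex : ∃ b : ℤ, (if a ≤ i ∧ j ≤ b then Z a b else 0) ≠ 0 := by
        by_contra hc
        push_neg at hc
        exact ha (finsum_eq_zero_of_forall_eq_zero hc)
      obtain ⟨b, hb⟩ := hex
      by_cases hcond : a ≤ i ∧ j ≤ b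
      · rw [if_pos hcond] at hb
        exact ⟨(a, b), ⟨⟨hcond.1, hcond.2⟩, hb⟩, rfl⟩
      · exact absurd (if_neg hcond) hb
    rw [finsum_add_distrib hPA hPZ]
    congr 1
    have hsupp : (support fun p : ℤ × ℤ =>
        if p.1 ≤ i ∧ j ≤ p.2 then Z p.1 p.2 else 0).Finite := by
      apply hZ.subset
      intro p hp
      by_cases hc : p.1 ≤ i ∧ j ≤ p.2
      · refine ⟨hc, ?_⟩
        rw [mem_support, if_pos hc] at hp
        exact hp
      · exact absurd (if_neg hc) hp
    exact (finsum_curry _ hsupp).symm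
  rw [key XF hconeX, key YF hconeY]
  apply add_le_add (le_refl _)
  -- support of the Ethe-difference indicator
  have hsuppE : ∀ x y : ℤ, (support fun p : ℤ × ℤ =>
      if p.1 ≤ i ∧ j ≤ p.2 then Eper n x y p.1 p.2 else 0).Finite := by
    intro x y
    apply (S18.coneE_finite hn i j x y).subset
    intro p hp
    by_cases hc : p.1 ≤ i ∧ j ≤ p.2
    · refine ⟨hc.1, hc.2, ?_⟩
      rw [mem_support, if_pos hc] at hp
      exact hp
    · exact absurd (if_neg hc) hp
  have hsub : ∀ (f g : ℤ × ℤ → ℤ), (support f).Finite → (support g).Finite →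
      (support fun p => f p - g p).Finite := by
    intro f g hf hg
    apply (hf.union hg).subset
    intro p hp
    rw [Set.mem_union, mem_support, mem_support]
    by_contra hc
    push_neg at hc
    exact hp (by simp [mem_support, hc.1, hc.2])
  have hsuppEthe : ∀ u : ℤ, (support fun p : ℤ × ℤ =>
      if p.1 ≤ i ∧ j ≤ p.2 then
        (Ethe n h u p.1 p.2 - Ethe n (h + 1) u p.1 p.2) else 0).Finite := by
    intro u
    apply Set.Finite.subset
      (((S18.coneE_finite hn i j h u).union (S18.coneE_finite hn i j (-h) (-u))).union
        ((S18.coneE_finite hn i j (h + 1) u).union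
          (S18.coneE_finite hn i j (-(h + 1)) (-u))))
    intro p hp
    simp only [Set.mem_union]
    by_cases hc : p.1 ≤ i ∧ j ≤ p.2
    · by_cases c1 : Eper n h u p.1 p.2 = 0
      · by_cases c2 : Eper n (-h) (-u) p.1 p.2 = 0
        · by_cases c3 : Eper n (h + 1) u p.1 p.2 = 0
          · by_cases c4 : Eper n (-(h + 1)) (-u) p.1 p.2 = 0
            · exfalso
              apply hp
              simp only [if_pos hc, Ethe, c1, c2, c3, c4]
              ring
            · exact Or.inr (Or.inr ⟨hc.1, hc.2, c4⟩)
          · exact Or.inr (Or.inl ⟨hc.1, hc.2, c3⟩)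
        · exact Or.inl (Or.inr ⟨hc.1, hc.2, c2⟩)
      · exact Or.inl (Or.inl ⟨hc.1, hc.2, c1⟩)
    · exact absurd (if_neg hc) hp
  -- Value of the Ethe-difference cone sum
  have hEsum : ∀ u : ℤ, (∑ᶠ p : ℤ × ℤ, if p.1 ≤ i ∧ j ≤ p.2 then
      (Ethe n h u p.1 p.2 - Ethe n (h + 1) u p.1 p.2) else 0)
      = (if ∃ q : ℤ, i = h + q * n ∧ j ≤ u + q * n then (1 : ℤ) else 0)
        - (if ∃ q : ℤ, i = -(h + 1) + q * n ∧ j ≤ -u + q * n then (1 : ℤ) else 0) := by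
    intro u
    have hpt : ∀ p : ℤ × ℤ, (if p.1 ≤ i ∧ j ≤ p.2 then
        (Ethe n h u p.1 p.2 - Ethe n (h + 1) u p.1 p.2) else 0)
        = ((if p.1 ≤ i ∧ j ≤ p.2 then Eper n h u p.1 p.2 else 0)
            - (if p.1 ≤ i ∧ j ≤ p.2 then Eper n (h + 1) u p.1 p.2 else 0))
          + ((if p.1 ≤ i ∧ j ≤ p.2 then Eper n (-h) (-u) p.1 p.2 else 0)
            - (if p.1 ≤ i ∧ j ≤ p.2 then Eper n (-(h + 1)) (-u) p.1 p.2 else 0)) := by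
      intro p
      by_cases hc : p.1 ≤ i ∧ j ≤ p.2
      · simp only [if_pos hc, Ethe]
        ring
      · simp only [if_neg hc]
        ring
    rw [finsum_congr hpt]
    rw [finsum_add_distrib (hsub _ _ (hsuppE h u) (hsuppE (h + 1) u))
        (hsub _ _ (hsuppE (-h) (-u)) (hsuppE (-(h + 1)) (-u)))]
    rw [finsum_sub_distrib (hsuppE h u) (hsuppE (h + 1) u),
        finsum_sub_distrib (hsuppE (-h) (-u)) (hsuppE (-(h + 1)) (-u))]
    rw [S18.count_eq hn i j h u, S18.count_eq hn i j (h + 1) u,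
        S18.count_eq hn i j (-h) (-u), S18.count_eq hn i j (-(h + 1)) (-u)]
    have d1 := S18.count_sub hn i j h u
    have d2 := S18.count_sub hn i j (-(h + 1)) (-u)
    have he : -(h + 1) + 1 = -h := by ring
    rw [he] at d2
    linarith [d1, d2]
  -- RHS value
  have hYeq : (∑ᶠ p : ℤ × ℤ, if p.1 ≤ i ∧ j ≤ p.2 then YF p.1 p.2 else 0)
      = (R : ℤ) * ((if ∃ q : ℤ, i = h + q * n ∧ j ≤ k + q * n then (1 : ℤ) else 0)
          - (if ∃ q : ℤ, i = -(h + 1) + q * n ∧ j ≤ -k + q * n then (1 : ℤ) else 0)) := by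
    rw [← hEsum k, mul_finsum _ _]
    refine finsum_congr fun p => ?_
    simp only [hYF]
    split_ifs with hc
    · rfl
    · rw [mul_zero]
  rw [hYeq]
  -- LHS: unfold the u-sum
  set Fu : Finset ℤ := htfin.toFinset with hFu
  set gfun : ℤ → ℤ × ℤ → ℤ := fun u p => if p.1 ≤ i ∧ j ≤ p.2 then
      (t u : ℤ) * (Ethe n h u p.1 p.2 - Ethe n (h + 1) u p.1 p.2) else 0 with hgfun
  have hXpt : ∀ p : ℤ × ℤ, (if p.1 ≤ i ∧ j ≤ p.2 then XF p.1 p.2 else 0)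
      = ∑ u ∈ Fu, gfun u p := by
    intro p
    by_cases hc : p.1 ≤ i ∧ j ≤ p.2
    · rw [if_pos hc]
      simp only [hXF]
      rw [finsum_eq_finset_sum_of_support_subset]
      · refine Finset.sum_congr rfl fun u _ => ?_
        simp only [hgfun]
        rw [if_pos hc]
      · intro u hu
        have htu : t u ≠ 0 := by
          intro h0
          apply hu
          simp [h0]
        simpa [hFu] using htu
    · rw [if_neg hc]
      rw [Finset.sum_congr rfl fun u _ => show gfun u p = 0 by
        simp only [hgfun]; exact if_neg hc]
      simp
  have hgsupp : ∀ u : ℤ, (support (gfun u)).Finite := by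
    intro u
    apply (hsuppEthe u).subset
    intro p hp
    rw [mem_support]
    intro h0
    apply hp
    simp only [hgfun]
    by_cases hc : p.1 ≤ i ∧ j ≤ p.2
    · rw [if_pos hc]
      rw [if_pos hc] at h0
      rw [h0, mul_zero]
    · exact if_neg hc
  set G : Finset (ℤ × ℤ) := Fu.biUnion (fun u => (hgsupp u).toFinset) with hG
  have hGsub : ∀ u ∈ Fu, support (gfun u) ⊆ ↑G := by
    intro u hu p hp
    simp only [hG, Finset.coe_biUnion, Set.mem_iUnion]
    exact ⟨u, hu, (hgsupp u).mem_toFinset.2 hp⟩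
  have hswap : (∑ᶠ p : ℤ × ℤ, ∑ u ∈ Fu, gfun u p)
      = ∑ u ∈ Fu, ∑ᶠ p : ℤ × ℤ, gfun u p := by
    rw [finsum_eq_finset_sum_of_support_subset _ (s := G) ?_]
    · rw [Finset.sum_comm]
      exact Finset.sum_congr rfl fun u hu =>
        (finsum_eq_finset_sum_of_support_subset _ (hGsub u hu)).symm
    · intro p hp
      have hex : ∃ u ∈ Fu, gfun u p ≠ 0 := by
        by_contra hcon
        push_neg at hcon
        exact hp (Finset.sum_eq_zero hcon)
      obtain ⟨u, hu, hne⟩ := hex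
      exact hGsub u hu hne
  have hgval : ∀ u : ℤ, (∑ᶠ p : ℤ × ℤ, gfun u p)
      = (t u : ℤ) * ((if ∃ q : ℤ, i = h + q * n ∧ j ≤ u + q * n then (1 : ℤ) else 0)
          - (if ∃ q : ℤ, i = -(h + 1) + q * n ∧ j ≤ -u + q * n then (1 : ℤ) else 0)) := by
    intro u
    rw [← hEsum u, mul_finsum _ _]
    refine finsum_congr fun p => ?_
    simp only [hgfun]
    split_ifs with hc
    · rfl
    · rw [mul_zero]
  rw [finsum_congr hXpt, hswap]
  have hR : ((R : ℤ)) = ∑ u ∈ Fu, (t u : ℤ) := by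
    have h1 : ∑ᶠ u : ℤ, t u = ∑ u ∈ Fu, t u := by
      apply finsum_eq_finset_sum_of_support_subset
      intro u hu
      simpa [hFu] using hu
    rw [← htsum, h1]
    push_cast
    rfl
  rw [hR, Finset.sum_mul]
  apply Finset.sum_le_sum
  intro u hu
  rw [hgval u]
  have huk : u ≤ k := by
    by_contra hcon
    push_neg at hcon
    have := htk u hcon
    have : t u ≠ 0 := by simpa [hFu] using hu
    omega
  have m1 : (if ∃ q : ℤ, i = h + q * n ∧ j ≤ u + q * n then (1 : ℤ) else 0)
      ≤ (if ∃ q : ℤ, i = h + q * n ∧ j ≤ k + q * n then (1 : ℤ) else 0) := by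
    split_ifs with h1 h2 h2
    · exact le_refl _
    · exfalso
      obtain ⟨q, hq1, hq2⟩ := h1
      exact h2 ⟨q, hq1, by linarith⟩
    · norm_num
    · exact le_refl _
  have m2 : (if ∃ q : ℤ, i = -(h + 1) + q * n ∧ j ≤ -k + q * n then (1 : ℤ) else 0)
      ≤ (if ∃ q : ℤ, i = -(h + 1) + q * n ∧ j ≤ -u + q * n then (1 : ℤ) else 0) := by
    split_ifs with h1 h2 h2
    · exact le_refl _
    · exfalso
      obtain ⟨q, hq1, hq2⟩ := h1
      exact h2 ⟨q, hq1, by linarith⟩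
    · norm_num
    · exact le_refl _
  have ht0 : (0 : ℤ) ≤ (t u : ℤ) := Int.natCast_nonneg _
  apply mul_le_mul_of_nonneg_left _ ht0
  linarith [m1, m2]
end
end
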